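/- arXiv:1906.06202 — 9 statements merged into one kernel-verified Lean document; each statement's English description precedes it below -/
import Mathlib

section
/- Let A ⊆ B be a C*-inclusion and J a closed two-sided ideal of B. The composite map A → B → B/J into the quotient C*-algebra is injective if and only if J ∩ A = {0}. If J ∩ A = {0}, then the image of A detects ideals in B/J if and only if J is a maximal element (with respect to inclusion) of the set 𝕀₀(B) of all closed two-sided ideals J' of B with J' ∩ A = {0}. -/
/-- A closed (ring-theoretic) two-sided ideal of `B`. -/
def IsClosedTwoSidedIdeal {B : Type*} [NonUnitalCStarAlgebra B] (S : Set B) : Prop :=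
  IsClosed S ∧ (0 : B) ∈ S ∧ (∀ x ∈ S, ∀ y ∈ S, x + y ∈ S) ∧ (∀ x ∈ S, -x ∈ S) ∧
    (∀ b : B, ∀ x ∈ S, b * x ∈ S) ∧ ∀ b : B, ∀ x ∈ S, x * b ∈ S

/-- A closed *-subalgebra of `B`. -/
def IsCStarSubalgebra {B : Type*} [NonUnitalCStarAlgebra B] (A : Set B) : Prop :=
  IsClosed A ∧ (0 : B) ∈ A ∧ (∀ x ∈ A, ∀ y ∈ A, x + y ∈ A) ∧
    (∀ (c : ℂ), ∀ x ∈ A, c • x ∈ A) ∧ (∀ x ∈ A, ∀ y ∈ A, x * y ∈ A) ∧ ∀ x ∈ A, star x ∈ A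

/-- Let `A ⊆ B` be a C*-inclusion and `J` a closed two-sided ideal of `B`.
The composite `A → B → B/J` is injective iff `J ∩ A = {0}`.  If `J ∩ A = {0}`, then the
image of `A` detects ideals in `B/J` (equivalently, via the bijection between ideals of
`B/J` and ideals of `B` containing `J`: every closed two-sided ideal `K ⊋ J` of `B`
contains some `a ∈ A` with `a ∉ J`) iff `J` is a maximal element of the set `𝕀₀(B)` of
closed two-sided ideals having trivial intersection with `A`. -/
theorem detection_in_quotient
    {B : Type*} [NonUnitalCStarAlgebra B] (A J : Set B)
    (hA : IsCStarSubalgebra A) (hA0 : ∃ x ∈ A, x ≠ 0)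
    (hJ : IsClosedTwoSidedIdeal J) :
    ((∀ a₁ ∈ A, ∀ a₂ ∈ A, a₁ - a₂ ∈ J → a₁ = a₂) ↔ J ∩ A = {0}) ∧
    (J ∩ A = {0} →
      ((∀ K : Set B, IsClosedTwoSidedIdeal K → J ⊆ K → K ≠ J →
          ∃ a ∈ A, a ∈ K ∧ a ∉ J) ↔
        (J ∩ A = {0} ∧
          ∀ K : Set B, IsClosedTwoSidedIdeal K → K ∩ A = {0} → J ⊆ K → K = J))) := by
  obtain ⟨hAcl, hA0', hAadd, hAsmul, hAmul, hAstar⟩ := hA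
  obtain ⟨hJcl, hJ0, hJadd, hJneg, hJl, hJr⟩ := hJ
  have hAneg : ∀ x ∈ A, -x ∈ A := by
    intro x hx
    have := hAsmul (-1) x hx
    simpa using this
  constructor
  · constructor
    · intro h
      apply Set.eq_singleton_iff_unique_mem.2
      refine ⟨⟨hJ0, hA0'⟩, ?_⟩
      intro x ⟨hxJ, hxA⟩
      have := h x hxA 0 hA0' (by simpa using hxJ)
      exact this
    · intro h a₁ h₁ a₂ h₂ hd
      have hdA : a₁ - a₂ ∈ A := by
        have := hAadd a₁ h₁ (-a₂) (hAneg a₂ h₂)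
        simpa [sub_eq_add_neg] using this
      have : a₁ - a₂ ∈ J ∩ A := ⟨hd, hdA⟩
      rw [h] at this
      exact sub_eq_zero.mp this
  · intro hJA
    constructor
    · intro h
      refine ⟨hJA, ?_⟩
      intro K hK hKA hJK
      by_contra hne
      obtain ⟨a, haA, haK, haJ⟩ := h K hK hJK hne
      have : a ∈ K ∩ A := ⟨haK, haA⟩
      rw [hKA] at this
      exact haJ (this ▸ hJ0)
    · rintro ⟨-, hmax⟩ K hK hJK hne
      by_contra hno
      push_neg at hno
      apply hne
      apply hmax K hK ?_ hJK
      apply Set.eq_singleton_iff_unique_mem.2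
      refine ⟨⟨hK.2.1, hA0'⟩, ?_⟩
      intro x ⟨hxK, hxA⟩
      have hxJ : x ∈ J := hno x hxA hxK
      have : x ∈ J ∩ A := ⟨hxJ, hxA⟩
      rw [hJA] at this
      exact this
end

section
/- Let A ⊆ B be a C*-inclusion. Then: (1) B is simple if and only if A detects ideals in B and A is B-minimal. (2) If A ⊆ B has the generalised intersection property with hidden ideal N, and A is B-minimal, then the quotient B/N is simple; that is, the only closed two-sided ideals K of B with N ⊆ K are N and B. -/
/-- A closed (ring-theoretic) two-sided ideal of the subalgebra `A ⊆ B`. -/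
def IsClosedIdealOfSub {B : Type*} [NonUnitalCStarAlgebra B] (A I : Set B) : Prop :=
  I ⊆ A ∧ IsClosed I ∧ (0 : B) ∈ I ∧ (∀ x ∈ I, ∀ y ∈ I, x + y ∈ I) ∧
    (∀ x ∈ I, -x ∈ I) ∧ ∀ a ∈ A, ∀ x ∈ I, a * x ∈ I ∧ x * a ∈ I

/-- `A` is `B`-minimal: for every nonzero closed two-sided ideal `I` of `A`, the closed
linear span of `B·I·B` is all of `B`. -/
def IsBMinimal {B : Type*} [NonUnitalCStarAlgebra B] (A : Set B) : Prop :=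
  ∀ I : Set B, IsClosedIdealOfSub A I → I ≠ {0} →
    closure (Submodule.span ℂ {z : B | ∃ b₁ b₂ : B, ∃ i ∈ I, z = b₁ * i * b₂} : Set B)
      = Set.univ

/-- `A` detects ideals in `B`: every nonzero closed two-sided ideal meets `A`
nontrivially. -/
def DetectsIdeals {B : Type*} [NonUnitalCStarAlgebra B] (A : Set B) : Prop :=
  ∀ J : Set B, IsClosedTwoSidedIdeal J → J ≠ {0} → J ∩ A ≠ {0}

section Aux

variable {B : Type*} [NonUnitalCStarAlgebra B]

/-- If `I ⊆ J` with `J` a closed two-sided ideal, then the closed span of `B·I·B`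
is contained in `J`. -/
lemma closure_span_subset_ideal {J : Set B} (hJ : IsClosedTwoSidedIdeal J) {I : Set B}
    (hIJ : I ⊆ J) :
    closure (Submodule.span ℂ {z : B | ∃ b₁ b₂ : B, ∃ i ∈ I, z = b₁ * i * b₂} : Set B) ⊆ J := by
  obtain ⟨hcl, h0, hadd, _, hl, hr⟩ := hJ
  apply closure_minimal _ hcl
  intro x hx
  have key : ∀ y ∈ Submodule.span ℂ {z : B | ∃ b₁ b₂ : B, ∃ i ∈ I, z = b₁ * i * b₂},
      ∀ c : ℂ, c • y ∈ J := by
    intro y hy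
    induction hy using Submodule.span_induction with
    | mem z hz =>
      obtain ⟨b₁, b₂, i, hi, rfl⟩ := hz
      intro c
      have hz : c • (b₁ * i * b₂) = (c • b₁) * (i * b₂) := by
        rw [mul_assoc, smul_mul_assoc]
      rw [hz]
      exact hl _ _ (hr _ _ (hIJ hi))
    | zero => intro c; simpa using h0
    | add x y _ _ hx hy => intro c; rw [smul_add]; exact hadd _ (hx c) _ (hy c)
    | smul c x _ hx => intro c'; rw [smul_smul]; exact hx _
  simpa using key x hx 1

/-- The closed span of `B·I·B` is a closed two-sided ideal of `B`. -/
lemma closure_span_isIdeal (I : Set B) :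
    IsClosedTwoSidedIdeal
      (closure (Submodule.span ℂ {z : B | ∃ b₁ b₂ : B, ∃ i ∈ I, z = b₁ * i * b₂} : Set B)) := by
  set S := {z : B | ∃ b₁ b₂ : B, ∃ i ∈ I, z = b₁ * i * b₂} with hS
  set M := Submodule.span ℂ S with hM
  have hMl : ∀ b : B, ∀ x ∈ M, b * x ∈ M := by
    intro b x hx
    induction hx using Submodule.span_induction with
    | mem z hz =>
      obtain ⟨b₁, b₂, i, hi, rfl⟩ := hz
      exact Submodule.subset_span ⟨b * b₁, b₂, i, hi, by simp [mul_assoc]⟩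
    | zero => simpa using M.zero_mem
    | add x y _ _ hx hy => rw [mul_add]; exact M.add_mem hx hy
    | smul c x _ hx => rw [mul_smul_comm]; exact M.smul_mem _ hx
  have hMr : ∀ b : B, ∀ x ∈ M, x * b ∈ M := by
    intro b x hx
    induction hx using Submodule.span_induction with
    | mem z hz =>
      obtain ⟨b₁, b₂, i, hi, rfl⟩ := hz
      exact Submodule.subset_span ⟨b₁, b₂ * b, i, hi, by simp [mul_assoc]⟩
    | zero => simpa using M.zero_mem
    | add x y _ _ hx hy => rw [add_mul]; exact M.add_mem hx hy
    | smul c x _ hx => rw [smul_mul_assoc]; exact M.smul_mem _ hx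
  refine ⟨isClosed_closure, subset_closure M.zero_mem, ?_, ?_, ?_, ?_⟩
  · intro x hx y hy
    rw [← Submodule.topologicalClosure_coe] at hx hy ⊢
    exact (M.topologicalClosure).add_mem hx hy
  · intro x hx
    rw [← Submodule.topologicalClosure_coe] at hx ⊢
    exact (M.topologicalClosure).neg_mem hx
  · intro b x hx
    exact map_mem_closure (f := fun y => b * y) (continuous_mul_left b) hx
      (fun y hy => hMl b y hy)
  · intro b x hx
    exact map_mem_closure (f := fun y => y * b) (continuous_mul_right b) hx
      (fun y hy => hMr b y hy)

/-- If all products `b₁ * i * b₂` vanish for an element `i`, then `i = 0`. -/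
lemma eq_zero_of_sandwich (i : B) (h : star i * i * star i = 0) : i = 0 := by
  have hx : (i * star i) * (i * star i) = 0 := by
    calc (i * star i) * (i * star i) = i * (star i * i * star i) := by
          simp only [mul_assoc]
    _ = 0 := by rw [h, mul_zero]
  have hsa : star (i * star i) = i * star i := by simp [star_mul]
  have hnorm : ‖i * star i‖ ^ 2 = 0 := by
    rw [sq, ← CStarRing.norm_star_mul_self (x := i * star i), hsa, hx, norm_zero]
  have h1 : i * star i = 0 := by
    have := pow_eq_zero_iff (n := 2) (by norm_num) |>.mp hnorm
    exact norm_eq_zero.mp this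
  have h2 : ‖star i‖ ^ 2 = 0 := by
    rw [sq, ← CStarRing.norm_star_mul_self (x := star i), star_star, h1, norm_zero]
  have := pow_eq_zero_iff (n := 2) (by norm_num) |>.mp h2
  simpa using norm_eq_zero.mp this

/-- A nonzero set containing `0` contains a nonzero element. -/
lemma exists_ne_zero {I : Set B} (h0 : (0 : B) ∈ I) (hI : I ≠ {0}) : ∃ i ∈ I, i ≠ 0 := by
  by_contra h
  push_neg at h
  apply hI
  ext x
  simp only [Set.mem_singleton_iff]
  constructor
  · intro hx
    by_contra hx0
    exact hx0 (h x hx)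
  · rintro rfl; exact h0

/-- `J ∩ A` is a closed ideal of `A`. -/
lemma inter_isIdealOfSub {A J : Set B} (hA : IsCStarSubalgebra A)
    (hJ : IsClosedTwoSidedIdeal J) : IsClosedIdealOfSub A (J ∩ A) := by
  obtain ⟨hAcl, hA0, hAadd, hAsmul, hAmul, hAstar⟩ := hA
  obtain ⟨hJcl, hJ0, hJadd, hJneg, hJl, hJr⟩ := hJ
  refine ⟨Set.inter_subset_right, hJcl.inter hAcl, ⟨hJ0, hA0⟩, ?_, ?_, ?_⟩
  · rintro x ⟨hxJ, hxA⟩ y ⟨hyJ, hyA⟩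
    exact ⟨hJadd _ hxJ _ hyJ, hAadd _ hxA _ hyA⟩
  · rintro x ⟨hxJ, hxA⟩
    refine ⟨hJneg _ hxJ, ?_⟩
    have := hAsmul (-1 : ℂ) x hxA
    simpa using this
  · rintro a ha x ⟨hxJ, hxA⟩
    exact ⟨⟨hJl _ _ hxJ, hAmul _ ha _ hxA⟩, ⟨hJr _ _ hxJ, hAmul _ hxA _ ha⟩⟩

end Aux

/-- (1) `B` is simple iff `A` detects ideals in `B` and `A` is
`B`-minimal.  (2) If `A ⊆ B` has the generalised intersection property with hidden ideal
`N` and `A` is `B`-minimal, then `B/N` is simple: the only closed two-sided ideals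
`K ⊇ N` of `B` are `N` and `B`. -/
theorem simplicity_criterion
    {B : Type*} [NonUnitalCStarAlgebra B] (A : Set B)
    (hA : IsCStarSubalgebra A) (hA0 : ∃ x ∈ A, x ≠ 0) :
    ((∀ J : Set B, IsClosedTwoSidedIdeal J → J = {0} ∨ J = Set.univ) ↔
      (DetectsIdeals A ∧ IsBMinimal A)) ∧
    (∀ N : Set B, IsClosedTwoSidedIdeal N →
      (∀ J : Set B, IsClosedTwoSidedIdeal J → (J ∩ A = {0} ↔ J ⊆ N)) →
      IsBMinimal A →
      ∀ K : Set B, IsClosedTwoSidedIdeal K → N ⊆ K → K = N ∨ K = Set.univ) := by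
  -- key fact: detection + minimality argument is reused
  have key : ∀ K : Set B, IsClosedTwoSidedIdeal K → IsBMinimal A → K ∩ A ≠ {0} →
      K = Set.univ := by
    intro K hK hmin hKA
    have hI := inter_isIdealOfSub hA hK
    have := hmin (K ∩ A) hI hKA
    have hsub := closure_span_subset_ideal hK (I := K ∩ A) Set.inter_subset_left
    rw [this] at hsub
    exact Set.eq_univ_of_univ_subset hsub
  constructor
  · constructor
    · intro hsimple
      constructor
      · -- detects ideals
        intro J hJ hJ0
        rcases hsimple J hJ with h | h
        · exact absurd h hJ0
        · subst h
          rw [Set.univ_inter]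
          intro hAeq
          obtain ⟨x, hxA, hx0⟩ := hA0
          rw [hAeq] at hxA
          exact hx0 hxA
      · -- B-minimal
        intro I hI hI0
        rcases hsimple _ (closure_span_isIdeal I) with h | h
        · -- contradiction: sandwich of a nonzero element vanishes
          exfalso
          obtain ⟨i, hiI, hi0⟩ := exists_ne_zero hI.2.2.1 hI0
          apply hi0
          apply eq_zero_of_sandwich
          have hmem : star i * i * star i ∈
              closure (Submodule.span ℂ
                {z : B | ∃ b₁ b₂ : B, ∃ j ∈ I, z = b₁ * j * b₂} : Set B) :=
            subset_closure (Submodule.subset_span ⟨star i, star i, i, hiI, rfl⟩)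
          rw [h] at hmem
          exact hmem
        · exact h
    · rintro ⟨hdet, hmin⟩ J hJ
      by_cases hJ0 : J = {0}
      · exact Or.inl hJ0
      · exact Or.inr (key J hJ hmin (hdet J hJ hJ0))
  · intro N hN hgip hmin K hK hNK
    by_cases hKA : K ∩ A = {0}
    · left
      exact Set.Subset.antisymm ((hgip K hK).mp hKA) hNK
    · exact Or.inr (key K hK hmin hKA)
end

section
/- Let B be a commutative C*-algebra and A ⊆ B a nonzero closed *-subalgebra such that the inclusion is non-degenerate, i.e., the closed linear span of {a · b : a ∈ A, b ∈ B} equals B. Then the inclusion A ⊆ B is regular: the set of normalisers N(A,B) := {b ∈ B : b A b* ⊆ A and b* A b ⊆ A} generates B as a C*-algebra, i.e., the smallest closed *-subalgebra of B containing N(A,B) is B itself. -/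
set_option maxHeartbeats 1000000
set_option synthInstance.maxHeartbeats 400000

/-- The set of normalisers of `A` in `B`. -/
def Normalisers {B : Type*} [NonUnitalCStarAlgebra B] (A : Set B) : Set B :=
  {b : B | (∀ a ∈ A, b * a * star b ∈ A) ∧ ∀ a ∈ A, star b * a * b ∈ A}

open NormedSpace Unitization in
/-- Key step: for commutative `B`, if `C` is a closed *-subalgebra containing the
normalisers of `A`, then `a * g ∈ C` for any `a ∈ A` and selfadjoint `g ∈ B`.  Indeed,
`a * exp(itg)` (computed in the unitization) is a normaliser for every real `t`, and
differentiating at `t = 0` yields `i (a * g) ∈ C`. -/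
theorem aux_mul_selfAdjoint_mem {B : Type*} [NonUnitalCommCStarAlgebra B] (A : Set B)
    (hA : IsCStarSubalgebra A) (C : Set B) (hC : IsCStarSubalgebra C)
    (hNC : Normalisers A ⊆ C) (a : B) (ha : a ∈ A) (g : B) (hg : IsSelfAdjoint g) :
    a * g ∈ C := by
  obtain ⟨hAc, hA0', hAadd, hAsmul, hAmul, hAstar⟩ := hA
  obtain ⟨hCc, hC0, hCadd, hCsmul, hCmul, hCstar⟩ := hC
  set x : Unitization ℂ B := Complex.I • (g : Unitization ℂ B) with hxdef
  have hstarx : star x = -x := by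
    rw [hxdef, star_smul, Complex.star_def, Complex.conj_I, ← inr_star, hg.star_eq, neg_smul]
  -- the unitaries
  set e : ℝ → Unitization ℂ B := fun t => exp (t • x) with hedef
  have hestar : ∀ t : ℝ, star (e t) = e (-t) := by
    intro t
    rw [hedef]
    simp only
    rw [star_exp, star_smul, star_trivial, hstarx, smul_neg, ← neg_smul]
  have heprod : ∀ t : ℝ, e t * e (-t) = 1 := by
    intro t
    rw [hedef]
    simp only
    letI : NormedAlgebra ℚ (Unitization ℂ B) := NormedAlgebra.restrictScalars ℚ ℂ _
    rw [← exp_add_of_commute (Commute.all _ _)]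
    simp
  -- the curve of normalisers
  set F : ℝ → Unitization ℂ B := fun t => (a : Unitization ℂ B) * e t with hFdef
  have hFfst : ∀ t, (F t).fst = 0 := by
    intro t
    rw [hFdef]
    simp [Unitization.fst_mul]
  have hFinr : ∀ t, (((F t).snd : B) : Unitization ℂ B) = F t := by
    intro t
    conv_rhs => rw [← Unitization.inl_fst_add_inr_snd_eq (F t)]
    rw [hFfst t]
    simp
  have hmemA : ∀ y ∈ A, y * (a * star a) ∈ A :=
    fun y hy => hAmul y hy _ (hAmul a ha _ (hAstar a ha))
  have hnorm : ∀ t : ℝ, (F t).snd ∈ Normalisers A := by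
    intro t
    have key : ∀ y ∈ A, (F t).snd * y * star ((F t).snd) = y * (a * star a) := by
      intro y hy
      apply Unitization.inr_injective (R := ℂ)
      rw [inr_mul, inr_mul, inr_star, hFinr t, inr_mul, inr_mul, inr_star]
      rw [hFdef]
      simp only
      rw [star_mul, hestar t]
      linear_combination ((y : Unitization ℂ B) * ((a : Unitization ℂ B) *
        star (a : Unitization ℂ B))) * heprod t
    constructor
    · intro y hy
      rw [key y hy]
      exact hmemA y hy
    · intro y hy
      have hcomm : star ((F t).snd) * y * (F t).snd = (F t).snd * y * star ((F t).snd) := by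
        rw [mul_comm (star ((F t).snd)) y, mul_comm _ ((F t).snd), ← mul_assoc]
      rw [hcomm, key y hy]
      exact hmemA y hy
  have hFC : ∀ t : ℝ, (F t).snd ∈ C := fun t => hNC (hnorm t)
  -- a itself is a normaliser
  have haC : a ∈ C := by
    apply hNC
    constructor
    · intro y hy
      have h1 : a * y * star a = y * (a * star a) := by
        rw [mul_comm a y, mul_assoc]
      rw [h1]; exact hmemA y hy
    · intro y hy
      have h1 : star a * y * a = y * (a * star a) := by
        rw [mul_comm (star a) y, mul_assoc, mul_comm (star a) a]
      rw [h1]; exact hmemA y hy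
  -- C closed under subtraction and real scalars
  have hCsub : ∀ u ∈ C, ∀ v ∈ C, u - v ∈ C := by
    intro u hu v hv
    have h1 := hCadd u hu _ (hCsmul (-1) v hv)
    simpa [sub_eq_add_neg] using h1
  have hCrsmul : ∀ (r : ℝ), ∀ u ∈ C, r • u ∈ C := by
    intro r u hu
    have h1 := hCsmul (r : ℂ) u hu
    rwa [Complex.coe_smul] at h1
  -- the derivative of F at 0 is a * x = I • (a * g)
  have hder : HasDerivAt F ((a : Unitization ℂ B) * x) 0 := by
    have h := (hasDerivAt_exp_smul_const (𝕂 := ℝ) x (0 : ℝ)).const_mul (a : Unitization ℂ B)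
    simpa [hFdef, hedef] using h
  have hslope := (hasDerivAt_iff_tendsto_slope).mp hder
  set c : ℝ → B := fun t => t⁻¹ • ((F t).snd - a) with hcdef
  have hcC : ∀ t : ℝ, c t ∈ C := fun t => hCrsmul _ _ (hCsub _ (hFC t) _ haC)
  have hF0 : F 0 = (a : Unitization ℂ B) := by
    rw [hFdef, hedef]; simp
  have hslope_eq : ∀ t : ℝ, slope F 0 t = ((c t : B) : Unitization ℂ B) := by
    intro t
    rw [slope_def_module, hF0, hcdef]
    simp only [sub_zero]
    rw [inr_smul, inr_sub, hFinr t]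
  have hval : (a : Unitization ℂ B) * x = ((Complex.I • (a * g) : B) : Unitization ℂ B) := by
    rw [hxdef, inr_smul, inr_mul, mul_smul_comm]
  -- pull the limit back into B
  have hctend : Filter.Tendsto c (nhdsWithin 0 {(0 : ℝ)}ᶜ) (nhds (Complex.I • (a * g))) := by
    rw [tendsto_iff_dist_tendsto_zero]
    have heq : (fun t => dist (c t) (Complex.I • (a * g))) =
        fun t => dist (slope F 0 t) ((a : Unitization ℂ B) * x) := by
      funext t
      rw [hslope_eq t, hval, (Unitization.isometry_inr (𝕜 := ℂ) (A := B)).dist_eq]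
    rw [heq]
    exact tendsto_iff_dist_tendsto_zero.mp hslope
  have hIagC : Complex.I • (a * g) ∈ C :=
    hCc.mem_of_tendsto hctend (Filter.Eventually.of_forall fun t => hcC t)
  have h2 := hCsmul (-Complex.I) _ hIagC
  simpa [smul_smul, neg_mul, Complex.I_mul_I] using h2

/-- A non-degenerate C*-inclusion `A ⊆ B` with `B` commutative is
regular: the smallest closed *-subalgebra of `B` containing the normalisers `N(A,B)` is
`B` itself. -/
theorem commutative_inclusion_regular
    {B : Type*} [NonUnitalCommCStarAlgebra B] (A : Set B)
    (hA : IsCStarSubalgebra A) (hA0 : ∃ x ∈ A, x ≠ 0)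
    (hnondeg :
      closure (Submodule.span ℂ {z : B | ∃ a ∈ A, ∃ b : B, z = a * b} : Set B) = Set.univ) :
    ∀ C : Set B, IsCStarSubalgebra C → Normalisers A ⊆ C → C = Set.univ := by
  intro C hC hNC
  obtain ⟨hCc, hC0, hCadd, hCsmul, hCmul, hCstar⟩ := hC
  -- every a * b lies in C
  have hS : {z : B | ∃ a ∈ A, ∃ b : B, z = a * b} ⊆ C := by
    rintro z ⟨a, ha, b, rfl⟩
    have hre := aux_mul_selfAdjoint_mem A hA C
      ⟨hCc, hC0, hCadd, hCsmul, hCmul, hCstar⟩ hNC a ha (↑(realPart b)) (realPart b).property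
    have him := aux_mul_selfAdjoint_mem A hA C
      ⟨hCc, hC0, hCadd, hCsmul, hCmul, hCstar⟩ hNC a ha (↑(imaginaryPart b)) (imaginaryPart b).property
    have hdecomp : a * b = a * ↑(realPart b) + Complex.I • (a * ↑(imaginaryPart b)) := by
      conv_lhs => rw [← realPart_add_I_smul_imaginaryPart b]
      rw [mul_add, mul_smul_comm]
    rw [hdecomp]
    exact hCadd _ hre _ (hCsmul _ _ him)
  -- hence the closed span lies in C
  let P : Submodule ℂ B :=
    { carrier := C
      add_mem' := fun hx hy => hCadd _ hx _ hy
      zero_mem' := hC0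
      smul_mem' := fun c x hx => hCsmul c x hx }
  have h1 : (Submodule.span ℂ {z : B | ∃ a ∈ A, ∃ b : B, z = a * b} : Set B) ⊆ C :=
    Submodule.span_le (p := P).mpr hS
  have h2 := closure_minimal h1 hCc
  rw [hnondeg] at h2
  exact Set.univ_subset_iff.mp h2
end

section
/- Let A be a C*-algebra and b ∈ A a nonzero positive element. Then b does not satisfy Kishimoto's condition for A viewed as a normed A-bimodule over itself: there exist a hereditary C*-subalgebra D of A and ε > 0 such that ‖a b a‖ ≥ ε for every positive a ∈ D with ‖a‖ = 1. -/
open Unitization Filter Topology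

section Aux

/-- In a unital C*-algebra, `x² ≤ ‖x‖ • x` for positive `x`. -/
lemma sq_le_norm_smul' {B : Type*} [CStarAlgebra B] [Nontrivial B] [PartialOrder B]
    [StarOrderedRing B] {x : B} (hx : 0 ≤ x) : x * x ≤ ‖x‖ • x := by
  have hsa : IsSelfAdjoint x := hx.isSelfAdjoint
  have h1 : x * x = cfc (fun t : ℝ => t * t) x := by
    rw [cfc_mul _ _ x, cfc_id' ℝ x]
  have h2 : ‖x‖ • x = cfc (fun t : ℝ => ‖x‖ • t) x := by
    rw [cfc_smul _ _ x, cfc_id' ℝ x]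
  rw [h1, h2]
  refine cfc_mono fun t ht => ?_
  have h0 : 0 ≤ t := spectrum_nonneg_of_nonneg hx ht
  have hle : t ≤ ‖x‖ := (Real.le_norm_self t).trans (spectrum.norm_le_norm_of_mem ht)
  simpa [smul_eq_mul] using mul_le_mul_of_nonneg_right hle h0

variable {A : Type*} [NonUnitalCStarAlgebra A] [PartialOrder A] [StarOrderedRing A]

/-- Existence of the approximate-unit elements needed for hereditarity of `closure (fAf)`. -/
lemma approx_unit_exists (f : A) (hf : 0 ≤ f) (c : A) (n : ℕ) :
    ∃ q : Unitization ℂ A, 0 ≤ q ∧ q ≤ 1 ∧ IsSelfAdjoint q ∧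
      (∃ w : A, q * (c : Unitization ℂ A) * q = ((f * w * f : A) : Unitization ℂ A)) ∧
      ‖(1 - q) * (f : Unitization ℂ A)‖ ≤ 1/(n+1) ∧
      ‖(f : Unitization ℂ A) * (1 - q)‖ ≤ 1/(n+1) := by
  have hfB : (0 : Unitization ℂ A) ≤ (f : Unitization ℂ A) := inr_nonneg_iff.mpr hf
  have hspec : ∀ t ∈ spectrum ℝ (f : Unitization ℂ A), 0 ≤ t := fun t ht =>
    spectrum_nonneg_of_nonneg hfB ht
  set r : ℝ → ℝ := fun t => (max t (1/(n+1)))⁻¹ with hr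
  have hrpos : ∀ t : ℝ, 0 < max t (1/(n+1) : ℝ) := fun t =>
    lt_of_lt_of_le (by positivity) (le_max_right _ _)
  have hrc : Continuous r := ((continuous_id.max continuous_const).inv₀ fun t => (hrpos t).ne')
  have hmulc : Continuous (fun t : ℝ => t * r t) := continuous_id.mul hrc
  have hfsaB : IsSelfAdjoint (f : Unitization ℂ A) := hfB.isSelfAdjoint
  have hvf : ‖(1 - cfc (fun t : ℝ => t * r t) (f : Unitization ℂ A)) * (f : Unitization ℂ A)‖ ≤ 1/(n+1) := by
    have e1 : (1 - cfc (fun t : ℝ => t * r t) (f : Unitization ℂ A)) * (f : Unitization ℂ A) =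
        cfc (fun t : ℝ => (1 - t * r t) * t) (f : Unitization ℂ A) := by
      rw [cfc_mul (fun t : ℝ => 1 - t * r t) (fun t : ℝ => t) _ (continuous_const.sub hmulc).continuousOn (continuousOn_id' _),
        cfc_sub (fun _ : ℝ => (1 : ℝ)) (fun t : ℝ => t * r t) _ continuousOn_const hmulc.continuousOn, cfc_const_one ℝ _ hfsaB,
        cfc_id' ℝ _ hfsaB]
    rw [e1]
    refine norm_cfc_le (by positivity) fun t ht => ?_
    have ht0 : 0 ≤ t := hspec t ht
    rcases le_or_gt t (1/(n+1) : ℝ) with h | h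
    · have hmax : max t (1/(n+1) : ℝ) = (1/(n+1) : ℝ) := max_eq_right h
      have hrt : r t = (n+1 : ℝ) := by simp only [hr]; rw [hmax]; simp
      have h1 : 0 ≤ 1 - t * r t := by
        rw [hrt, sub_nonneg]
        calc t * (n+1 : ℝ) ≤ (1/(n+1) : ℝ) * (n+1 : ℝ) :=
              mul_le_mul_of_nonneg_right h (by positivity)
          _ = 1 := by field_simp
      have h2 : 1 - t * r t ≤ 1 := by
        have : 0 ≤ t * r t := mul_nonneg ht0 (by rw [hrt]; positivity)
        linarith
      rw [Real.norm_eq_abs, abs_of_nonneg (mul_nonneg h1 ht0)]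
      calc (1 - t * r t) * t ≤ 1 * t := mul_le_mul_of_nonneg_right h2 ht0
        _ = t := one_mul t
        _ ≤ 1/(n+1 : ℝ) := h
    · have hmax : max t (1/(n+1) : ℝ) = t := max_eq_left h.le
      have ht0' : t ≠ 0 := (lt_trans (by positivity) h).ne'
      have htr : t * r t = 1 := by simp only [hr]; rw [hmax]; exact mul_inv_cancel₀ ht0'
      rw [htr, sub_self, zero_mul, norm_zero]
      positivity
  refine ⟨cfc (fun t : ℝ => t * r t) (f : Unitization ℂ A), ?_, ?_, cfc_predicate _ _,
    ?_, ?_, ?_⟩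
  · exact cfc_nonneg fun t ht => mul_nonneg (hspec t ht) (inv_nonneg.mpr (hrpos t).le)
  · rw [← cfc_one ℝ (f : Unitization ℂ A)]
    refine cfc_mono (fun t ht => ?_) (hf := hmulc.continuousOn) (hg := continuousOn_const)
    calc t * (max t (1/(n+1) : ℝ))⁻¹ ≤ (max t (1/(n+1) : ℝ)) * (max t (1/(n+1) : ℝ))⁻¹ :=
          mul_le_mul_of_nonneg_right (le_max_left _ _) (inv_nonneg.mpr (hrpos t).le)
      _ = 1 := mul_inv_cancel₀ (hrpos t).ne'
  · -- q * c * q = f * w * f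
    have hqf : cfc (fun t : ℝ => t * r t) (f : Unitization ℂ A) =
        (f : Unitization ℂ A) * cfc r (f : Unitization ℂ A) := by
      rw [cfc_mul _ _ _ (continuousOn_id' _) hrc.continuousOn, cfc_id' ℝ _ hfsaB]
    have hfq : cfc (fun t : ℝ => t * r t) (f : Unitization ℂ A) =
        cfc r (f : Unitization ℂ A) * (f : Unitization ℂ A) := by
      rw [cfc_congr (g := fun t : ℝ => r t * t) fun t _ => mul_comm _ _,
        cfc_mul _ _ _ hrc.continuousOn (continuousOn_id' _), cfc_id' ℝ _ hfsaB]
    set z : Unitization ℂ A :=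
      cfc r (f : Unitization ℂ A) * (c : Unitization ℂ A) * cfc r (f : Unitization ℂ A) with hz
    have hzfst : z.fst = 0 := by simp [hz]
    have hzsnd : (z.snd : Unitization ℂ A) = z := by
      conv_rhs => rw [← Unitization.inl_fst_add_inr_snd_eq z]
      rw [hzfst, Unitization.inl_zero, zero_add]
    refine ⟨z.snd, ?_⟩
    simp only [Unitization.inr_mul]
    rw [hzsnd, hz]
    nth_rewrite 2 [hfq]
    rw [hqf]
    simp only [mul_assoc]
  · exact hvf
  · -- ‖f * (1 - q)‖ ≤ 1/(n+1) by taking stars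
    have hqsa : IsSelfAdjoint (cfc (fun t : ℝ => t * r t) (f : Unitization ℂ A)) :=
      cfc_predicate _ _
    rw [← norm_star, star_mul, ((IsSelfAdjoint.one (R := Unitization ℂ A)).sub hqsa).star_eq,
      hfsaB.star_eq]
    exact hvf

lemma hereditary_closure_conj (f : A) (hf : 0 ≤ f) {a c : A}
    (ha : a ∈ closure {y : A | ∃ x : A, y = f * x * f}) (hc0 : 0 ≤ c) (hca : c ≤ a) :
    c ∈ closure {y : A | ∃ x : A, y = f * x * f} := by
  have ha0 : 0 ≤ a := hc0.trans hca
  choose q hq0 hq1 hqsa hqw hvf hfv using approx_unit_exists f hf c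
  choose w hw using hqw
  have hv0 : ∀ n, 0 ≤ 1 - q n := fun n => sub_nonneg.mpr (hq1 n)
  have hvsa : ∀ n, IsSelfAdjoint (1 - q n) := fun n => (IsSelfAdjoint.one (Unitization ℂ A)).sub (hqsa n)
  have hvnorm : ∀ n, ‖1 - q n‖ ≤ 1 := fun n =>
    (CStarAlgebra.norm_le_one_iff_of_nonneg _ (hv0 n)).mpr (sub_le_self 1 (hq0 n))
  have hqnorm : ∀ n, ‖q n‖ ≤ 1 := fun n =>
    (CStarAlgebra.norm_le_one_iff_of_nonneg _ (hq0 n)).mpr (hq1 n)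
  have hcB : (0 : Unitization ℂ A) ≤ (c : Unitization ℂ A) := inr_nonneg_iff.mpr hc0
  have hcsa : IsSelfAdjoint (c : Unitization ℂ A) := hcB.isSelfAdjoint
  -- Step C : `(1 - q n) * a * (1 - q n) → 0`
  have hvav : Tendsto (fun n => ‖(1 - q n) * (a : Unitization ℂ A) * (1 - q n)‖) atTop (𝓝 0) := by
    rw [Metric.tendsto_atTop]
    intro ε hε
    obtain ⟨s, hsS, hsd⟩ : ∃ s ∈ {y : A | ∃ x : A, y = f * x * f}, ‖a - s‖ < ε/2 := by
      obtain ⟨s, hs1, hs2⟩ := Metric.mem_closure_iff.mp ha (ε/2) (by positivity)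
      exact ⟨s, hs1, by rwa [dist_eq_norm] at hs2⟩
    obtain ⟨x, rfl⟩ := hsS
    obtain ⟨N, hN⟩ := exists_nat_gt (2 * ‖x‖ / ε)
    refine ⟨N, fun n hn => ?_⟩
    rw [Real.dist_eq, sub_zero, abs_of_nonneg (norm_nonneg _)]
    have hsplit : (1 - q n) * (a : Unitization ℂ A) * (1 - q n) =
        (1 - q n) * ((f * x * f : A) : Unitization ℂ A) * (1 - q n) +
        (1 - q n) * (((a - f * x * f) : A) : Unitization ℂ A) * (1 - q n) := by
      rw [Unitization.inr_sub ℂ]; noncomm_ring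
    have hb1 : ‖(1 - q n) * ((f * x * f : A) : Unitization ℂ A) * (1 - q n)‖ ≤
        ‖x‖ * (1/(n+1)) := by
      have e : (1 - q n) * ((f * x * f : A) : Unitization ℂ A) * (1 - q n) =
          ((1 - q n) * (f : Unitization ℂ A)) *
            ((x : Unitization ℂ A) * ((f : Unitization ℂ A) * (1 - q n))) := by
        simp only [Unitization.inr_mul, mul_assoc]
      rw [e]
      calc ‖((1 - q n) * (f : Unitization ℂ A)) *
            ((x : Unitization ℂ A) * ((f : Unitization ℂ A) * (1 - q n)))‖
          ≤ ‖(1 - q n) * (f : Unitization ℂ A)‖ *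
            (‖(x : Unitization ℂ A)‖ * ‖(f : Unitization ℂ A) * (1 - q n)‖) :=
            (norm_mul_le _ _).trans (by gcongr; exact norm_mul_le _ _)
        _ ≤ 1 * (‖x‖ * (1/(n+1))) := by
            rw [Unitization.norm_inr]
            refine mul_le_mul ((hvf n).trans ?_) ?_ (by positivity) (by norm_num)
            · rw [div_le_one (by positivity)]
              norm_num
            · exact mul_le_mul_of_nonneg_left (hfv n) (norm_nonneg x)
        _ = ‖x‖ * (1/(n+1)) := one_mul _
    have hb2 : ‖(1 - q n) * (((a - f * x * f) : A) : Unitization ℂ A) * (1 - q n)‖ ≤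
        ‖a - f * x * f‖ := by
      calc ‖(1 - q n) * (((a - f * x * f) : A) : Unitization ℂ A) * (1 - q n)‖
          ≤ ‖(1 - q n) * (((a - f * x * f) : A) : Unitization ℂ A)‖ * ‖1 - q n‖ :=
            norm_mul_le _ _
        _ ≤ ‖1 - q n‖ * ‖(((a - f * x * f) : A) : Unitization ℂ A)‖ * ‖1 - q n‖ := by
            gcongr; exact norm_mul_le _ _
        _ ≤ 1 * ‖(((a - f * x * f) : A) : Unitization ℂ A)‖ * 1 := by
            gcongr <;> [exact hvnorm n; exact hvnorm n]
        _ = ‖a - f * x * f‖ := by rw [Unitization.norm_inr]; ring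
    have hx1 : ‖x‖ * (1/(n+1) : ℝ) < ε/2 := by
      have hn' : (2 * ‖x‖ / ε) < (n : ℝ) + 1 := by
        have : (N : ℝ) ≤ n := Nat.cast_le.mpr hn
        linarith
      rw [div_lt_iff₀ hε] at hn'
      rw [mul_one_div, div_lt_iff₀ (by positivity)]
      nlinarith [norm_nonneg x]
    calc ‖(1 - q n) * (a : Unitization ℂ A) * (1 - q n)‖
        ≤ ‖(1 - q n) * ((f * x * f : A) : Unitization ℂ A) * (1 - q n)‖ +
          ‖(1 - q n) * (((a - f * x * f) : A) : Unitization ℂ A) * (1 - q n)‖ := by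
          rw [hsplit]; exact norm_add_le _ _
      _ < ε/2 + ε/2 := by
          refine add_lt_add_of_le_of_lt (hb1.trans hx1.le) (hb2.trans_lt hsd) |>.trans_le ?_
          exact le_refl _
      _ = ε := by ring
  -- Step 1 : `‖q n * c * q n - c‖ ≤ 2 * ‖(1 - q n) * c‖`
  have h1 : ∀ n, ‖q n * (c : Unitization ℂ A) * q n - (c : Unitization ℂ A)‖ ≤
      2 * ‖(1 - q n) * (c : Unitization ℂ A)‖ := by
    intro n
    have e : (c : Unitization ℂ A) - q n * c * q n =
        (1 - q n) * (c : Unitization ℂ A) +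
          q n * ((c : Unitization ℂ A) * (1 - q n)) := by noncomm_ring
    have hcv : ‖(c : Unitization ℂ A) * (1 - q n)‖ = ‖(1 - q n) * (c : Unitization ℂ A)‖ := by
      rw [← norm_star, star_mul, hcsa.star_eq, (hvsa n).star_eq]
    calc ‖q n * (c : Unitization ℂ A) * q n - (c : Unitization ℂ A)‖
        = ‖(c : Unitization ℂ A) - q n * c * q n‖ := norm_sub_rev _ _
      _ = ‖(1 - q n) * (c : Unitization ℂ A) +
            q n * ((c : Unitization ℂ A) * (1 - q n))‖ := by rw [e]
      _ ≤ ‖(1 - q n) * (c : Unitization ℂ A)‖ +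
            ‖q n‖ * ‖(c : Unitization ℂ A) * (1 - q n)‖ :=
          (norm_add_le _ _).trans (by gcongr; exact norm_mul_le _ _)
      _ ≤ ‖(1 - q n) * (c : Unitization ℂ A)‖ +
            1 * ‖(1 - q n) * (c : Unitization ℂ A)‖ := by rw [hcv]; gcongr; exact hqnorm n
      _ = 2 * ‖(1 - q n) * (c : Unitization ℂ A)‖ := by ring
  -- Step 2 : `‖(1 - q n) * c‖² ≤ ‖c‖ * ‖(1 - q n) * a * (1 - q n)‖`
  have h2 : ∀ n, ‖(1 - q n) * (c : Unitization ℂ A)‖^2 ≤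
      ‖c‖ * ‖(1 - q n) * (a : Unitization ℂ A) * (1 - q n)‖ := by
    intro n
    have e2 : ‖(1 - q n) * (c : Unitization ℂ A)‖^2 =
        ‖(1 - q n) * (c : Unitization ℂ A) * ((c : Unitization ℂ A) * (1 - q n))‖ := by
      rw [pow_two, ← CStarRing.norm_self_mul_star (x := (1 - q n) * (c : Unitization ℂ A))]
      congr 1
      rw [star_mul, hcsa.star_eq, (hvsa n).star_eq, mul_assoc]
    have key : (1 - q n) * (c : Unitization ℂ A) * ((c : Unitization ℂ A) * (1 - q n)) ≤
        ‖c‖ • ((1 - q n) * (a : Unitization ℂ A) * (1 - q n)) := by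
      have step1 : (1 - q n) * ((c : Unitization ℂ A) * (c : Unitization ℂ A)) * (1 - q n) ≤
          (1 - q n) * (‖(c : Unitization ℂ A)‖ • (c : Unitization ℂ A)) * (1 - q n) := by
        have := star_left_conjugate_le_conjugate (sq_le_norm_smul' hcB) (1 - q n)
        rwa [(hvsa n).star_eq] at this
      have step2 : (1 - q n) * (c : Unitization ℂ A) * (1 - q n) ≤
          (1 - q n) * (a : Unitization ℂ A) * (1 - q n) := by
        have hcaB : (c : Unitization ℂ A) ≤ (a : Unitization ℂ A) :=
          (inr_le_iff c a hc0.isSelfAdjoint ha0.isSelfAdjoint).mpr hca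
        have := star_left_conjugate_le_conjugate hcaB (1 - q n)
        rwa [(hvsa n).star_eq] at this
      calc (1 - q n) * (c : Unitization ℂ A) * ((c : Unitization ℂ A) * (1 - q n))
          = (1 - q n) * ((c : Unitization ℂ A) * (c : Unitization ℂ A)) * (1 - q n) := by
            simp only [mul_assoc]
        _ ≤ (1 - q n) * (‖(c : Unitization ℂ A)‖ • (c : Unitization ℂ A)) * (1 - q n) := step1
        _ = ‖c‖ • ((1 - q n) * (c : Unitization ℂ A) * (1 - q n)) := by
            rw [Unitization.norm_inr, mul_smul_comm, smul_mul_assoc]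
        _ ≤ ‖c‖ • ((1 - q n) * (a : Unitization ℂ A) * (1 - q n)) :=
            smul_le_smul_of_nonneg_left step2 (norm_nonneg c)
    have pos : 0 ≤ (1 - q n) * (c : Unitization ℂ A) * ((c : Unitization ℂ A) * (1 - q n)) := by
      have := star_mul_self_nonneg ((c : Unitization ℂ A) * (1 - q n))
      rwa [star_mul, hcsa.star_eq, (hvsa n).star_eq] at this
    calc ‖(1 - q n) * (c : Unitization ℂ A)‖^2
        = ‖(1 - q n) * (c : Unitization ℂ A) * ((c : Unitization ℂ A) * (1 - q n))‖ := e2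
      _ ≤ ‖‖c‖ • ((1 - q n) * (a : Unitization ℂ A) * (1 - q n))‖ :=
          CStarAlgebra.norm_le_norm_of_nonneg_of_le pos key
      _ = ‖c‖ * ‖(1 - q n) * (a : Unitization ℂ A) * (1 - q n)‖ := by
          rw [norm_smul, Real.norm_eq_abs, abs_of_nonneg (norm_nonneg c)]
  -- squeeze
  have hbound : ∀ n, ‖f * w n * f - c‖ ≤
      2 * Real.sqrt (‖c‖ * ‖(1 - q n) * (a : Unitization ℂ A) * (1 - q n)‖) := by
    intro n
    have hyc : ‖f * w n * f - c‖ =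
        ‖q n * (c : Unitization ℂ A) * q n - (c : Unitization ℂ A)‖ := by
      rw [← Unitization.norm_inr (𝕜 := ℂ), Unitization.inr_sub ℂ, hw n, norm_sub_rev]
    rw [hyc]
    refine (h1 n).trans ?_
    have hs : ‖(1 - q n) * (c : Unitization ℂ A)‖ ≤
        Real.sqrt (‖c‖ * ‖(1 - q n) * (a : Unitization ℂ A) * (1 - q n)‖) := by
      rw [← Real.sqrt_sq (norm_nonneg ((1 - q n) * (c : Unitization ℂ A)))]
      exact Real.sqrt_le_sqrt (h2 n)
    linarith
  have h0 : Tendsto (fun n => 2 * Real.sqrt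
      (‖c‖ * ‖(1 - q n) * (a : Unitization ℂ A) * (1 - q n)‖)) atTop (𝓝 0) := by
    have : Tendsto (fun n => ‖c‖ * ‖(1 - q n) * (a : Unitization ℂ A) * (1 - q n)‖)
        atTop (𝓝 (‖c‖ * 0)) := hvav.const_mul ‖c‖
    rw [mul_zero] at this
    have := this.sqrt
    rw [Real.sqrt_zero] at this
    simpa using this.const_mul 2
  have hlim : Tendsto (fun n => f * w n * f) atTop (𝓝 c) := by
    rw [tendsto_iff_norm_sub_tendsto_zero]
    exact squeeze_zero (fun n => norm_nonneg _) hbound h0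
  exact mem_closure_of_tendsto hlim (Eventually.of_forall fun n => ⟨w n, rfl⟩)

end Aux
/-- A hereditary C*-subalgebra of `A`: a nonzero closed *-subalgebra `D` such that
`a ∈ D`, `0 ≤ b ≤ a` imply `b ∈ D`. -/
def IsHereditarySubalgebra {A : Type*} [NonUnitalCStarAlgebra A] [PartialOrder A]
    [StarOrderedRing A] (D : Set A) : Prop :=
  IsClosed D ∧ (∃ x ∈ D, x ≠ 0) ∧ (0 : A) ∈ D ∧
    (∀ x ∈ D, ∀ y ∈ D, x + y ∈ D) ∧ (∀ (c : ℂ), ∀ x ∈ D, c • x ∈ D) ∧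
    (∀ x ∈ D, ∀ y ∈ D, x * y ∈ D) ∧ (∀ x ∈ D, star x ∈ D) ∧
    ∀ a ∈ D, ∀ b : A, 0 ≤ b → b ≤ a → b ∈ D

set_option synthInstance.maxHeartbeats 400000 in
/-- No nonzero positive element `b` of a C*-algebra `A` satisfies
Kishimoto's condition for `A` viewed as a bimodule over itself: there are a hereditary
C*-subalgebra `D ⊆ A` and `ε > 0` with `‖a b a‖ ≥ ε` for every positive `a ∈ D` of
norm one. -/
theorem no_positive_element_satisfies_Kishimoto
    {A : Type*} [NonUnitalCStarAlgebra A] [PartialOrder A] [StarOrderedRing A]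
    (b : A) (hb : 0 ≤ b) (hb0 : b ≠ 0) :
    ∃ (D : Set A) (ε : ℝ), IsHereditarySubalgebra D ∧ 0 < ε ∧
      ∀ a ∈ D, 0 ≤ a → ‖a‖ = 1 → ε ≤ ‖a * b * a‖ := by
  have hbn : (0:ℝ) < ‖b‖ := norm_pos_iff.mpr hb0
  set δ : ℝ := ‖b‖ / 2 with hδdef
  have hδ : 0 < δ := by positivity
  have hbsa : IsSelfAdjoint b := hb.isSelfAdjoint
  have hbsaB : IsSelfAdjoint (b : Unitization ℂ A) := hbsa.inr ℂ
  have hFc : Continuous (fun t : ℝ => max (t - δ) 0) :=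
    (continuous_id.sub continuous_const).max continuous_const
  have hGc : Continuous (fun t : ℝ => min t δ) := continuous_id.min continuous_const
  have hHc : Continuous (fun t : ℝ => max (δ - t) 0) :=
    (continuous_const.sub continuous_id).max continuous_const
  have hF0 : max ((0:ℝ) - δ) 0 = 0 := by simp [hδ.le]
  set f : A := cfcₙ (fun t : ℝ => max (t - δ) 0) b with hfdef
  have hf0 : 0 ≤ f := cfcₙ_nonneg fun t _ => le_max_right _ _
  have hfsa : IsSelfAdjoint f := hf0.isSelfAdjoint
  -- `f ≠ 0`
  have hfne : f ≠ 0 := by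
    intro hfz
    have hbg : b = f + cfcₙ (fun t : ℝ => min t δ) b := by
      conv_lhs => rw [← cfcₙ_id ℝ b]
      rw [hfdef, ← cfcₙ_add (fun t : ℝ => max (t - δ) 0) (fun t : ℝ => min t δ) b
        hFc.continuousOn hF0 hGc.continuousOn (min_eq_left hδ.le)]
      refine cfcₙ_congr fun t _ => ?_
      simp only [id_eq]
      rcases le_total t δ with h | h
      · rw [max_eq_right (sub_nonpos.mpr h), min_eq_left h, zero_add]
      · rw [max_eq_left (sub_nonneg.mpr h), min_eq_right h]; ring
    have hgn : ‖cfcₙ (fun t : ℝ => min t δ) b‖ ≤ δ := by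
      refine norm_cfcₙ_le fun t ht => ?_
      have ht0 : 0 ≤ t := quasispectrum_nonneg_of_nonneg b hb t ht
      rw [Real.norm_eq_abs, abs_of_nonneg (le_min ht0 hδ.le)]
      exact min_le_right t δ
    rw [hfz, zero_add] at hbg
    rw [← hbg] at hgn
    rw [hδdef] at hgn
    linarith
  set S : Set A := {y : A | ∃ x : A, y = f * x * f} with hSdef
  -- basic facts about `f` in the unitization
  have hfB : (f : Unitization ℂ A) = cfc (fun t : ℝ => max (t - δ) 0) (b : Unitization ℂ A) := by
    rw [hfdef]
    exact Unitization.real_cfcₙ_eq_cfc_inr b (fun t : ℝ => max (t - δ) 0) (by simp [hδ.le])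
  have hfh : cfc (fun t : ℝ => max (t - δ) 0) (b : Unitization ℂ A) *
      cfc (fun t : ℝ => max (δ - t) 0) (b : Unitization ℂ A) = 0 := by
    rw [← cfc_mul _ _ _ hFc.continuousOn hHc.continuousOn]
    have he : (fun t : ℝ => max (t - δ) 0 * max (δ - t) 0) = fun _ : ℝ => (0:ℝ) := by
      funext t
      rcases le_total t δ with h | h
      · rw [max_eq_right (sub_nonpos.mpr h), zero_mul]
      · rw [max_eq_right (sub_nonpos.mpr h), mul_zero]
    rw [he, cfc_const_zero ℝ]
  have hsub : cfc (fun t : ℝ => max (t - δ) 0) (b : Unitization ℂ A) -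
      cfc (fun t : ℝ => max (δ - t) 0) (b : Unitization ℂ A) =
      (b : Unitization ℂ A) - algebraMap ℝ (Unitization ℂ A) δ := by
    rw [← cfc_sub _ _ _ hFc.continuousOn hHc.continuousOn]
    have he : cfc (fun t : ℝ => max (t - δ) 0 - max (δ - t) 0) (b : Unitization ℂ A) =
        cfc (fun t : ℝ => t - δ) (b : Unitization ℂ A) := by
      refine cfc_congr fun t _ => ?_
      rcases le_total t δ with h | h
      · rw [max_eq_right (sub_nonpos.mpr h), max_eq_left (sub_nonneg.mpr h)]; ring
      · rw [max_eq_left (sub_nonneg.mpr h), max_eq_right (sub_nonpos.mpr h)]; ring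
    rw [he, cfc_sub _ _ _ (continuousOn_id' _) continuousOn_const, cfc_id' ℝ _ hbsaB,
      cfc_const δ _ hbsaB]
  refine ⟨closure S, δ, ⟨isClosed_closure, ⟨f * f * f, ?_, ?_⟩, ?_, ?_, ?_, ?_, ?_, ?_⟩, hδ, ?_⟩
  · exact subset_closure ⟨f, rfl⟩
  · -- f * f * f ≠ 0
    intro h3
    have h4 : f * f * (f * f) = 0 := by rw [← mul_assoc, h3, zero_mul]
    have h5 : f * f = 0 := by
      have := CStarRing.norm_star_mul_self (x := f * f)
      rw [star_mul, hfsa.star_eq, h4, norm_zero] at this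
      have := mul_self_eq_zero.mp this.symm
      rwa [norm_eq_zero] at this
    have h6 : f = 0 := by
      have := CStarRing.norm_star_mul_self (x := f)
      rw [hfsa.star_eq, h5, norm_zero] at this
      have := mul_self_eq_zero.mp this.symm
      rwa [norm_eq_zero] at this
    exact hfne h6
  · exact subset_closure ⟨0, by simp⟩
  · -- addition
    intro x hx y hy
    obtain ⟨u, hu, hul⟩ := mem_closure_iff_seq_limit.mp hx
    obtain ⟨v, hv, hvl⟩ := mem_closure_iff_seq_limit.mp hy
    refine mem_closure_iff_seq_limit.mpr ⟨fun n => u n + v n, fun n => ?_, hul.add hvl⟩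
    obtain ⟨p, hp⟩ := hu n
    obtain ⟨r, hr⟩ := hv n
    exact ⟨p + r, by show u n + v n = _; rw [hp, hr, mul_add, add_mul]⟩
  · -- scalar multiplication
    intro c x hx
    obtain ⟨u, hu, hul⟩ := mem_closure_iff_seq_limit.mp hx
    refine mem_closure_iff_seq_limit.mpr ⟨fun n => c • u n, fun n => ?_, hul.const_smul c⟩
    obtain ⟨p, hp⟩ := hu n
    exact ⟨c • p, by show c • u n = _; rw [hp, mul_smul_comm, smul_mul_assoc]⟩
  · -- multiplication
    intro x hx y hy
    obtain ⟨u, hu, hul⟩ := mem_closure_iff_seq_limit.mp hx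
    obtain ⟨v, hv, hvl⟩ := mem_closure_iff_seq_limit.mp hy
    refine mem_closure_iff_seq_limit.mpr ⟨fun n => u n * v n, fun n => ?_, hul.mul hvl⟩
    obtain ⟨p, hp⟩ := hu n
    obtain ⟨r, hr⟩ := hv n
    exact ⟨p * f * f * r, by show u n * v n = _; rw [hp, hr]; simp only [mul_assoc]⟩
  · -- star
    intro x hx
    obtain ⟨u, hu, hul⟩ := mem_closure_iff_seq_limit.mp hx
    refine mem_closure_iff_seq_limit.mpr ⟨fun n => star (u n), fun n => ?_, hul.star⟩
    obtain ⟨p, hp⟩ := hu n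
    exact ⟨star p, by show star (u n) = _; rw [hp, star_mul, star_mul, hfsa.star_eq, mul_assoc]⟩
  · -- hereditary
    intro a haD c hc0 hca
    exact hereditary_closure_conj f hf0 haD hc0 hca
  · -- the norm bound
    intro a haD ha0 han
    have haB0 : (0 : Unitization ℂ A) ≤ (a : Unitization ℂ A) := inr_nonneg_iff.mpr ha0
    have hasa : IsSelfAdjoint a := ha0.isSelfAdjoint
    have hasaB : IsSelfAdjoint (a : Unitization ℂ A) := haB0.isSelfAdjoint
    -- `a * h = 0` in the unitization
    have hah : (a : Unitization ℂ A) *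
        cfc (fun t : ℝ => max (δ - t) 0) (b : Unitization ℂ A) = 0 := by
      have hmap : Set.MapsTo (fun y : A => (y : Unitization ℂ A) *
          cfc (fun t : ℝ => max (δ - t) 0) (b : Unitization ℂ A)) S {0} := by
        rintro _ ⟨x, rfl⟩
        simp only [Set.mem_singleton_iff, Unitization.inr_mul]
        rw [mul_assoc, mul_assoc, hfB, hfh, mul_zero, mul_zero]
      have hcont : Continuous (fun y : A => (y : Unitization ℂ A) *
          cfc (fun t : ℝ => max (δ - t) 0) (b : Unitization ℂ A)) :=
        ((Unitization.isometry_inr (𝕜 := ℂ) (A := A)).continuous).mul continuous_const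
      have hmem := (hmap.closure hcont) haD
      rw [closure_singleton] at hmem
      exact Set.mem_singleton_iff.mp hmem
    -- `δ • (a * a) ≤ a * b * a` in the unitization
    have hafa : (0 : Unitization ℂ A) ≤ (a : Unitization ℂ A) *
        cfc (fun t : ℝ => max (t - δ) 0) (b : Unitization ℂ A) * (a : Unitization ℂ A) := by
      have hpos : (0 : Unitization ℂ A) ≤
          cfc (fun t : ℝ => max (t - δ) 0) (b : Unitization ℂ A) :=
        cfc_nonneg fun t _ => le_max_right _ _
      have := star_left_conjugate_nonneg hpos (a : Unitization ℂ A)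
      rwa [hasaB.star_eq] at this
    have hkey : δ • ((a : Unitization ℂ A) * (a : Unitization ℂ A)) ≤
        (a : Unitization ℂ A) * (b : Unitization ℂ A) * (a : Unitization ℂ A) := by
      rw [← sub_nonneg]
      have e : (a : Unitization ℂ A) * (b : Unitization ℂ A) * (a : Unitization ℂ A) -
          δ • ((a : Unitization ℂ A) * (a : Unitization ℂ A)) =
          (a : Unitization ℂ A) * ((b : Unitization ℂ A) -
            algebraMap ℝ (Unitization ℂ A) δ) * (a : Unitization ℂ A) := by
        rw [Algebra.algebraMap_eq_smul_one]
        simp only [mul_sub, sub_mul, mul_smul_comm, smul_mul_assoc, mul_one]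
      rw [e, ← hsub]
      have e2 : (a : Unitization ℂ A) *
          (cfc (fun t : ℝ => max (t - δ) 0) (b : Unitization ℂ A) -
            cfc (fun t : ℝ => max (δ - t) 0) (b : Unitization ℂ A)) * (a : Unitization ℂ A) =
          (a : Unitization ℂ A) * cfc (fun t : ℝ => max (t - δ) 0) (b : Unitization ℂ A) *
            (a : Unitization ℂ A) -
          ((a : Unitization ℂ A) * cfc (fun t : ℝ => max (δ - t) 0) (b : Unitization ℂ A)) *
            (a : Unitization ℂ A) := by noncomm_ring
      rw [e2, hah, zero_mul, sub_zero]
      exact hafa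
    have hpos2 : (0 : Unitization ℂ A) ≤
        δ • ((a : Unitization ℂ A) * (a : Unitization ℂ A)) := by
      refine smul_nonneg hδ.le ?_
      have := star_mul_self_nonneg (a : Unitization ℂ A)
      rwa [hasaB.star_eq] at this
    have h5 : ‖δ • ((a : Unitization ℂ A) * (a : Unitization ℂ A))‖ ≤
        ‖(a : Unitization ℂ A) * (b : Unitization ℂ A) * (a : Unitization ℂ A)‖ :=
      CStarAlgebra.norm_le_norm_of_nonneg_of_le hpos2 hkey
    have haa : ‖a * a‖ = ‖a‖ * ‖a‖ := by
      nth_rewrite 1 [← hasa.star_eq]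
      exact CStarRing.norm_star_mul_self
    calc δ = δ * (‖a‖ * ‖a‖) := by rw [han]; ring
      _ = ‖δ • ((a : Unitization ℂ A) * (a : Unitization ℂ A))‖ := by
          rw [norm_smul, Real.norm_eq_abs, abs_of_nonneg hδ.le, ← Unitization.inr_mul,
            Unitization.norm_inr, haa]
      _ ≤ ‖(a : Unitization ℂ A) * (b : Unitization ℂ A) * (a : Unitization ℂ A)‖ := h5
      _ = ‖a * b * a‖ := by rw [← Unitization.inr_mul, ← Unitization.inr_mul,
            Unitization.norm_inr]
end

section
/- Let A be a C*-algebra and X a normed A-bimodule. Then the set of all x ∈ X satisfying Kishimoto's condition is a closed complex linear subspace of X. -/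
/-- Kishimoto's condition for an element `x` of a normed `A`-bimodule `X`, whose left and
right module actions are given by the bilinear maps `L` and `R`. -/
def KishimotoCondition {A X : Type*} [NonUnitalCStarAlgebra A] [PartialOrder A]
    [StarOrderedRing A] [NormedAddCommGroup X] [NormedSpace ℂ X]
    (L R : A →ₗ[ℂ] X →ₗ[ℂ] X) (x : X) : Prop :=
  ∀ D : Set A, IsHereditarySubalgebra D → ∀ ε : ℝ, 0 < ε →
    ∃ a ∈ D, 0 ≤ a ∧ ‖a‖ = 1 ∧ ‖L a (R a x)‖ < ε

open Filter Topology

namespace KishimotoAux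

/-! ### Real function lemmas -/

noncomputable def gK (n : ℕ) (t : ℝ) : ℝ := min 1 ((n:ℝ) * max (2*t - 1) 0)
noncomputable def hK (n : ℕ) (t : ℝ) : ℝ := gK n t / t
noncomputable def fK (t : ℝ) : ℝ := max (t - 1/2) 0

lemma gK_cont (n : ℕ) : Continuous (gK n) := by unfold gK; fun_prop
lemma gK_zero (n : ℕ) : gK n 0 = 0 := by norm_num [gK]
lemma gK_nonneg (n : ℕ) (t : ℝ) : 0 ≤ gK n t := le_min one_pos.le (by positivity)
lemma gK_le_one (n : ℕ) (t : ℝ) : gK n t ≤ 1 := min_le_left _ _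
lemma gK_eq_zero (n : ℕ) {t : ℝ} (ht : t ≤ 1/2) : gK n t = 0 := by
  have : max (2*t - 1) 0 = 0 := max_eq_right (by linarith)
  simp [gK, this]

lemma hK_zero (n : ℕ) : hK n 0 = 0 := by simp [hK]

lemma hK_cont (n : ℕ) : Continuous (hK n) := by
  rw [continuous_iff_continuousAt]
  intro t
  rcases lt_or_ge t (1/2) with ht | ht
  · have hev : hK n =ᶠ[𝓝 t] (fun _ => (0:ℝ)) := by
      filter_upwards [Iio_mem_nhds ht] with s hs
      simp [hK, gK_eq_zero n (le_of_lt hs)]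
    exact continuousAt_const.congr (Filter.EventuallyEq.symm hev)
  · have ht0 : t ≠ 0 := by intro h; rw [h] at ht; norm_num at ht
    exact ((gK_cont n).continuousAt).div continuousAt_id ht0

lemma mul_hK (n : ℕ) (t : ℝ) : t * hK n t = gK n t := by
  rcases eq_or_ne t 0 with rfl | ht
  · simp [hK, gK_zero]
  · rw [hK, mul_comm, div_mul_cancel₀ _ ht]

lemma hK_abs_le (n : ℕ) {t : ℝ} (ht : 0 ≤ t) : |hK n t| ≤ 2 := by
  rcases le_or_gt t (1/2) with h | h
  · simp [hK, gK_eq_zero n h]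
  · have ht0 : 0 < t := by linarith
    have h1 : 0 ≤ hK n t := div_nonneg (gK_nonneg n t) ht
    rw [abs_of_nonneg h1, hK, div_le_iff₀ ht0]
    have := gK_le_one n t
    linarith

lemma gK_sq_le (n : ℕ) {t : ℝ} (ht : 0 ≤ t) : gK n t * gK n t ≤ 2 * t := by
  rcases le_or_gt t (1/2) with h | h
  · rw [gK_eq_zero n h]; linarith
  · have h1 := gK_le_one n t
    have h0 := gK_nonneg n t
    nlinarith

lemma gK_fK_close (n : ℕ) (hn : 1 ≤ n) (t : ℝ) : |gK n t * fK t - fK t| ≤ 1/(n:ℝ) := by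
  have hn' : (1:ℝ) ≤ (n:ℝ) := by exact_mod_cast hn
  have hf0 : 0 ≤ fK t := le_max_right _ _
  have hg0 := gK_nonneg n t
  have hg1 := gK_le_one n t
  have key : fK t * (1 - gK n t) ≤ 1/(n:ℝ) := by
    rcases le_or_gt 1 ((n:ℝ) * max (2*t - 1) 0) with h | h
    · have : gK n t = 1 := min_eq_left h
      rw [this]; simp only [sub_self, mul_zero]; positivity
    · have hfle : fK t ≤ 1/(n:ℝ) := by
        rcases le_or_gt t (1/2) with h2 | h2
        · have : fK t = 0 := max_eq_right (by linarith)
          rw [this]; positivity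
        · have hft : fK t = t - 1/2 := max_eq_left (by linarith)
          have hmx : max (2*t-1) 0 = 2*t - 1 := max_eq_left (by linarith)
          rw [hmx] at h
          have hnpos : (0:ℝ) < (n:ℝ) := by linarith
          have hdiv : 2*t - 1 < 1/(n:ℝ) := by
            rw [lt_div_iff₀ hnpos]; nlinarith
          have hpos : (0:ℝ) ≤ 1/(n:ℝ) := by positivity
          rw [hft]; linarith
      nlinarith
  have : |gK n t * fK t - fK t| = fK t * (1 - gK n t) := by
    rw [abs_of_nonpos (by nlinarith)]
    ring
  rw [this]; exact key

lemma fK_cont : Continuous fK := by unfold fK; fun_prop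
lemma fK_zero : fK 0 = 0 := by norm_num [fK]
lemma id_sub_fK {t : ℝ} (h0 : 0 ≤ t) (h1 : t ≤ 1) : |t - fK t| ≤ 1/2 := by
  rcases le_or_gt t (1/2) with h | h
  · rw [show fK t = 0 from max_eq_right (by linarith)]
    rw [abs_of_nonneg (by linarith)]; linarith
  · have h2 : t - fK t = 1/2 := by
      rw [show fK t = t - 1/2 from max_eq_left (by linarith)]; ring
    rw [h2, abs_of_nonneg] <;> norm_num

/-! ### C*-algebra lemmas -/

variable {A : Type*} [NonUnitalCStarAlgebra A] [PartialOrder A] [StarOrderedRing A]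

lemma quasi_abs_le_norm (a : A) {x : ℝ} (hx : x ∈ quasispectrum ℝ a) : |x| ≤ ‖a‖ := by
  rw [Unitization.quasispectrum_eq_spectrum_inr' ℝ ℂ a] at hx
  simpa [Unitization.norm_inr] using spectrum.norm_le_norm_of_mem hx

lemma conj_nonneg' (e : A) (he : IsSelfAdjoint e) {z : A} (hz : 0 ≤ z) :
    0 ≤ z - e * z - z * e + e * z * e := by
  have hs : CFC.sqrt z * CFC.sqrt z = z := CFC.sqrt_mul_sqrt_self z
  set s := CFC.sqrt z with hsdef
  have hssa : IsSelfAdjoint s := IsSelfAdjoint.of_nonneg (CFC.sqrt_nonneg _)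
  have key : z - e * z - z * e + e * z * e = star (s - s * e) * (s - s * e) := by
    simp only [star_sub, star_mul, hssa.star_eq, he.star_eq]
    rw [← hs]
    noncomm_ring
  rw [key]
  exact star_mul_self_nonneg _

lemma conj_mono' (e : A) (he : IsSelfAdjoint e) {z z' : A} (h : z ≤ z') :
    z - e * z - z * e + e * z * e ≤ z' - e * z' - z' * e + e * z' * e := by
  have h0 : (0:A) ≤ z' - z := sub_nonneg.mpr h
  have := conj_nonneg' e he h0
  have heq : (z' - z) - e * (z' - z) - (z' - z) * e + e * (z' - z) * e
      = (z' - e * z' - z' * e + e * z' * e) - (z - e * z - z * e + e * z * e) := by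
    noncomm_ring
  rw [heq] at this
  exact sub_nonneg.mp this

lemma mul_self_le_norm_smul' {b : A} (hb : 0 ≤ b) : b * b ≤ ‖b‖ • b := by
  have hs : CFC.sqrt b * CFC.sqrt b = b := CFC.sqrt_mul_sqrt_self b
  set s := CFC.sqrt b
  have hssa : IsSelfAdjoint s := IsSelfAdjoint.of_nonneg (CFC.sqrt_nonneg _)
  have := CStarAlgebra.star_left_conjugate_le_norm_smul (a := s) (b := b) (IsSelfAdjoint.of_nonneg hb)
  rw [hssa.star_eq] at this
  calc b * b = s * b * s := by rw [← hs]; noncomm_ring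
    _ ≤ ‖b‖ • (s * s) := this
    _ = ‖b‖ • b := by rw [hs]

lemma conj_norm_bound (e : A) (he : IsSelfAdjoint e) {b d : A} (hb : 0 ≤ b) (hbd : b ≤ d) :
    ‖b - e * b‖ * ‖b - e * b‖ ≤ ‖b‖ * ‖d - e * d - d * e + e * d * e‖ := by
  have hbsa : IsSelfAdjoint b := IsSelfAdjoint.of_nonneg hb
  have h1 : (b - e * b) * star (b - e * b)
      = (b*b) - e * (b*b) - (b*b) * e + e * (b*b) * e := by
    simp only [star_sub, star_mul, he.star_eq, hbsa.star_eq]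
    noncomm_ring
  rw [← CStarRing.norm_self_mul_star, h1]
  have hbb : (0:A) ≤ b * b := by
    have := star_mul_self_nonneg b
    rwa [hbsa.star_eq] at this
  have step1 : (b*b) - e * (b*b) - (b*b) * e + e * (b*b) * e
      ≤ (‖b‖ • b) - e * (‖b‖ • b) - (‖b‖ • b) * e + e * (‖b‖ • b) * e :=
    conj_mono' e he (mul_self_le_norm_smul' hb)
  have step2 : (‖b‖ • b) - e * (‖b‖ • b) - (‖b‖ • b) * e + e * (‖b‖ • b) * e
      = ‖b‖ • (b - e * b - b * e + e * b * e) := by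
    simp [smul_sub, smul_add, mul_smul_comm, smul_mul_assoc]
  have step3 : ‖b‖ • (b - e * b - b * e + e * b * e) ≤ ‖b‖ • (d - e * d - d * e + e * d * e) := by
    rw [← sub_nonneg, ← smul_sub]
    exact smul_nonneg (norm_nonneg b) (sub_nonneg.mpr (conj_mono' e he hbd))
  have hle := (step1.trans (step2 ▸ step3))
  have hnn : (0:A) ≤ (b*b) - e * (b*b) - (b*b) * e + e * (b*b) * e := conj_nonneg' e he hbb
  calc ‖(b*b) - e * (b*b) - (b*b) * e + e * (b*b) * e‖
      ≤ ‖‖b‖ • (d - e * d - d * e + e * d * e)‖ :=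
        CStarAlgebra.norm_le_norm_of_nonneg_of_le hnn hle
    _ = ‖b‖ * ‖d - e * d - d * e + e * d * e‖ := by
        rw [norm_smul, Real.norm_of_nonneg (norm_nonneg b)]

/-! ### cfc facts -/

section CFCfacts
variable {a : A} (ha0 : 0 ≤ a) (han : ‖a‖ = 1)
include ha0 han

lemma spec01 : ∀ t ∈ quasispectrum ℝ a, 0 ≤ t ∧ t ≤ 1 := by
  intro t ht
  refine ⟨quasispectrum_nonneg_of_nonneg a ha0 t ht, ?_⟩
  have := quasi_abs_le_norm a ht
  rw [han] at this
  exact (abs_le.mp this).2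

omit han in
lemma eK_nonneg (n : ℕ) : 0 ≤ cfcₙ (gK n) a :=
  cfcₙ_nonneg (fun t _ => gK_nonneg n t)

omit han in
lemma eK_sa (n : ℕ) : IsSelfAdjoint (cfcₙ (gK n) a) :=
  IsSelfAdjoint.of_nonneg (eK_nonneg ha0 n)

omit ha0 han in
lemma eK_norm_le (n : ℕ) : ‖cfcₙ (gK n) a‖ ≤ 1 :=
  norm_cfcₙ_le fun t _ => by
    rw [Real.norm_eq_abs, abs_of_nonneg (gK_nonneg n t)]; exact gK_le_one n t

omit han in
lemma kK_norm_le (n : ℕ) : ‖cfcₙ (hK n) a‖ ≤ 2 :=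
  norm_cfcₙ_le fun t ht => by
    rw [Real.norm_eq_abs]; exact hK_abs_le n (quasispectrum_nonneg_of_nonneg a ha0 t ht)

omit han in
lemma eK_eq_mul (n : ℕ) : cfcₙ (gK n) a = a * cfcₙ (hK n) a := by
  have ha' : IsSelfAdjoint a := IsSelfAdjoint.of_nonneg ha0
  conv_lhs => rw [show gK n = fun t => t * hK n t from funext fun t => (mul_hK n t).symm]
  rw [cfcₙ_mul _ _ a (by fun_prop) rfl ((hK_cont n).continuousOn) (hK_zero n), cfcₙ_id' ℝ a]

omit han in
lemma eK_eq_mul' (n : ℕ) : cfcₙ (gK n) a = cfcₙ (hK n) a * a := by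
  have ha' : IsSelfAdjoint a := IsSelfAdjoint.of_nonneg ha0
  conv_lhs => rw [show gK n = fun t => hK n t * t from funext fun t => by
    rw [mul_comm]; exact (mul_hK n t).symm]
  rw [cfcₙ_mul _ _ a ((hK_cont n).continuousOn) (hK_zero n) (by fun_prop) rfl, cfcₙ_id' ℝ a]

omit han in
lemma eK_sq_le (n : ℕ) : cfcₙ (gK n) a * cfcₙ (gK n) a ≤ (2:ℝ) • a := by
  rw [← cfcₙ_mul _ _ a ((gK_cont n).continuousOn) (gK_zero n) ((gK_cont n).continuousOn)
    (gK_zero n)]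
  calc cfcₙ (fun t => gK n t * gK n t) a ≤ cfcₙ (fun t : ℝ => (2:ℝ) * t) a :=
        cfcₙ_mono (fun t ht => gK_sq_le n (quasispectrum_nonneg_of_nonneg a ha0 t ht))
          (((gK_cont n).mul (gK_cont n)).continuousOn) (by fun_prop)
          (by simp [gK_zero]) (mul_zero 2)
    _ = (2:ℝ) • a := by
        have := cfcₙ_smul (R := ℝ) (2:ℝ) id a (by fun_prop) (by simp)
        simpa [smul_eq_mul, cfcₙ_id ℝ a] using this

lemma cK_ne_zero : cfcₙ fK a ≠ 0 := by
  intro hc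
  have h1 : a - cfcₙ fK a = cfcₙ (fun t => t - fK t) a := by
    rw [cfcₙ_sub _ _ a (by fun_prop) rfl (fK_cont.continuousOn) fK_zero, cfcₙ_id' ℝ a]
  have h2 : ‖a - cfcₙ fK a‖ ≤ 1/2 := by
    rw [h1]
    exact norm_cfcₙ_le fun t ht => by
      rw [Real.norm_eq_abs]
      exact id_sub_fK (spec01 ha0 han t ht).1 (spec01 ha0 han t ht).2
  rw [hc, sub_zero, han] at h2
  norm_num at h2

omit ha0 han in
lemma eK_cK_close (n : ℕ) (hn : 1 ≤ n) :
    ‖cfcₙ (gK n) a * cfcₙ fK a - cfcₙ fK a‖ ≤ 1/(n:ℝ) := by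
  rw [← cfcₙ_mul _ _ a ((gK_cont n).continuousOn) (gK_zero n) (fK_cont.continuousOn) fK_zero,
    ← cfcₙ_sub (fun x => gK n x * fK x) fK a (((gK_cont n).mul fK_cont).continuousOn) (by simp [gK_zero, fK_zero])
      (fK_cont.continuousOn) fK_zero]
  exact norm_cfcₙ_le fun t _ => by rw [Real.norm_eq_abs]; exact gK_fK_close n hn t

omit ha0 han in
lemma cK_eK_close (n : ℕ) (hn : 1 ≤ n) :
    ‖cfcₙ fK a * cfcₙ (gK n) a - cfcₙ fK a‖ ≤ 1/(n:ℝ) := by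
  rw [← cfcₙ_mul _ _ a (fK_cont.continuousOn) fK_zero ((gK_cont n).continuousOn) (gK_zero n),
    ← cfcₙ_sub (fun x => fK x * gK n x) fK a ((fK_cont.mul (gK_cont n)).continuousOn) (by simp [gK_zero, fK_zero])
      (fK_cont.continuousOn) fK_zero]
  exact norm_cfcₙ_le fun t _ => by
    rw [Real.norm_eq_abs, mul_comm]; exact gK_fK_close n hn t

end CFCfacts

/-! ### The hereditary subalgebra generated below `a` -/

/-- The set of elements for which `cfcₙ (gK n) a` acts as an approximate unit. -/
def herSet (a : A) : Set A :=
  {b : A | Tendsto (fun n => cfcₙ (gK n) a * b) atTop (𝓝 b) ∧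
    Tendsto (fun n => b * cfcₙ (gK n) a) atTop (𝓝 b)}

section herSet

variable {a : A} (ha0 : 0 ≤ a) (han : ‖a‖ = 1)

lemma herSet_isClosed : IsClosed (herSet a) := by
  refine isClosed_of_closure_subset fun b hb => ?_
  constructor
  all_goals
    rw [Metric.tendsto_atTop]
    intro δ hδ
    obtain ⟨b', hb', hbb'⟩ := Metric.mem_closure_iff.mp hb (δ/3) (by linarith)
    rw [dist_eq_norm] at hbb'
  · obtain ⟨N, hN⟩ := Metric.tendsto_atTop.mp hb'.1 (δ/3) (by linarith)
    refine ⟨N, fun n hn => ?_⟩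
    have h1 := hN n hn
    rw [dist_eq_norm] at h1 ⊢
    have he := eK_norm_le (a := a) n
    calc ‖cfcₙ (gK n) a * b - b‖
        = ‖cfcₙ (gK n) a * (b - b') + (cfcₙ (gK n) a * b' - b') + (b' - b)‖ := by
          congr 1; noncomm_ring
      _ ≤ ‖cfcₙ (gK n) a * (b - b') + (cfcₙ (gK n) a * b' - b')‖ + ‖b' - b‖ := norm_add_le _ _
      _ ≤ ‖cfcₙ (gK n) a * (b - b')‖ + ‖cfcₙ (gK n) a * b' - b'‖ + ‖b' - b‖ := by
          gcongr; exact norm_add_le _ _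
      _ ≤ ‖cfcₙ (gK n) a‖ * ‖b - b'‖ + ‖cfcₙ (gK n) a * b' - b'‖ + ‖b' - b‖ := by
          gcongr; exact norm_mul_le _ _
      _ < δ := by
          have h2 : ‖cfcₙ (gK n) a‖ * ‖b - b'‖ ≤ 1 * ‖b - b'‖ :=
            mul_le_mul_of_nonneg_right he (norm_nonneg _)
          rw [norm_sub_rev b' b]
          linarith
  · obtain ⟨N, hN⟩ := Metric.tendsto_atTop.mp hb'.2 (δ/3) (by linarith)
    refine ⟨N, fun n hn => ?_⟩
    have h1 := hN n hn
    rw [dist_eq_norm] at h1 ⊢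
    have he := eK_norm_le (a := a) n
    calc ‖b * cfcₙ (gK n) a - b‖
        = ‖(b - b') * cfcₙ (gK n) a + (b' * cfcₙ (gK n) a - b') + (b' - b)‖ := by
          congr 1; noncomm_ring
      _ ≤ ‖(b - b') * cfcₙ (gK n) a + (b' * cfcₙ (gK n) a - b')‖ + ‖b' - b‖ := norm_add_le _ _
      _ ≤ ‖(b - b') * cfcₙ (gK n) a‖ + ‖b' * cfcₙ (gK n) a - b'‖ + ‖b' - b‖ := by
          gcongr; exact norm_add_le _ _
      _ ≤ ‖b - b'‖ * ‖cfcₙ (gK n) a‖ + ‖b' * cfcₙ (gK n) a - b'‖ + ‖b' - b‖ := by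
          gcongr; exact norm_mul_le _ _
      _ < δ := by
          have h2 : ‖b - b'‖ * ‖cfcₙ (gK n) a‖ ≤ ‖b - b'‖ * 1 :=
            mul_le_mul_of_nonneg_left he (norm_nonneg _)
          rw [norm_sub_rev b' b]
          linarith

include ha0 han in
lemma herSet_cK_mem : cfcₙ fK a ∈ herSet a := by
  have key : ∀ (F : ℕ → A), (∀ n, 1 ≤ n → ‖F n - cfcₙ fK a‖ ≤ 1/(n:ℝ)) →
      Tendsto F atTop (𝓝 (cfcₙ fK a)) := by
    intro F hF
    rw [tendsto_iff_norm_sub_tendsto_zero]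
    apply squeeze_zero' (Filter.Eventually.of_forall fun n => norm_nonneg _)
      (Filter.eventually_atTop.mpr ⟨1, fun n hn => hF n hn⟩)
    exact tendsto_one_div_atTop_nhds_zero_nat
  exact ⟨key _ fun n hn => eK_cK_close (a := a) n hn,
    key _ fun n hn => cK_eK_close (a := a) n hn⟩

omit han in
include ha0 in
lemma herSet_hereditary {b d : A} (hd : d ∈ herSet a) (hb0 : 0 ≤ b) (hbd : b ≤ d) :
    b ∈ herSet a := by
  have hbsa : IsSelfAdjoint b := IsSelfAdjoint.of_nonneg hb0
  set e : ℕ → A := fun n => cfcₙ (gK n) a with he_def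
  have hesa : ∀ n, IsSelfAdjoint (e n) := fun n => eK_sa ha0 n
  have hφd : Tendsto (fun n => ‖d - e n * d - d * e n + e n * d * e n‖) atTop (𝓝 0) := by
    apply squeeze_zero (fun n => norm_nonneg _) (g := fun n => 2 * ‖d - e n * d‖)
    · intro n
      have heq : d - e n * d - d * e n + e n * d * e n
          = (d - e n * d) - (d - e n * d) * e n := by noncomm_ring
      rw [heq]
      calc ‖(d - e n * d) - (d - e n * d) * e n‖
          ≤ ‖d - e n * d‖ + ‖(d - e n * d) * e n‖ := norm_sub_le _ _
        _ ≤ ‖d - e n * d‖ + ‖d - e n * d‖ * ‖e n‖ := by gcongr; exact norm_mul_le _ _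
        _ ≤ ‖d - e n * d‖ + ‖d - e n * d‖ * 1 :=
            add_le_add le_rfl (mul_le_mul_of_nonneg_left (eK_norm_le n) (norm_nonneg _))
        _ = 2 * ‖d - e n * d‖ := by ring
    · have : Tendsto (fun n => d - e n * d) atTop (𝓝 (d - d)) :=
        tendsto_const_nhds.sub hd.1
      rw [sub_self] at this
      have := this.norm
      rw [norm_zero] at this
      simpa using this.const_mul 2
  have hb1 : Tendsto (fun n => ‖b - e n * b‖) atTop (𝓝 0) := by
    apply squeeze_zero (fun n => norm_nonneg _)
      (g := fun n => Real.sqrt (‖b‖ * ‖d - e n * d - d * e n + e n * d * e n‖))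
    · intro n
      have h1 := conj_norm_bound (e n) (hesa n) hb0 hbd
      have h2 : ‖b - e n * b‖ = Real.sqrt (‖b - e n * b‖ * ‖b - e n * b‖) :=
        (Real.sqrt_mul_self (norm_nonneg _)).symm
      rw [h2]
      exact Real.sqrt_le_sqrt h1
    · have : Tendsto (fun n => ‖b‖ * ‖d - e n * d - d * e n + e n * d * e n‖) atTop
          (𝓝 (‖b‖ * 0)) := tendsto_const_nhds.mul hφd
      rw [mul_zero] at this
      have := this.sqrt
      rwa [Real.sqrt_zero] at this
  constructor
  · rw [tendsto_iff_norm_sub_tendsto_zero]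
    simpa only [norm_sub_rev] using hb1
  · rw [tendsto_iff_norm_sub_tendsto_zero]
    have : ∀ n, ‖b * e n - b‖ = ‖b - e n * b‖ := by
      intro n
      rw [← norm_star, star_sub, star_mul, hbsa.star_eq, (hesa n).star_eq, norm_sub_rev]
    exact (tendsto_congr this).mpr hb1

include ha0 han in
lemma herSet_isHereditary : IsHereditarySubalgebra (herSet a) := by
  have hesa : ∀ n, IsSelfAdjoint (cfcₙ (gK n) a) := fun n => eK_sa ha0 n
  refine ⟨herSet_isClosed, ⟨cfcₙ fK a, herSet_cK_mem ha0 han, cK_ne_zero ha0 han⟩,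
    ⟨by simpa using tendsto_const_nhds, by simpa using tendsto_const_nhds⟩,
    fun x hx y hy => ⟨?_, ?_⟩, fun c x hx => ⟨?_, ?_⟩, fun x hx y hy => ⟨?_, ?_⟩,
    fun x hx => ⟨?_, ?_⟩, fun d hd b hb0 hbd => herSet_hereditary ha0 hd hb0 hbd⟩
  · simpa only [mul_add] using hx.1.add hy.1
  · simpa only [add_mul] using hx.2.add hy.2
  · simpa only [mul_smul_comm] using hx.1.const_smul c
  · simpa only [smul_mul_assoc] using hx.2.const_smul c
  · have := hx.1.mul_const y
    simpa only [mul_assoc] using this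
  · have := hy.2.const_mul x
    simpa only [mul_assoc] using this
  · have := hx.2.star
    simpa only [star_mul, (hesa _).star_eq] using this
  · have := hx.1.star
    simpa only [star_mul, (hesa _).star_eq] using this

omit han in
include ha0 in
lemma herSet_mem_D {D : Set A} (hD : IsHereditarySubalgebra D) (haD : a ∈ D)
    {b : A} (hb : b ∈ herSet a) (hb0 : 0 ≤ b) (hbn : ‖b‖ = 1) : b ∈ D := by
  obtain ⟨hDc, -, -, -, hsmul, -, -, hher⟩ := hD
  set e : ℕ → A := fun n => cfcₙ (gK n) a with he_def
  have hesa : ∀ n, IsSelfAdjoint (e n) := fun n => eK_sa ha0 n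
  have h2aD : (2:ℝ) • a ∈ D := by
    have := hsmul ((2:ℝ):ℂ) a haD
    rwa [Complex.coe_smul] at this
  have hqD : ∀ n, e n * b * e n ∈ D := by
    intro n
    have hq0 : 0 ≤ e n * b * e n := by
      have := star_left_conjugate_nonneg hb0 (e n)
      rwa [(hesa n).star_eq] at this
    have hqle : e n * b * e n ≤ (2:ℝ) • a := by
      have h1 := CStarAlgebra.star_left_conjugate_le_norm_smul (a := e n) (b := b)
        (IsSelfAdjoint.of_nonneg hb0)
      rw [(hesa n).star_eq, hbn, one_smul] at h1
      exact h1.trans (eK_sq_le ha0 n)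
    exact hher _ h2aD _ hq0 hqle
  have htend : Tendsto (fun n => e n * b * e n) atTop (𝓝 b) := by
    rw [tendsto_iff_norm_sub_tendsto_zero]
    apply squeeze_zero (fun n => norm_nonneg _)
      (g := fun n => ‖b * e n - b‖ + ‖e n * b - b‖)
    · intro n
      calc ‖e n * b * e n - b‖
          = ‖e n * (b * e n - b) + (e n * b - b)‖ := by congr 1; noncomm_ring
        _ ≤ ‖e n * (b * e n - b)‖ + ‖e n * b - b‖ := norm_add_le _ _
        _ ≤ ‖e n‖ * ‖b * e n - b‖ + ‖e n * b - b‖ := by gcongr; exact norm_mul_le _ _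
        _ ≤ 1 * ‖b * e n - b‖ + ‖e n * b - b‖ := by
            gcongr
            exact eK_norm_le n
        _ = ‖b * e n - b‖ + ‖e n * b - b‖ := by ring
    · have hb2 : Tendsto (fun n => b * e n) atTop (𝓝 b) := hb.2
      have hb1 : Tendsto (fun n => e n * b) atTop (𝓝 b) := hb.1
      have h1 : Tendsto (fun n => ‖b * e n - b‖) atTop (𝓝 0) := by
        have := (hb2.sub (tendsto_const_nhds (x := b))).norm
        simpa using this
      have h2 : Tendsto (fun n => ‖e n * b - b‖) atTop (𝓝 0) := by
        have := (hb1.sub (tendsto_const_nhds (x := b))).norm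
        simpa using this
      simpa using h1.add h2
  exact hDc.mem_of_tendsto htend (Filter.Eventually.of_forall hqD)

end herSet

/-! ### Module estimates -/

section Module
variable {X : Type*} [NormedAddCommGroup X] [NormedSpace ℂ X]
variable (L R : A →ₗ[ℂ] X →ₗ[ℂ] X)
variable (hL : ∀ (a b : A) (x : X), L (a * b) x = L a (L b x))
variable (hR : ∀ (a b : A) (x : X), R (a * b) x = R b (R a x))
variable (hLR : ∀ (a b : A) (x : X), L a (R b x) = R b (L a x))
variable (hLnorm : ∀ (a : A) (x : X), ‖L a x‖ ≤ ‖a‖ * ‖x‖)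
variable (hRnorm : ∀ (a : A) (x : X), ‖R a x‖ ≤ ‖x‖ * ‖a‖)

include hL hR hLR hLnorm hRnorm in
lemma module_bound {a b : A} (ha0 : 0 ≤ a) (hbher : b ∈ herSet a) (hbn : ‖b‖ = 1) (x : X) :
    ‖L b (R b x)‖ ≤ 4 * ‖L a (R a x)‖ := by
  set e : ℕ → A := fun n => cfcₙ (gK n) a with he_def
  set k : ℕ → A := fun n => cfcₙ (hK n) a with hk_def
  set w : X := L a (R a x) with hw_def
  have claim2 : ∀ n, ‖L (b * e n) (R (e n * b) x)‖ ≤ 4 * ‖w‖ := by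
    intro n
    have e1 : R (e n * b) x = R b (R (k n) (R a x)) := by
      rw [hR (e n) b x]
      congr 1
      rw [show e n = a * k n from eK_eq_mul ha0 n, hR a (k n) x]
    have e2 : L (b * e n) (R (e n * b) x) = L b (L (k n) (L a (R b (R (k n) (R a x))))) := by
      rw [e1, hL b (e n) _]
      congr 1
      rw [show e n = k n * a from eK_eq_mul' ha0 n, hL (k n) a _]
    have e3 : L a (R b (R (k n) (R a x))) = R b (R (k n) w) := by
      rw [hLR a b _, hLR a (k n) _]
    rw [e2, e3]
    have hkn : ‖k n‖ ≤ 2 := kK_norm_le ha0 n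
    have n1 : ‖R (k n) w‖ ≤ ‖w‖ * 2 :=
      (hRnorm (k n) w).trans (mul_le_mul_of_nonneg_left hkn (norm_nonneg w))
    have n2 : ‖R b (R (k n) w)‖ ≤ ‖w‖ * 2 := by
      have := hRnorm b (R (k n) w)
      rw [hbn, mul_one] at this
      exact this.trans n1
    have n3 : ‖L (k n) (R b (R (k n) w))‖ ≤ 2 * (‖w‖ * 2) := by
      refine (hLnorm (k n) _).trans ?_
      have := mul_le_mul hkn n2 (norm_nonneg _) (by norm_num)
      linarith
    have n4 := hLnorm b (L (k n) (R b (R (k n) w)))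
    rw [hbn, one_mul] at n4
    calc ‖L b (L (k n) (R b (R (k n) w)))‖ ≤ ‖L (k n) (R b (R (k n) w))‖ := n4
      _ ≤ 2 * (‖w‖ * 2) := n3
      _ = 4 * ‖w‖ := by ring
  have claim1 : Tendsto (fun n => L (b * e n) (R (e n * b) x)) atTop (𝓝 (L b (R b x))) := by
    rw [tendsto_iff_norm_sub_tendsto_zero]
    apply squeeze_zero (fun n => norm_nonneg _)
      (g := fun n => ‖b * e n - b‖ * ‖x‖ + ‖x‖ * ‖e n * b - b‖)
    · intro n
      have hsplit : L (b * e n) (R (e n * b) x) - L b (R b x)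
          = L (b * e n - b) (R (e n * b) x) + L b (R (e n * b - b) x) := by
        simp only [map_sub, LinearMap.sub_apply]
        abel
      rw [hsplit]
      have t1 : ‖L (b * e n - b) (R (e n * b) x)‖ ≤ ‖b * e n - b‖ * ‖x‖ := by
        refine (hLnorm _ _).trans ?_
        have h1 : ‖R (e n * b) x‖ ≤ ‖x‖ * 1 := by
          refine (hRnorm _ _).trans ?_
          have : ‖e n * b‖ ≤ 1 := by
            calc ‖e n * b‖ ≤ ‖e n‖ * ‖b‖ := norm_mul_le _ _
              _ ≤ 1 * 1 := mul_le_mul (eK_norm_le n) (le_of_eq hbn) (norm_nonneg _) one_pos.le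
              _ = 1 := by ring
          exact mul_le_mul_of_nonneg_left this (norm_nonneg x)
        rw [mul_one] at h1
        exact mul_le_mul_of_nonneg_left h1 (norm_nonneg _)
      have t2 : ‖L b (R (e n * b - b) x)‖ ≤ ‖x‖ * ‖e n * b - b‖ := by
        have := hLnorm b (R (e n * b - b) x)
        rw [hbn, one_mul] at this
        exact this.trans (hRnorm _ _)
      calc ‖L (b * e n - b) (R (e n * b) x) + L b (R (e n * b - b) x)‖
          ≤ ‖L (b * e n - b) (R (e n * b) x)‖ + ‖L b (R (e n * b - b) x)‖ := norm_add_le _ _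
        _ ≤ ‖b * e n - b‖ * ‖x‖ + ‖x‖ * ‖e n * b - b‖ := add_le_add t1 t2
    · have hb2 : Tendsto (fun n => b * e n) atTop (𝓝 b) := hbher.2
      have hb1 : Tendsto (fun n => e n * b) atTop (𝓝 b) := hbher.1
      have h1 : Tendsto (fun n => ‖b * e n - b‖) atTop (𝓝 0) := by
        have := (hb2.sub (tendsto_const_nhds (x := b))).norm
        simpa using this
      have h2 : Tendsto (fun n => ‖e n * b - b‖) atTop (𝓝 0) := by
        have := (hb1.sub (tendsto_const_nhds (x := b))).norm
        simpa using this
      have := (h1.mul_const ‖x‖).add (h2.const_mul ‖x‖)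
      simpa [mul_comm] using this
  exact le_of_tendsto claim1.norm (Filter.Eventually.of_forall claim2)

end Module

/-! ### positive norm-one elements of hereditary subalgebras -/

lemma her_exists_pos {D : Set A} (hD : IsHereditarySubalgebra D) :
    ∃ u ∈ D, 0 ≤ u ∧ ‖u‖ = 1 := by
  obtain ⟨-, ⟨x, hxD, hx⟩, -, -, hsmul, hmul, hstar, -⟩ := hD
  have hsD : star x * x ∈ D := hmul _ (hstar x hxD) _ hxD
  have hs0 : 0 ≤ star x * x := star_mul_self_nonneg x
  have hxn : ‖x‖ ≠ 0 := norm_ne_zero_iff.mpr hx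
  have hsn : ‖star x * x‖ ≠ 0 := by
    rw [CStarRing.norm_star_mul_self]
    exact mul_ne_zero hxn hxn
  refine ⟨((‖star x * x‖⁻¹ : ℝ) : ℂ) • (star x * x), hsmul _ _ hsD, ?_, ?_⟩
  · rw [Complex.coe_smul]
    exact smul_nonneg (by positivity) hs0
  · rw [norm_smul, Complex.norm_real, Real.norm_eq_abs,
      abs_of_nonneg (by positivity), inv_mul_cancel₀ hsn]

end KishimotoAux

open KishimotoAux in
/-- For a normed `A`-bimodule `X` (left action `L`, right action `R`,
commuting, contractive), the set of elements satisfying Kishimoto's condition is a closed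
complex linear subspace of `X`. -/
theorem kishimoto_set_closed_subspace
    {A X : Type*} [NonUnitalCStarAlgebra A] [PartialOrder A] [StarOrderedRing A]
    [NormedAddCommGroup X] [NormedSpace ℂ X]
    (L R : A →ₗ[ℂ] X →ₗ[ℂ] X)
    (hL : ∀ (a b : A) (x : X), L (a * b) x = L a (L b x))
    (hR : ∀ (a b : A) (x : X), R (a * b) x = R b (R a x))
    (hLR : ∀ (a b : A) (x : X), L a (R b x) = R b (L a x))
    (hLnorm : ∀ (a : A) (x : X), ‖L a x‖ ≤ ‖a‖ * ‖x‖)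
    (hRnorm : ∀ (a : A) (x : X), ‖R a x‖ ≤ ‖x‖ * ‖a‖) :
    IsClosed {x : X | KishimotoCondition L R x} ∧
    (0 : X) ∈ {x : X | KishimotoCondition L R x} ∧
    (∀ x ∈ {x : X | KishimotoCondition L R x}, ∀ y ∈ {x : X | KishimotoCondition L R x},
      x + y ∈ {x : X | KishimotoCondition L R x}) ∧
    (∀ (c : ℂ), ∀ x ∈ {x : X | KishimotoCondition L R x},
      c • x ∈ {x : X | KishimotoCondition L R x}) := by
  refine ⟨?_, ?_, ?_, ?_⟩
  · -- closedness
    refine isClosed_of_closure_subset fun x hx => ?_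
    intro D hD ε hε
    obtain ⟨x', hx'S, hxx'⟩ := Metric.mem_closure_iff.mp hx (ε/2) (by linarith)
    rw [dist_eq_norm] at hxx'
    obtain ⟨a, haD, ha0, han, hax'⟩ := hx'S D hD (ε/2) (by linarith)
    refine ⟨a, haD, ha0, han, ?_⟩
    have hsplit : L a (R a x) = L a (R a (x - x')) + L a (R a x') := by
      simp only [map_sub]
      abel
    rw [hsplit]
    have h1 : ‖L a (R a (x - x'))‖ ≤ ‖x - x'‖ := by
      have := (hLnorm a (R a (x - x'))).trans
        (mul_le_mul_of_nonneg_left (hRnorm a (x - x')) (norm_nonneg a))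
      rw [han] at this
      simpa using this
    calc ‖L a (R a (x - x')) + L a (R a x')‖
        ≤ ‖L a (R a (x - x'))‖ + ‖L a (R a x')‖ := norm_add_le _ _
      _ < ε := by linarith
  · -- zero
    intro D hD ε hε
    obtain ⟨u, huD, hu0, hun⟩ := her_exists_pos hD
    refine ⟨u, huD, hu0, hun, ?_⟩
    simpa using hε
  · -- addition
    intro x hx y hy D hD ε hε
    obtain ⟨a, haD, ha0, han, hax⟩ := hx D hD (ε/8) (by linarith)
    obtain ⟨b, hbher, hb0, hbn, hby⟩ := hy (herSet a) (herSet_isHereditary ha0 han)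
      (ε/2) (by linarith)
    refine ⟨b, herSet_mem_D ha0 hD haD hbher hb0 hbn, hb0, hbn, ?_⟩
    have h1 : ‖L b (R b x)‖ ≤ 4 * ‖L a (R a x)‖ :=
      module_bound L R hL hR hLR hLnorm hRnorm ha0 hbher hbn x
    have hsplit : L b (R b (x + y)) = L b (R b x) + L b (R b y) := by
      simp only [map_add]
    rw [hsplit]
    calc ‖L b (R b x) + L b (R b y)‖ ≤ ‖L b (R b x)‖ + ‖L b (R b y)‖ := norm_add_le _ _
      _ < ε := by linarith
  · -- scalar multiplication
    intro c x hx D hD ε hε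
    have hc1 : (0:ℝ) < ‖c‖ + 1 := by positivity
    obtain ⟨a, haD, ha0, han, hax⟩ := hx D hD (ε/(‖c‖+1)) (by positivity)
    refine ⟨a, haD, ha0, han, ?_⟩
    have hsplit : L a (R a (c • x)) = c • L a (R a x) := by
      simp only [map_smul]
    rw [hsplit, norm_smul]
    calc ‖c‖ * ‖L a (R a x)‖ ≤ ‖c‖ * (ε/(‖c‖+1)) :=
        mul_le_mul_of_nonneg_left hax.le (norm_nonneg c)
      _ < ε := by
        rw [mul_div_assoc', div_lt_iff₀ hc1]
        nlinarith [norm_nonneg c]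
end

section
/- Let E : B → Ã ⊇ A be a generalised expectation for a C*-inclusion A ⊆ B. Suppose that for every positive b ∈ B with E(b) ≠ 0 there is a nonzero positive a ∈ A with a ≤ E(b) in Ã. Then E is supportive: for every positive b ∈ B with E(b) ≠ 0 there are δ > 0 and a hereditary C*-subalgebra D of A such that ‖x E(b) x‖ ≥ δ for every positive x ∈ D with ‖x‖ = 1. -/
/-- A square matrix over a C*-algebra is positive iff it is of the form `yᴴ * y`. -/
def MatrixIsPositive {B : Type*} [NonUnitalCStarAlgebra B] {n : ℕ}
    (M : Matrix (Fin n) (Fin n) B) : Prop :=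
  ∃ y : Matrix (Fin n) (Fin n) B, M = y.conjTranspose * y

/-- A linear map between C*-algebras is completely positive if all the induced entrywise
maps between matrix algebras preserve positivity. -/
def CompletelyPositive {B C : Type*} [NonUnitalCStarAlgebra B] [NonUnitalCStarAlgebra C]
    (E : B →ₗ[ℂ] C) : Prop :=
  ∀ (n : ℕ) (M : Matrix (Fin n) (Fin n) B),
    MatrixIsPositive M → MatrixIsPositive (M.map ⇑E)

open Filter Topology

section HerAux

variable {A : Type*} [NonUnitalCStarAlgebra A] [PartialOrder A] [StarOrderedRing A]

private lemma exists_sa_sq' {x : A} (hx : 0 ≤ x) : ∃ s : A, IsSelfAdjoint s ∧ s * s = x :=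
  ⟨CFC.sqrt x, (CFC.sqrt_nonneg (a := x)).isSelfAdjoint, CFC.sqrt_mul_sqrt_self x hx⟩

private lemma rsmul_nonneg' {r : ℝ} (hr : 0 ≤ r) {x : A} (hx : 0 ≤ x) : 0 ≤ r • x := by
  obtain ⟨s, hs, rfl⟩ := exists_sa_sq' hx
  have key : star (Real.sqrt r • s) * (Real.sqrt r • s) = r • (s * s) := by
    rw [star_smul, star_trivial, hs.star_eq, smul_mul_assoc, mul_smul_comm, smul_smul,
      Real.mul_self_sqrt hr]
  exact key ▸ star_mul_self_nonneg _

private lemma rsmul_le_rsmul' {r : ℝ} (hr : 0 ≤ r) {x y : A} (hxy : x ≤ y) : r • x ≤ r • y := by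
  have h := rsmul_nonneg' hr (sub_nonneg.mpr hxy)
  rw [smul_sub] at h
  exact sub_nonneg.mp h

private lemma quasi_nonneg' {b : A} (hb : 0 ≤ b) {t : ℝ} (ht : t ∈ quasispectrum ℝ b) : 0 ≤ t :=
  quasispectrum_nonneg_of_nonneg b hb t ht

private lemma quasi_le_norm' {b : A} (hb : 0 ≤ b) {t : ℝ} (ht : t ∈ quasispectrum ℝ b) :
    t ≤ ‖b‖ := by
  have h := norm_apply_le_norm_cfcₙ (id : ℝ → ℝ) b ht (by fun_prop) rfl hb.isSelfAdjoint
  rw [cfcₙ_id ℝ b] at h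
  exact (le_abs_self t).trans (by simpa using h)

private lemma sq_le_norm_smul'_s13 {b : A} (hb : 0 ≤ b) : b * b ≤ ‖b‖ • b := by
  have hsa : IsSelfAdjoint b := hb.isSelfAdjoint
  have h1 : b * b = cfcₙ (fun t : ℝ => t * t) b := by
    rw [cfcₙ_mul (fun t : ℝ => t) (fun t : ℝ => t) b (by fun_prop) rfl (by fun_prop) rfl,
      cfcₙ_id' ℝ b]
  have h2 : cfcₙ (fun t : ℝ => ‖b‖ * t) b = ‖b‖ • b := by
    rw [cfcₙ_const_mul ‖b‖ (fun t : ℝ => t) b (by fun_prop) rfl, cfcₙ_id' ℝ b]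
  rw [h1, ← h2]
  refine cfcₙ_mono (fun t ht => ?_) (by fun_prop) (by fun_prop) (by simp) (by simp)
  have ht0 := quasi_nonneg' hb ht
  have htn := quasi_le_norm' hb ht
  nlinarith

/-- The hereditary subalgebra generated by `k`. -/
private def herSet (k : A) : Set A := closure {z : A | ∃ c : A, z = k * c * k}

private lemma herSet_isClosed (k : A) : IsClosed (herSet k) := isClosed_closure

private lemma mem_herSet_base (k c : A) : k * c * k ∈ herSet k := subset_closure ⟨c, rfl⟩

private lemma closure_binop' {s : Set A} {f : A → A → A}
    (hf : Continuous fun p : A × A => f p.1 p.2)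
    (hs : ∀ x ∈ s, ∀ y ∈ s, f x y ∈ s) :
    ∀ x ∈ closure s, ∀ y ∈ closure s, f x y ∈ closure s := by
  intro x hx y hy
  obtain ⟨u, hu, hul⟩ := mem_closure_iff_seq_limit.mp hx
  obtain ⟨v, hv, hvl⟩ := mem_closure_iff_seq_limit.mp hy
  have ht : Tendsto (fun n => f (u n) (v n)) atTop (nhds (f x y)) :=
    (hf.tendsto (x, y)).comp (hul.prodMk_nhds hvl)
  exact mem_closure_of_tendsto ht (Eventually.of_forall fun n => hs _ (hu n) _ (hv n))

private lemma herSet_mul_right' {k m : A} {r : ℝ} (hkm : k * m = r • k) {x : A}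
    (hx : x ∈ herSet k) : x * m = r • x := by
  have hclosed : IsClosed {z : A | z * m = r • z} :=
    isClosed_eq (by fun_prop) (by fun_prop)
  refine closure_minimal ?_ hclosed hx
  rintro z ⟨c, rfl⟩
  show k * c * k * m = r • (k * c * k)
  rw [mul_assoc (k * c) k m, hkm, mul_smul_comm]

end HerAux

section Hereditary

variable {A : Type*} [NonUnitalCStarAlgebra A] [PartialOrder A] [StarOrderedRing A]

private noncomputable def φfun (n : ℕ) (t : ℝ) : ℝ :=
  ((n : ℝ) + 1) ^ 3 * t ^ 3 / (1 + ((n : ℝ) + 1) ^ 3 * t ^ 3)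

private noncomputable def γfun (n : ℕ) (t : ℝ) : ℝ :=
  ((n : ℝ) + 1) ^ 3 * t / (1 + ((n : ℝ) + 1) ^ 3 * t ^ 3)

private lemma denom_pos (n : ℕ) {t : ℝ} (ht : 0 ≤ t) :
    0 < 1 + ((n : ℝ) + 1) ^ 3 * t ^ 3 := by positivity

private lemma φfun_zero (n : ℕ) : φfun n 0 = 0 := by simp [φfun]

private lemma γfun_zero (n : ℕ) : γfun n 0 = 0 := by simp [γfun]

private lemma φfun_nonneg (n : ℕ) {t : ℝ} (ht : 0 ≤ t) : 0 ≤ φfun n t :=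
  div_nonneg (by positivity) (denom_pos n ht).le

private lemma φfun_le_one (n : ℕ) {t : ℝ} (ht : 0 ≤ t) : φfun n t ≤ 1 := by
  rw [φfun, div_le_one (denom_pos n ht)]
  linarith [denom_pos n ht]

private lemma φfun_eq (n : ℕ) : φfun n = fun t => t * γfun n t * t := by
  funext t
  simp only [φfun, γfun]
  ring

private lemma φfun_near (n : ℕ) {t : ℝ} (ht : 0 ≤ t) :
    |φfun n t * t - t| ≤ 1 / ((n : ℝ) + 1) := by
  have hc : (0 : ℝ) < (n : ℝ) + 1 := by positivity
  have hd := denom_pos n ht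
  have heq : φfun n t * t - t = -(t / (1 + ((n : ℝ) + 1) ^ 3 * t ^ 3)) := by
    rw [φfun]
    field_simp
    ring
  rw [heq, abs_neg, abs_of_nonneg (div_nonneg ht hd.le), div_le_div_iff₀ hd hc]
  nlinarith [sq_nonneg (((n : ℝ) + 1) * t - 1), sq_nonneg (((n : ℝ) + 1) * t),
    mul_nonneg (mul_nonneg ht hc.le) (sq_nonneg (((n : ℝ) + 1) * t - 1))]

/-- Approximate unit for the hereditary subalgebra generated by `k`. -/
private noncomputable def eAp (k : A) (n : ℕ) : A := cfcₙ (φfun n) k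

private lemma eAp_sa (k : A) (n : ℕ) : IsSelfAdjoint (eAp k n) := cfcₙ_predicate (φfun n) k

variable {k : A}

private lemma φfun_contOn (hk : 0 ≤ k) (n : ℕ) :
    ContinuousOn (φfun n) (quasispectrum ℝ k) := by
  apply ContinuousOn.div (by fun_prop) (by fun_prop)
  exact fun t ht => (denom_pos n (quasi_nonneg' hk ht)).ne'

private lemma γfun_contOn (hk : 0 ≤ k) (n : ℕ) :
    ContinuousOn (γfun n) (quasispectrum ℝ k) := by
  apply ContinuousOn.div (by fun_prop) (by fun_prop)
  exact fun t ht => (denom_pos n (quasi_nonneg' hk ht)).ne'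

private lemma eAp_norm (hk : 0 ≤ k) (n : ℕ) : ‖eAp k n‖ ≤ 1 := by
  refine norm_cfcₙ_le fun t ht => ?_
  rw [Real.norm_eq_abs, abs_of_nonneg (φfun_nonneg n (quasi_nonneg' hk ht))]
  exact φfun_le_one n (quasi_nonneg' hk ht)

private lemma eAp_mem (hk : 0 ≤ k) (n : ℕ) : ∃ c : A, eAp k n = k * c * k := by
  refine ⟨cfcₙ (γfun n) k, ?_⟩
  have hic : ContinuousOn (fun t : ℝ => t * γfun n t) (quasispectrum ℝ k) :=
    continuousOn_id.mul (γfun_contOn hk n)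
  show cfcₙ (φfun n) k = _
  rw [φfun_eq n,
    cfcₙ_mul (fun t : ℝ => t * γfun n t) (fun t : ℝ => t) k hic (by simp [γfun_zero])
      (by fun_prop) rfl,
    cfcₙ_mul (fun t : ℝ => t) (γfun n) k (by fun_prop) rfl (γfun_contOn hk n) (γfun_zero n),
    cfcₙ_id' ℝ k]

private lemma eAp_k (hk : 0 ≤ k) (n : ℕ) : ‖eAp k n * k - k‖ ≤ 1 / ((n : ℝ) + 1) := by
  have hsub : eAp k n * k - k = cfcₙ (fun t : ℝ => φfun n t * t - t) k := by
    rw [cfcₙ_sub (fun t : ℝ => φfun n t * t) (fun t : ℝ => t) k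
        ((φfun_contOn hk n).mul continuousOn_id) (by simp [φfun_zero]) (by fun_prop) rfl,
      cfcₙ_mul (φfun n) (fun t : ℝ => t) k (φfun_contOn hk n) (φfun_zero n) (by fun_prop) rfl,
      cfcₙ_id' ℝ k]
    rfl
  rw [hsub]
  exact norm_cfcₙ_le fun t ht => by
    rw [Real.norm_eq_abs]; exact φfun_near n (quasi_nonneg' hk ht)

private lemma eAp_tendsto (hk : 0 ≤ k) {z : A} (hz : z ∈ herSet k) :
    Tendsto (fun n => ‖z - eAp k n * z‖) atTop (nhds 0) := by
  rw [Metric.tendsto_atTop]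
  intro ζ hζ
  obtain ⟨w, hw, hwz⟩ := Metric.mem_closure_iff.mp hz (ζ / 3) (by positivity)
  obtain ⟨c, rfl⟩ := hw
  rw [dist_eq_norm] at hwz
  obtain ⟨N, hN⟩ := exists_nat_gt (3 * ‖c * k‖ / ζ)
  refine ⟨N, fun n hn => ?_⟩
  have hn1 : 3 * ‖c * k‖ / ζ < (n : ℝ) + 1 := by
    calc 3 * ‖c * k‖ / ζ < (N : ℝ) := hN
      _ ≤ (n : ℝ) := Nat.cast_le.mpr hn
      _ ≤ (n : ℝ) + 1 := by linarith
  have hN' : ‖c * k‖ * (1 / ((n : ℝ) + 1)) < ζ / 3 := by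
    rw [mul_one_div, div_lt_iff₀ (by positivity : (0 : ℝ) < (n : ℝ) + 1)]
    rw [div_lt_iff₀ hζ] at hn1
    linarith
  have hterm2 : ‖k * c * k - eAp k n * (k * c * k)‖ ≤ ζ / 3 := by
    have h : k * c * k - eAp k n * (k * c * k) = -((eAp k n * k - k) * (c * k)) := by
      noncomm_ring
    rw [h, norm_neg]
    calc ‖(eAp k n * k - k) * (c * k)‖ ≤ ‖eAp k n * k - k‖ * ‖c * k‖ := norm_mul_le _ _
      _ ≤ (1 / ((n : ℝ) + 1)) * ‖c * k‖ :=
          mul_le_mul_of_nonneg_right (eAp_k hk n) (norm_nonneg _)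
      _ = ‖c * k‖ * (1 / ((n : ℝ) + 1)) := by ring
      _ ≤ ζ / 3 := hN'.le
  have hterm3 : ‖eAp k n * (k * c * k) - eAp k n * z‖ ≤ ζ / 3 := by
    have h : eAp k n * (k * c * k) - eAp k n * z = eAp k n * (k * c * k - z) := by
      noncomm_ring
    rw [h]
    calc ‖eAp k n * (k * c * k - z)‖ ≤ ‖eAp k n‖ * ‖k * c * k - z‖ := norm_mul_le _ _
      _ ≤ 1 * ‖k * c * k - z‖ := mul_le_mul_of_nonneg_right (eAp_norm hk n) (norm_nonneg _)
      _ = ‖k * c * k - z‖ := one_mul _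
      _ ≤ ζ / 3 := by rw [norm_sub_rev]; exact hwz.le
  rw [Real.dist_eq, sub_zero, abs_of_nonneg (norm_nonneg _)]
  calc ‖z - eAp k n * z‖
      = ‖(z - k * c * k) + ((k * c * k - eAp k n * (k * c * k)) +
          (eAp k n * (k * c * k) - eAp k n * z))‖ := by
        congr 1
        abel
    _ ≤ ‖z - k * c * k‖ + ‖(k * c * k - eAp k n * (k * c * k)) +
          (eAp k n * (k * c * k) - eAp k n * z)‖ := norm_add_le _ _
    _ ≤ ‖z - k * c * k‖ + (‖k * c * k - eAp k n * (k * c * k)‖ +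
          ‖eAp k n * (k * c * k) - eAp k n * z‖) := by
        gcongr
        exact norm_add_le _ _
    _ < ζ / 3 + (ζ / 3 + ζ / 3) :=
        add_lt_add_of_lt_of_le hwz (add_le_add hterm2 hterm3)
    _ = ζ := by ring

private lemma herSet_hereditary (hk : 0 ≤ k) {x b : A} (hx : x ∈ herSet k)
    (hb : 0 ≤ b) (hbx : b ≤ x) : b ∈ herSet k := by
  -- the conjugation maps by the approximate units
  set P : ℕ → A → A := fun n c => c - eAp k n * c - c * eAp k n + eAp k n * c * eAp k n with hP
  have hPconj : ∀ (n : ℕ) (s : A), IsSelfAdjoint s →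
      star (s - s * eAp k n) * (s - s * eAp k n) = P n (s * s) := by
    intro n s hs
    simp only [hP, star_sub, star_mul, hs.star_eq, (eAp_sa k n).star_eq]
    noncomm_ring
  have hPnonneg : ∀ (n : ℕ) (c : A), 0 ≤ c → 0 ≤ P n c := by
    intro n c hc
    obtain ⟨s, hs, rfl⟩ := exists_sa_sq' hc
    exact hPconj n s hs ▸ star_mul_self_nonneg _
  have hPmono : ∀ (n : ℕ) {c d : A}, c ≤ d → P n c ≤ P n d := by
    intro n c d hcd
    have h0 : 0 ≤ P n (d - c) := hPnonneg n _ (sub_nonneg.mpr hcd)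
    have heq : P n (d - c) = P n d - P n c := by simp only [hP]; noncomm_ring
    rw [heq] at h0
    exact sub_nonneg.mp h0
  have hPsmul : ∀ (n : ℕ) (r : ℝ) (c : A), P n (r • c) = r • P n c := by
    intro n r c
    simp only [hP, smul_sub, smul_add, mul_smul_comm, smul_mul_assoc]
  have hPx0 : Tendsto (fun n => ‖P n x‖) atTop (nhds 0) := by
    have hxe := eAp_tendsto hk hx
    have hbound : ∀ n, ‖P n x‖ ≤ 2 * ‖x - eAp k n * x‖ := by
      intro n
      have heq : P n x = (x - eAp k n * x) - (x - eAp k n * x) * eAp k n := by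
        simp only [hP]; noncomm_ring
      rw [heq]
      calc ‖(x - eAp k n * x) - (x - eAp k n * x) * eAp k n‖
          ≤ ‖x - eAp k n * x‖ + ‖(x - eAp k n * x) * eAp k n‖ := norm_sub_le _ _
        _ ≤ ‖x - eAp k n * x‖ + ‖x - eAp k n * x‖ * ‖eAp k n‖ := by
            gcongr
            exact norm_mul_le _ _
        _ ≤ ‖x - eAp k n * x‖ + ‖x - eAp k n * x‖ * 1 :=
            add_le_add le_rfl (mul_le_mul_of_nonneg_left (eAp_norm hk n) (norm_nonneg _))
        _ = 2 * ‖x - eAp k n * x‖ := by ring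
    exact squeeze_zero (fun n => norm_nonneg _) hbound (by simpa using hxe.const_mul 2)
  have hbsa : IsSelfAdjoint b := hb.isSelfAdjoint
  have hbb : (0 : A) ≤ b * b := by
    have h := star_mul_self_nonneg b
    rwa [hbsa.star_eq] at h
  have hstar : ∀ n, star (b - b * eAp k n) = b - eAp k n * b := by
    intro n
    rw [star_sub, star_mul, hbsa.star_eq, (eAp_sa k n).star_eq]
  have hb2 : ∀ n, ‖b - eAp k n * b‖ ^ 2 ≤ ‖b‖ * ‖P n x‖ := by
    intro n
    have h1 : star (b - b * eAp k n) * (b - b * eAp k n) = P n (b * b) := hPconj n b hbsa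
    have h2 : ‖b - eAp k n * b‖ ^ 2 = ‖P n (b * b)‖ := by
      rw [← h1, CStarRing.norm_star_mul_self, ← hstar n, norm_star, sq]
    have h3 : 0 ≤ P n (b * b) := hPnonneg n _ hbb
    have h4 : P n (b * b) ≤ ‖b‖ • P n x := by
      calc P n (b * b) ≤ P n (‖b‖ • b) := hPmono n (sq_le_norm_smul'_s13 hb)
        _ = ‖b‖ • P n b := hPsmul n ‖b‖ b
        _ ≤ ‖b‖ • P n x := rsmul_le_rsmul' (norm_nonneg b) (hPmono n hbx)
    have h6 : ‖P n (b * b)‖ ≤ ‖‖b‖ • P n x‖ :=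
      CStarAlgebra.norm_le_norm_of_nonneg_of_le h3 h4
    rw [h2]
    calc ‖P n (b * b)‖ ≤ ‖‖b‖ • P n x‖ := h6
      _ = ‖b‖ * ‖P n x‖ := by
          rw [norm_smul, Real.norm_eq_abs, abs_of_nonneg (norm_nonneg b)]
  have hbe : Tendsto (fun n => ‖b - eAp k n * b‖) atTop (nhds 0) := by
    have hsq : Tendsto (fun n => ‖b - eAp k n * b‖ ^ 2) atTop (nhds 0) :=
      squeeze_zero (fun n => sq_nonneg _) hb2 (by simpa using hPx0.const_mul ‖b‖)
    have h := hsq.sqrt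
    simpa only [Real.sqrt_sq (norm_nonneg _), Real.sqrt_zero] using h
  have hbe' : Tendsto (fun n => eAp k n * b * eAp k n) atTop (nhds b) := by
    rw [tendsto_iff_norm_sub_tendsto_zero]
    refine squeeze_zero (fun n => norm_nonneg _) (g := fun n => 2 * ‖b - eAp k n * b‖) ?_
      (by simpa using hbe.const_mul 2)
    intro n
    rw [norm_sub_rev]
    have hsplit : b - eAp k n * b * eAp k n =
        (b - eAp k n * b) + eAp k n * (b - b * eAp k n) := by noncomm_ring
    calc ‖b - eAp k n * b * eAp k n‖
        ≤ ‖b - eAp k n * b‖ + ‖eAp k n * (b - b * eAp k n)‖ := by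
          rw [hsplit]; exact norm_add_le _ _
      _ ≤ ‖b - eAp k n * b‖ + ‖eAp k n‖ * ‖b - b * eAp k n‖ := by
          gcongr
          exact norm_mul_le _ _
      _ ≤ ‖b - eAp k n * b‖ + 1 * ‖b - b * eAp k n‖ :=
          add_le_add le_rfl (mul_le_mul_of_nonneg_right (eAp_norm hk n) (norm_nonneg _))
      _ = ‖b - eAp k n * b‖ + ‖star (b - eAp k n * b)‖ := by
          rw [one_mul, ← hstar n, star_star]
      _ = 2 * ‖b - eAp k n * b‖ := by rw [norm_star]; ring
  have hmem : ∀ n, eAp k n * b * eAp k n ∈ {z : A | ∃ c : A, z = k * c * k} := by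
    intro n
    obtain ⟨c, hc⟩ := eAp_mem hk n
    exact ⟨c * k * b * k * c, by rw [hc]; noncomm_ring⟩
  exact (herSet_isClosed k).mem_of_tendsto hbe'
    (Eventually.of_forall fun n => subset_closure (hmem n))

end Hereditary

/-- Let `E : B → Ã ⊇ A` be a generalised expectation (realised by
isometric star-homomorphism embeddings `ι : A → B`, `κ : A → Ã`).  If for every positive
`b ∈ B` with `E(b) ≠ 0` there is a nonzero positive `a ∈ A` with `a ≤ E(b)` in `Ã`, then
`E` is supportive. -/
theorem dominating_expectation_supportive
    {A B C : Type*} [NonUnitalCStarAlgebra A] [PartialOrder A] [StarOrderedRing A]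
    [NonUnitalCStarAlgebra B] [PartialOrder B] [StarOrderedRing B]
    [NonUnitalCStarAlgebra C] [PartialOrder C] [StarOrderedRing C] [Nontrivial A]
    (ι : A →⋆ₙₐ[ℂ] B) (κ : A →⋆ₙₐ[ℂ] C) (hι : Isometry ι) (hκ : Isometry κ)
    (E : B →ₗ[ℂ] C)
    (hcp : CompletelyPositive E)
    (hcontr : ∀ b : B, ‖E b‖ ≤ ‖b‖)
    (hres : ∀ a : A, E (ι a) = κ a)
    (hdom : ∀ b : B, 0 ≤ b → E b ≠ 0 → ∃ a : A, a ≠ 0 ∧ 0 ≤ a ∧ κ a ≤ E b) :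
    ∀ b : B, 0 ≤ b → E b ≠ 0 →
      ∃ δ : ℝ, 0 < δ ∧ ∃ D : Set A, IsHereditarySubalgebra D ∧
        ∀ x ∈ D, 0 ≤ x → ‖x‖ = 1 → δ ≤ ‖κ x * E b * κ x‖ := by
  intro b hb hEb
  obtain ⟨a, ha0, hapos, hale⟩ := hdom b hb hEb
  have hasa : IsSelfAdjoint a := hapos.isSelfAdjoint
  have hna : 0 < ‖a‖ := norm_pos_iff.mpr ha0
  set ε : ℝ := ‖a‖ / 2 with hε
  have hεpos : 0 < ε := by positivity
  have hquasi : ∀ t ∈ quasispectrum ℝ a, (0 : ℝ) ≤ t := fun t ht => quasi_nonneg' hapos ht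
  set k : A := cfcₙ (fun t : ℝ => max (t - ε) 0) a with hkdef
  set m : A := cfcₙ (fun t : ℝ => min t ε) a with hmdef
  have hcont1 : ContinuousOn (fun t : ℝ => max (t - ε) 0) (quasispectrum ℝ a) := by fun_prop
  have hz1 : max ((0 : ℝ) - ε) 0 = 0 := by
    rw [zero_sub, max_eq_right (by linarith)]
  have hcont2 : ContinuousOn (fun t : ℝ => min t ε) (quasispectrum ℝ a) := by fun_prop
  have hz2 : min (0 : ℝ) ε = 0 := min_eq_left hεpos.le
  have hk : 0 ≤ k := cfcₙ_nonneg fun t _ => le_max_right _ _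
  have hksa : IsSelfAdjoint k := hk.isSelfAdjoint
  have hsum : m + k = a := by
    rw [hmdef, hkdef, ← cfcₙ_add (fun t : ℝ => min t ε) (fun t : ℝ => max (t - ε) 0) a
      hcont2 hz2 hcont1 hz1]
    have heq : cfcₙ (fun t : ℝ => min t ε + max (t - ε) 0) a = cfcₙ (fun t : ℝ => t) a := by
      refine cfcₙ_congr fun t _ => ?_
      show min t ε + max (t - ε) 0 = t
      rcases le_total t ε with h | h
      · rw [min_eq_left h, max_eq_right (by linarith)]
        ring
      · rw [min_eq_right h, max_eq_left (by linarith)]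
        ring
    rw [heq, cfcₙ_id' ℝ a]
  have hkm : k * m = ε • k := by
    rw [hkdef, hmdef, ← cfcₙ_mul (fun t : ℝ => max (t - ε) 0) (fun t : ℝ => min t ε) a
      hcont1 hz1 hcont2 hz2]
    have heq : cfcₙ (fun t : ℝ => max (t - ε) 0 * min t ε) a =
        cfcₙ (fun t : ℝ => ε * max (t - ε) 0) a := by
      refine cfcₙ_congr fun t _ => ?_
      show max (t - ε) 0 * min t ε = ε * max (t - ε) 0
      rcases le_total t ε with h | h
      · rw [max_eq_right (by linarith)]
        ring
      · rw [max_eq_left (by linarith), min_eq_right h]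
        ring
    rw [heq, cfcₙ_const_mul ε (fun t : ℝ => max (t - ε) 0) a hcont1 hz1]
  have hknz : k ≠ 0 := by
    intro h
    have hma : a = m := by rw [← hsum, h, add_zero]
    have hle : ‖a‖ ≤ ε := by
      rw [hma, hmdef]
      refine norm_cfcₙ_le fun t ht => ?_
      have ht0 := hquasi t ht
      rw [Real.norm_eq_abs, abs_of_nonneg (le_min ht0 hεpos.le)]
      exact min_le_right _ _
    rw [hε] at hle
    linarith
  refine ⟨ε, hεpos, herSet k, ⟨herSet_isClosed k, ⟨k * k * k, mem_herSet_base k k, ?_⟩,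
    ?_, ?_, ?_, ?_, ?_, fun z hz w hw hwz => herSet_hereditary hk hz hw hwz⟩, ?_⟩
  · -- k * k * k ≠ 0
    intro h
    have h4 : k * k * (k * k) = 0 := by
      have : k * k * (k * k) = k * k * k * k := by noncomm_ring
      rw [this, h, zero_mul]
    have hk2sa : star (k * k) = k * k := by rw [star_mul, hksa.star_eq]
    have h5 : ‖k * k‖ * ‖k * k‖ = 0 := by
      rw [← CStarRing.norm_star_mul_self, hk2sa, h4, norm_zero]
    have h6 : k * k = 0 := by
      rcases mul_self_eq_zero.mp h5 with h6
      exact norm_eq_zero.mp h6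
    have h7 : ‖k‖ * ‖k‖ = 0 := by
      rw [← CStarRing.norm_star_mul_self, hksa.star_eq, h6, norm_zero]
    exact hknz (norm_eq_zero.mp (mul_self_eq_zero.mp h7))
  · -- 0 ∈
    exact subset_closure ⟨0, by rw [mul_zero, zero_mul]⟩
  · -- add
    exact closure_binop' continuous_add (fun z hz w hw => by
      obtain ⟨c, rfl⟩ := hz
      obtain ⟨d, rfl⟩ := hw
      exact ⟨c + d, by noncomm_ring⟩)
  · -- ℂ-smul
    intro c z hz
    have hmaps : Set.MapsTo (fun w : A => c • w) {z : A | ∃ d : A, z = k * d * k}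
        {z : A | ∃ d : A, z = k * d * k} := by
      rintro w ⟨d, rfl⟩
      exact ⟨c • d, by rw [mul_smul_comm, smul_mul_assoc]⟩
    exact hmaps.closure (continuous_const_smul c) hz
  · -- mul
    exact closure_binop' continuous_mul (fun z hz w hw => by
      obtain ⟨c, rfl⟩ := hz
      obtain ⟨d, rfl⟩ := hw
      exact ⟨c * (k * k) * d, by noncomm_ring⟩)
  · -- star
    intro z hz
    have hmaps : Set.MapsTo (star : A → A) {z : A | ∃ d : A, z = k * d * k}
        {z : A | ∃ d : A, z = k * d * k} := by
      rintro w ⟨d, rfl⟩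
      refine ⟨star d, ?_⟩
      rw [star_mul, star_mul, hksa.star_eq, mul_assoc]
    exact hmaps.closure continuous_star hz
  · -- the estimate
    intro x hx hxpos hxnorm
    have hxsa : IsSelfAdjoint x := hxpos.isSelfAdjoint
    have hxm : x * m = ε • x := herSet_mul_right' hkm hx
    have hxax : x * a * x = ε • (x * x) + x * k * x := by
      have h1 : x * (m + k) * x = x * m * x + x * k * x := by noncomm_ring
      rw [← hsum, h1, hxm, smul_mul_assoc]
    have hxkx : (0 : A) ≤ x * k * x := by
      have h := star_left_conjugate_nonneg hk x
      rwa [hxsa.star_eq] at h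
    have hxx : (0 : A) ≤ x * x := by
      have h := star_mul_self_nonneg x
      rwa [hxsa.star_eq] at h
    have hle : ε • (x * x) ≤ x * a * x := by
      rw [hxax]
      exact le_add_of_nonneg_right hxkx
    have hεxx : (0 : A) ≤ ε • (x * x) := rsmul_nonneg' hεpos.le hxx
    have hnorm1 : ‖ε • (x * x)‖ = ε := by
      rw [norm_smul, Real.norm_eq_abs, abs_of_nonneg hεpos.le]
      have : ‖x * x‖ = ‖x‖ * ‖x‖ := by
        rw [← CStarRing.norm_star_mul_self, hxsa.star_eq]
      rw [this, hxnorm, one_mul, mul_one]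
    have h2 : ε ≤ ‖x * a * x‖ := by
      rw [← hnorm1]
      exact CStarAlgebra.norm_le_norm_of_nonneg_of_le hεxx hle
    have hxax_nonneg : (0 : A) ≤ x * a * x := by
      have h := star_left_conjugate_nonneg hapos x
      rwa [hxsa.star_eq] at h
    have hκnonneg : (0 : C) ≤ κ (x * a * x) := by
      obtain ⟨s, hssa, hs⟩ := exists_sa_sq' hxax_nonneg
      rw [← hs, map_mul]
      have h := star_mul_self_nonneg (κ s)
      rwa [← map_star κ s, hssa.star_eq] at h
    have hκle : κ (x * a * x) ≤ κ x * E b * κ x := by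
      have h := star_left_conjugate_le_conjugate hale (κ x)
      rw [← map_star κ x, hxsa.star_eq] at h
      calc κ (x * a * x) = κ x * κ a * κ x := by rw [map_mul, map_mul]
        _ ≤ κ x * E b * κ x := h
    have h3 : ‖κ (x * a * x)‖ ≤ ‖κ x * E b * κ x‖ :=
      CStarAlgebra.norm_le_norm_of_nonneg_of_le hκnonneg hκle
    have h4 : ‖κ (x * a * x)‖ = ‖x * a * x‖ := hκ.norm_map_of_map_zero (map_zero κ) _
    rw [h4] at h3
    exact h2.trans h3
end

section
/- Let A ⊆ B be a C*-inclusion and E : B → A a conditional expectation, i.e., a completely positive contractive linear map with values in A that restricts to the identity on A. Then E is supportive: for every positive b ∈ B with E(b) ≠ 0 there are δ > 0 and a hereditary C*-subalgebra D of A such that ‖x E(b) x‖ ≥ δ for every positive x ∈ D with ‖x‖ = 1. -/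
section Aux

variable {B : Type*} [NonUnitalCStarAlgebra B]

lemma RealSmulMemAux (A : Set B) (hsmul : ∀ (c : ℂ), ∀ x ∈ A, c • x ∈ A)
    (r : ℝ) (x : B) (hx : x ∈ A) : r • x ∈ A := by
  have : (r : ℂ) • x = r • x := by
    rw [show ((r : ℂ)) = algebraMap ℝ ℂ r from rfl, algebraMap_smul]
  exact this ▸ hsmul r x hx

set_option maxHeartbeats 1000000 in
lemma CfcnHomMemAux {A : Set B}
    (hclosed : IsClosed A) (hadd : ∀ x ∈ A, ∀ y ∈ A, x + y ∈ A)
    (hsmul : ∀ (c : ℂ), ∀ x ∈ A, c • x ∈ A) (hmul : ∀ x ∈ A, ∀ y ∈ A, x * y ∈ A)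
    {a : B} (haA : a ∈ A) (hsa : IsSelfAdjoint a)
    (F : ContinuousMapZero (quasispectrum ℝ a) ℝ) :
    cfcₙHom (R := ℝ) hsa F ∈ A := by
  have h0 : ((0 : quasispectrum ℝ a) : ℝ) = 0 := rfl
  have hid : cfcₙHom (R := ℝ) hsa (ContinuousMapZero.id (quasispectrum ℝ a)) = a := cfcₙHom_id hsa
  induction F using ContinuousMapZero.induction_on_of_compact with
  | zero => rw [map_zero]; simpa using hsmul 0 a haA
  | id => rw [hid]; exact haA
  | star_id =>
      have : star (ContinuousMapZero.id (quasispectrum ℝ a)) = ContinuousMapZero.id (quasispectrum ℝ a) := by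
        ext x; exact star_trivial _
      rw [this, hid]; exact haA
  | add f g hf hg => rw [map_add]; exact hadd _ hf _ hg
  | mul f g hf hg => rw [map_mul]; exact hmul _ hf _ hg
  | smul r f hf => rw [map_smul]; exact RealSmulMemAux A hsmul r _ hf
  | frequently f hf =>
      have hcl : IsClosed {G : ContinuousMapZero (quasispectrum ℝ a) ℝ |
          cfcₙHom (R := ℝ) hsa G ∈ A} :=
        hclosed.preimage (cfcₙHom_continuous hsa)
      exact hcl.closure_subset (mem_closure_iff_frequently.mpr hf)

set_option maxHeartbeats 1000000 in
lemma CfcnMemAux {A : Set B}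
    (hclosed : IsClosed A) (hadd : ∀ x ∈ A, ∀ y ∈ A, x + y ∈ A)
    (hsmul : ∀ (c : ℂ), ∀ x ∈ A, c • x ∈ A) (hmul : ∀ x ∈ A, ∀ y ∈ A, x * y ∈ A)
    {a : B} (haA : a ∈ A) (hsa : IsSelfAdjoint a) (f : ℝ → ℝ)
    (hf : ContinuousOn f (quasispectrum ℝ a)) (hf0 : f 0 = 0) :
    cfcₙ f a ∈ A := by
  rw [cfcₙ_apply f a hf hf0 hsa]
  exact CfcnHomMemAux hclosed hadd hsmul hmul haA hsa _

variable [PartialOrder B] [StarOrderedRing B]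

lemma NormMemQuasispectrumAux {a : B} (ha : 0 ≤ a) (ha0 : a ≠ 0) :
    ‖a‖ ∈ quasispectrum ℝ a := by
  have hsa : IsSelfAdjoint a := .of_nonneg ha
  have hq : quasispectrum ℝ a = spectrum ℝ (a : Unitization ℂ B) :=
    Unitization.quasispectrum_eq_spectrum_inr' ℝ ℂ a
  have hsa' : IsSelfAdjoint (a : Unitization ℂ B) := hsa.inr ℂ
  have := CStarAlgebra.norm_or_neg_norm_mem_spectrum (a := (a : Unitization ℂ B)) hsa'
  rw [Unitization.norm_inr] at this
  rcases this with h | h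
  · rw [hq]; exact h
  · exfalso
    have hmem : -‖a‖ ∈ quasispectrum ℝ a := hq ▸ h
    have := quasispectrum_nonneg_of_nonneg a ha _ hmem
    have hpos : 0 < ‖a‖ := norm_pos_iff.mpr ha0
    linarith

lemma AlgIdAux (k s y d b' : B) (hs : s * s = b') (hy : y * y = d - b')
    (hdk : d * k = d) (hkd : k * d = d) :
    (s - k * s) * (s - s * k) + (y - k * y) * (y - y * k) = 0 := by
  have key : (s - k * s) * (s - s * k) + (y - k * y) * (y - y * k)
      = (s * s + y * y) - (s * s + y * y) * k - k * (s * s + y * y)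
        + k * ((s * s + y * y) * k) := by noncomm_ring
  rw [key, hs, hy, show b' + (d - b') = d by abel, hdk, hkd]
  abel

end Aux



/-- A hereditary C*-subalgebra `D` of the subalgebra `A ⊆ B`: a nonzero closed
*-subalgebra of `A` such that `a ∈ D`, `b ∈ A`, `0 ≤ b ≤ a` imply `b ∈ D`. -/
def IsHereditarySubalgebraIn {B : Type*} [NonUnitalCStarAlgebra B] [PartialOrder B]
    [StarOrderedRing B] (A D : Set B) : Prop :=
  D ⊆ A ∧ IsClosed D ∧ (∃ x ∈ D, x ≠ 0) ∧ (0 : B) ∈ D ∧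
    (∀ x ∈ D, ∀ y ∈ D, x + y ∈ D) ∧ (∀ (c : ℂ), ∀ x ∈ D, c • x ∈ D) ∧
    (∀ x ∈ D, ∀ y ∈ D, x * y ∈ D) ∧ (∀ x ∈ D, star x ∈ D) ∧
    ∀ a ∈ D, ∀ b ∈ A, 0 ≤ b → b ≤ a → b ∈ D

/-- Any genuine conditional expectation `E : B → A` for a C*-inclusion
`A ⊆ B` is supportive: for every positive `b ∈ B` with `E(b) ≠ 0` there are `δ > 0` and a
hereditary C*-subalgebra `D` of `A` with `‖x E(b) x‖ ≥ δ` for every positive norm-one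
`x ∈ D`. -/
theorem conditional_expectation_supportive
    {B : Type*} [NonUnitalCStarAlgebra B] [PartialOrder B] [StarOrderedRing B]
    (A : Set B) (hA : IsCStarSubalgebra A) (hA0 : ∃ x ∈ A, x ≠ 0)
    (E : B →ₗ[ℂ] B)
    (hrange : ∀ b : B, E b ∈ A)
    (hid : ∀ a ∈ A, E a = a)
    (hcontr : ∀ b : B, ‖E b‖ ≤ ‖b‖)
    (hcp : CompletelyPositive E) :
    ∀ b : B, 0 ≤ b → E b ≠ 0 →
      ∃ δ : ℝ, 0 < δ ∧ ∃ D : Set B, IsHereditarySubalgebraIn A D ∧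
        ∀ x ∈ D, 0 ≤ x → ‖x‖ = 1 → δ ≤ ‖x * E b * x‖ := by
  intro b hb hEb
  -- `E b` is nonneg
  obtain ⟨hAclosed, hA0mem, hAadd, hAsmul, hAmul, hAstar⟩ := hA
  have hpos : 0 ≤ E b := by
    set s0 : B := CFC.sqrt b with hs0def
    have hs0 : s0 * s0 = b := CFC.sqrt_mul_sqrt_self b hb
    have hss0 : star s0 = s0 := (IsSelfAdjoint.of_nonneg (CFC.sqrt_nonneg b)).star_eq
    have hM : MatrixIsPositive (n := 1) (Matrix.of fun _ _ => b) := by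
      refine ⟨Matrix.of fun _ _ => s0, ?_⟩
      ext i j
      simp [Matrix.mul_apply, Matrix.conjTranspose_apply, hss0, hs0]
    obtain ⟨z, hz⟩ := hcp 1 _ hM
    have h00 : E b = star (z 0 0) * z 0 0 := by
      have := congrFun (congrFun hz 0) 0
      simpa [Matrix.map_apply, Matrix.mul_apply, Matrix.conjTranspose_apply] using this
    rw [h00]
    exact star_mul_self_nonneg _
  set a : B := E b with hadef
  have haA : a ∈ A := hrange b
  have ha0 : a ≠ 0 := hEb
  have hsa : IsSelfAdjoint a := .of_nonneg hpos
  have hnorm : (0:ℝ) < ‖a‖ := norm_pos_iff.mpr ha0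
  set c : ℝ := ‖a‖ / 2 with hcdef
  have hc : 0 < c := by positivity
  set f : ℝ → ℝ := fun t => max 0 (min 1 (t / c - 1)) with hfdef
  set g : ℝ → ℝ := fun t => max 0 (min 1 (t / c)) with hgdef
  have hfc : Continuous f := by
    apply continuous_const.max
    exact continuous_const.min ((continuous_id.div_const c).sub continuous_const)
  have hgc : Continuous g := by
    apply continuous_const.max
    exact continuous_const.min (continuous_id.div_const c)
  have hf0 : f 0 = 0 := by simp [hfdef]
  have hg0 : g 0 = 0 := by simp [hgdef]
  have hgf : ∀ t, g t * f t = f t := by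
    intro t
    rcases le_or_gt t c with ht | ht
    · have h1 : t / c - 1 ≤ 0 := by
        have := (div_le_one hc).mpr ht
        linarith
      have : f t = 0 := by
        rw [hfdef]
        simp only
        rw [min_eq_right (by linarith), max_eq_left h1]
      rw [this, mul_zero]
    · have h1 : (1:ℝ) ≤ t / c := le_of_lt ((one_lt_div hc).mpr ht)
      have : g t = 1 := by
        rw [hgdef]; simp only
        rw [min_eq_left h1, max_eq_right zero_le_one]
      rw [this, one_mul]
  have hgt : ∀ t : ℝ, 0 ≤ t → c * (g t * g t) ≤ t := by
    intro t ht
    have hgle1 : g t ≤ 1 := by simp [hgdef]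
    have hgle : g t ≤ t / c := by
      rw [hgdef]; simp only
      rw [max_le_iff]
      constructor
      · positivity
      · exact min_le_right _ _
    have hg0' : 0 ≤ g t := le_max_left _ _
    calc c * (g t * g t) ≤ c * ((t/c) * 1) :=
          mul_le_mul_of_nonneg_left (mul_le_mul hgle hgle1 hg0' (by positivity)) hc.le
      _ = t := by field_simp
  have hfa : f ‖a‖ = 1 := by
    have : ‖a‖ / c = 2 := by
      rw [hcdef]; field_simp
    rw [hfdef]; simp only [this]
    norm_num
  -- cfc elements
  have hh : cfcₙ f a ∈ A := CfcnMemAux  hAclosed hAadd hAsmul hAmul haA hsa f hfc.continuousOn hf0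
  set h : B := cfcₙ f a with hhdef
  set k : B := cfcₙ g a with hkdef
  have hkA : k ∈ A := CfcnMemAux  hAclosed hAadd hAsmul hAmul haA hsa g hgc.continuousOn hg0
  have hhsa : IsSelfAdjoint h := cfcₙ_predicate f a
  have hksa : IsSelfAdjoint k := cfcₙ_predicate g a
  have hkh : k * h = h := by
    rw [hhdef, hkdef, ← cfcₙ_mul g f a hgc.continuousOn hg0 hfc.continuousOn hf0]
    exact cfcₙ_congr fun t _ => hgf t
  have hhk : h * k = h := by
    have : h * k = star (k * h) := by
      rw [star_mul, hhsa.star_eq, hksa.star_eq]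
    rw [this, hkh, hhsa.star_eq]
  have hq : 0 ≤ a - c • (k * k) := by
    have h1 : c • (k * k) = cfcₙ (fun t => c * (g t * g t)) a := by
      rw [cfcₙ_const_mul c (fun t => g t * g t) a
        (by exact (hgc.mul hgc).continuousOn) (by simp [hg0]),
        cfcₙ_mul g g a hgc.continuousOn hg0 hgc.continuousOn hg0]
    have h2 : a - c • (k * k) = cfcₙ (fun t : ℝ => t - c * (g t * g t)) a := by
      rw [cfcₙ_sub (fun t : ℝ => t) (fun t => c * (g t * g t)) a
        continuous_id.continuousOn (by simp)
        (by exact ((continuous_const.mul (hgc.mul hgc))).continuousOn) (by simp [hg0]),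
        cfcₙ_id' ℝ a hsa, h1]
    rw [h2]
    apply cfcₙ_nonneg
    intro t ht
    have ht0 : 0 ≤ t := quasispectrum_nonneg_of_nonneg a hpos t ht
    have := hgt t ht0
    linarith
  have hh1 : (1:ℝ) ≤ ‖h‖ := by
    have hmem : ‖a‖ ∈ quasispectrum ℝ a := NormMemQuasispectrumAux hpos ha0
    have := norm_apply_le_norm_cfcₙ f a hmem hfc.continuousOn hf0 hsa
    rwa [hfa, norm_one] at this
  have hhne : h ≠ 0 := by
    intro hcon
    rw [hcon, norm_zero] at hh1
    linarith
  -- the hereditary subalgebra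
  set D : Set B := {x | x ∈ A ∧ x * k = x ∧ k * x = x} with hDdef
  have hDsub : D ⊆ A := fun x hx => hx.1
  have hDclosed : IsClosed D := by
    have e1 : IsClosed {x : B | x * k = x} :=
      isClosed_eq (continuous_id.mul continuous_const) continuous_id
    have e2 : IsClosed {x : B | k * x = x} :=
      isClosed_eq (continuous_const.mul continuous_id) continuous_id
    exact hAclosed.inter (e1.inter e2)
  have hhD : h ∈ D := ⟨hh, hhk, hkh⟩
  have hD0 : (0:B) ∈ D := ⟨hA0mem, zero_mul k, mul_zero k⟩
  have hDadd : ∀ x ∈ D, ∀ y ∈ D, x + y ∈ D := by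
    rintro x ⟨hxA, hx1, hx2⟩ y ⟨hyA, hy1, hy2⟩
    exact ⟨hAadd x hxA y hyA, by rw [add_mul, hx1, hy1], by rw [mul_add, hx2, hy2]⟩
  have hDsmul : ∀ (r : ℂ), ∀ x ∈ D, r • x ∈ D := by
    rintro r x ⟨hxA, hx1, hx2⟩
    exact ⟨hAsmul r x hxA, by rw [smul_mul_assoc, hx1], by rw [mul_smul_comm, hx2]⟩
  have hDmul : ∀ x ∈ D, ∀ y ∈ D, x * y ∈ D := by
    rintro x ⟨hxA, hx1, hx2⟩ y ⟨hyA, hy1, hy2⟩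
    exact ⟨hAmul x hxA y hyA, by rw [mul_assoc, hy1], by rw [← mul_assoc, hx2]⟩
  have hDstar : ∀ x ∈ D, star x ∈ D := by
    rintro x ⟨hxA, hx1, hx2⟩
    refine ⟨hAstar x hxA, ?_, ?_⟩
    · rw [← hksa.star_eq, ← star_mul, hx2]
    · rw [← hksa.star_eq, ← star_mul, hx1]
  have hDher : ∀ d ∈ D, ∀ b' ∈ A, 0 ≤ b' → b' ≤ d → b' ∈ D := by
    rintro d ⟨hdA, hdk, hkd⟩ b' hb'A hb'pos hble
    have hb'sa : IsSelfAdjoint b' := .of_nonneg hb'pos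
    set s : B := CFC.sqrt b' with hsdef
    have hs : s * s = b' := CFC.sqrt_mul_sqrt_self b' hb'pos
    have hssa : star s = s := (IsSelfAdjoint.of_nonneg (CFC.sqrt_nonneg b')).star_eq
    have hepos : 0 ≤ d - b' := sub_nonneg.mpr hble
    set y : B := CFC.sqrt (d - b') with hydef
    have hy : y * y = d - b' := CFC.sqrt_mul_sqrt_self _ hepos
    have hysa : star y = y := (IsSelfAdjoint.of_nonneg (CFC.sqrt_nonneg (d - b'))).star_eq
    set w : B := s - s * k with hwdef
    set z : B := y - y * k with hzdef
    have hws : star w = s - k * s := by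
      rw [hwdef, star_sub, star_mul, hssa, hksa.star_eq]
    have hzs : star z = y - k * y := by
      rw [hzdef, star_sub, star_mul, hysa, hksa.star_eq]
    have hsum : star w * w + star z * z = 0 := by
      rw [hws, hzs, hwdef, hzdef]
      exact AlgIdAux k s y d b' hs hy hdk hkd
    have hw0 : star w * w = 0 := by
      have h1 : (0:B) ≤ star w * w := star_mul_self_nonneg w
      have h2 : (0:B) ≤ star z * z := star_mul_self_nonneg z
      have h3 : star w * w = -(star z * z) := eq_neg_of_add_eq_zero_left hsum
      have h4 : star w * w ≤ 0 := h3 ▸ neg_nonpos_of_nonneg h2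
      exact le_antisymm h4 h1
    have hwz : w = 0 := CStarRing.star_mul_self_eq_zero_iff w |>.mp hw0
    have hsk : s * k = s := by
      have := sub_eq_zero.mp (hwdef ▸ hwz)
      exact this.symm
    have hbk : b' * k = b' := by
      rw [← hs, mul_assoc, hsk]
    have hkb : k * b' = b' := by
      have : star (b' * k) = k * b' := by rw [star_mul, hksa.star_eq, hb'sa.star_eq]
      rw [← this, hbk, hb'sa.star_eq]
    exact ⟨hb'A, hbk, hkb⟩
  refine ⟨c, hc, D, ⟨hDsub, hDclosed, ⟨h, hhD, hhne⟩, hD0, hDadd, hDsmul, hDmul, hDstar, hDher⟩,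
    ?_⟩
  rintro x ⟨hxA, hxk, hkx⟩ hxpos hx1
  have hxsa : star x = x := (IsSelfAdjoint.of_nonneg hxpos).star_eq
  have hconj : 0 ≤ x * (a - c • (k * k)) * x := by
    have := star_left_conjugate_nonneg hq x
    rwa [hxsa] at this
  have hxkk : x * (k * k) = x := by
    rw [← mul_assoc, hxk, hxk]
  have hexp : x * (a - c • (k * k)) * x = x * a * x - c • (x * x) := by
    rw [mul_sub, sub_mul, mul_smul_comm, hxkk, smul_mul_assoc]
  have hle : c • (x * x) ≤ x * a * x := by
    rw [hexp] at hconj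
    exact sub_nonneg.mp hconj
  have hsq : 0 ≤ c • (x * x) := by
    set r : ℝ := Real.sqrt c with hrdef
    have hr : r * r = c := Real.mul_self_sqrt hc.le
    have h1 : star (r • x) * (r • x) = c • (x * x) := by
      rw [star_smul, star_trivial, hxsa, smul_mul_smul_comm, hr]
    exact h1 ▸ star_mul_self_nonneg (r • x)
  have hnormle : ‖c • (x * x)‖ ≤ ‖x * a * x‖ :=
    CStarAlgebra.norm_le_norm_of_nonneg_of_le hsq hle
  have hxx : ‖x * x‖ = 1 := by
    have hrw : x * x = star x * x := by rw [hxsa]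
    rw [hrw, CStarRing.norm_star_mul_self, hx1, one_mul]
  have hnormeq : ‖c • (x * x)‖ = c := by
    rw [norm_smul, Real.norm_eq_abs, abs_of_pos hc, hxx, mul_one]
  rw [hnormeq] at hnormle
  exact hnormle
end

section
/- Let A ⊆ B be an aperiodic C*-inclusion and let E : B → Ã ⊇ A be a supportive generalised expectation. Set N_E := {b ∈ B : E((b c)*(b c)) = 0 for all c ∈ B}. Then for every positive b ∈ B with b ∉ N_E there is a nonzero positive a ∈ A with a ≾ b in the Cuntz preorder: for every ε > 0 there is x ∈ B with ‖a − x* b x‖ < ε. -/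
open scoped CStarAlgebra
set_option maxHeartbeats 1000000

namespace ASCD

section Unital
variable {U : Type*} [CStarAlgebra U] [PartialOrder U] [StarOrderedRing U]

lemma algebraMap_nonneg {r : ℝ} (hr : 0 ≤ r) : 0 ≤ algebraMap ℝ U r := by
  have h : algebraMap ℝ U r = star (algebraMap ℝ U (Real.sqrt r)) * algebraMap ℝ U (Real.sqrt r) := by
    have : star (algebraMap ℝ U (Real.sqrt r)) = algebraMap ℝ U (Real.sqrt r) := by
      rw [Algebra.algebraMap_eq_smul_one, star_smul, star_one, star_trivial]
    rw [this, ← map_mul, Real.mul_self_sqrt hr]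
  rw [h]
  exact star_mul_self_nonneg _

lemma rsmul_nonneg {r : ℝ} (hr : 0 ≤ r) {X : U} (hX : 0 ≤ X) : 0 ≤ r • X := by
  have h : r • X = star (algebraMap ℝ U (Real.sqrt r)) * X * algebraMap ℝ U (Real.sqrt r) := by
    have hs : star (algebraMap ℝ U (Real.sqrt r)) = algebraMap ℝ U (Real.sqrt r) := by
      rw [Algebra.algebraMap_eq_smul_one, star_smul, star_one, star_trivial]
    rw [hs, Algebra.algebraMap_eq_smul_one, smul_mul_assoc, one_mul, mul_smul_comm,
      mul_one, smul_smul, Real.mul_self_sqrt hr]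
  rw [h]
  exact star_left_conjugate_nonneg hX _

lemma le_add_of_norm_le {U : Type*} [CStarAlgebra U] [PartialOrder U] [StarOrderedRing U]
    {X Y : U} (hX : IsSelfAdjoint X) (hY : IsSelfAdjoint Y) {ε : ℝ} (h : ‖X - Y‖ ≤ ε) :
    X ≤ Y + algebraMap ℝ U ε := by
  have h1 : X - Y ≤ algebraMap ℝ U ‖X - Y‖ :=
    IsSelfAdjoint.le_algebraMap_norm_self (hX.sub hY)
  have h2 : algebraMap ℝ U ‖X - Y‖ ≤ algebraMap ℝ U ε := by
    rw [← sub_nonneg, ← map_sub]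
    exact algebraMap_nonneg (by linarith)
  have h3 := h1.trans h2
  rw [sub_le_iff_le_add] at h3
  rwa [add_comm] at h3

lemma nonneg_of_forall_pos {Y Z : U} (h : ∀ t : ℝ, 0 < t → 0 ≤ Y + t • Z) : 0 ≤ Y := by
  have htend : Filter.Tendsto (fun t : ℝ => Y + t • Z) (nhdsWithin 0 (Set.Ioi 0)) (nhds Y) := by
    have : Filter.Tendsto (fun t : ℝ => Y + t • Z) (nhds 0) (nhds (Y + (0:ℝ) • Z)) := by
      exact (tendsto_const_nhds.add ((continuous_id.smul continuous_const).tendsto 0))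
    simpa using this.mono_left nhdsWithin_le_nhds
  have := CStarAlgebra.isClosed_nonneg (A := U)
  refine this.mem_of_tendsto htend ?_
  filter_upwards [self_mem_nhdsWithin] with t ht
  exact h t ht

end Unital

section Cside
variable {B C : Type*} [NonUnitalCStarAlgebra B] [PartialOrder B] [StarOrderedRing B]
  [NonUnitalCStarAlgebra C]
variable {E : B →ₗ[ℂ] C}

lemma posForm (hcp : CompletelyPositive E) {m : B} (hm : 0 ≤ m) :
    ∃ u : C, E m = star u * u := by
  have hsq : star (CFC.sqrt m) * CFC.sqrt m = m := by
    rw [(IsSelfAdjoint.of_nonneg (CFC.sqrt_nonneg (a := m))).star_eq, CFC.sqrt_mul_sqrt_self m hm]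
  obtain ⟨z, hz⟩ := hcp 1 (Matrix.of fun _ _ => m) ⟨Matrix.of fun _ _ => CFC.sqrt m, by
    ext i j
    simp [Matrix.mul_apply, Matrix.conjTranspose_apply, hsq]⟩
  refine ⟨z 0 0, ?_⟩
  have := congrFun (congrFun hz 0) 0
  simpa [Matrix.map_apply, Matrix.mul_apply, Matrix.conjTranspose_apply] using this

lemma selfadjoint_map (hcp : CompletelyPositive E) {s : B} (hs : IsSelfAdjoint s) :
    star (E s) = E s := by
  obtain ⟨u, hu⟩ := posForm hcp (CFC.posPart_nonneg s)
  obtain ⟨v, hv⟩ := posForm hcp (CFC.negPart_nonneg s)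
  have : E s = star u * u - star v * v := by
    conv_lhs => rw [← CFC.posPart_sub_negPart s hs]
    rw [map_sub, hu, hv]
  rw [this]
  simp [star_sub, star_mul]

lemma Emap_star (hcp : CompletelyPositive E) (x : B) : E (star x) = star (E x) := by
  have h1 : star (E (x + star x)) = E (x + star x) :=
    selfadjoint_map hcp (by simp [IsSelfAdjoint, star_add, add_comm])
  have h2 : star (E (Complex.I • (x - star x))) = E (Complex.I • (x - star x)) :=
    selfadjoint_map hcp (by
      simp only [IsSelfAdjoint, star_smul, star_sub, star_star, RCLike.star_def, Complex.conj_I,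
        neg_smul, smul_sub, neg_sub]
      module)
  rw [map_add, star_add] at h1
  rw [map_smul, star_smul, map_sub, RCLike.star_def, Complex.conj_I, star_sub, neg_smul,
    smul_sub] at h2
  have h2'' : star (E (star x)) - star (E x) = E x - E (star x) := by
    apply smul_right_injective C Complex.I_ne_zero
    simp only [smul_sub]
    linear_combination (norm := module) h2
  have key : (2:ℂ) • star (E (star x)) = (2:ℂ) • E x := by
    linear_combination (norm := module) h1 + h2''
  have key' : star (E (star x)) = E x := smul_right_injective C (two_ne_zero) key
  rw [← key', star_star]


lemma approx (x : B) {η : ℝ} (hη : 0 < η) :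
    ∃ e : B, IsSelfAdjoint e ∧ ‖e‖ ≤ 1 ∧ ‖x - e * x‖ ≤ η := by
  set t : ℝ := η ^ 2 with ht
  have ht0 : 0 < t := by positivity
  set m : B := x * star x with hmdef
  have hm : 0 ≤ m := mul_star_self_nonneg x
  have hmsa : IsSelfAdjoint m := IsSelfAdjoint.mul_star_self x
  set f : ℝ → ℝ := fun s => min 1 (s / t) with hf
  have hf0 : f 0 = 0 := by simp [hf]
  have hfc : Continuous f := continuous_const.min (continuous_id.div_const t)
  set e : B := cfcₙ f m with he
  have hesa : IsSelfAdjoint e := cfcₙ_predicate f m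
  refine ⟨e, hesa, ?_, ?_⟩
  · refine norm_cfcₙ_le fun s hs => ?_
    have hs0 : 0 ≤ s := quasispectrum_nonneg_of_nonneg m hm s hs
    rw [Real.norm_eq_abs, abs_le]
    constructor
    · have : (0:ℝ) ≤ min 1 (s / t) := le_min one_pos.le (by positivity)
      linarith
    · exact min_le_left _ _
  · set z : B := x - e * x with hz
    have hzz : z * star z = m - m * e - e * m + e * m * e := by
      rw [hz, hmdef]
      simp only [star_sub, star_mul, hesa.star_eq]
      noncomm_ring
    have hme : m * e = cfcₙ (fun s => s * f s) m :=
      ((cfcₙ_mul id f m continuous_id.continuousOn rfl hfc.continuousOn hf0).trans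
        (by rw [cfcₙ_id ℝ m hmsa])).symm
    have hem : e * m = cfcₙ (fun s => f s * s) m :=
      ((cfcₙ_mul f id m hfc.continuousOn hf0 continuous_id.continuousOn rfl).trans
        (by rw [cfcₙ_id ℝ m hmsa])).symm
    have hfc' : Continuous fun s : ℝ => f s * s := hfc.mul continuous_id
    have heme : e * m * e = cfcₙ (fun s => f s * s * f s) m := by
      rw [hem, ← cfcₙ_mul (fun s => f s * s) f m hfc'.continuousOn (by simp [hf0])
        hfc.continuousOn hf0]
    have c1 : Continuous fun s : ℝ => s * f s := continuous_id.mul hfc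
    have c3 : Continuous fun s : ℝ => f s * s * f s := hfc'.mul hfc
    have c4 : Continuous fun s : ℝ => s - s * f s := continuous_id.sub c1
    have c5 : Continuous fun s : ℝ => s - s * f s - f s * s := c4.sub hfc'
    have hcomb : z * star z = cfcₙ (fun s => s - s * f s - f s * s + f s * s * f s) m := by
      rw [hzz, heme, hme, hem]
      rw [cfcₙ_add (fun s => s - s * f s - f s * s) (fun s => f s * s * f s) m
          c5.continuousOn (by simp) c3.continuousOn (by simp [hf0]),
        cfcₙ_sub (fun s => s - s * f s) (fun s => f s * s) m
          c4.continuousOn (by simp) hfc'.continuousOn (by simp [hf0]),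
        cfcₙ_sub (fun s => s) (fun s => s * f s) m
          continuous_id.continuousOn rfl c1.continuousOn (by simp),
        cfcₙ_id' ℝ m hmsa]
    have hnorm : ‖z * star z‖ ≤ t := by
      rw [hcomb]
      refine norm_cfcₙ_le fun s hs => ?_
      have hs0 : 0 ≤ s := quasispectrum_nonneg_of_nonneg m hm s hs
      rw [Real.norm_eq_abs]
      rcases le_or_gt t s with hts | hst
      · have hfs : f s = 1 := min_eq_left (by rw [le_div_iff₀ ht0]; linarith)
        rw [hfs]
        have hz' : s - s * 1 - 1 * s + 1 * s * 1 = 0 := by ring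
        rw [hz', abs_zero]
        exact ht0.le
      · have hfs : f s = s / t := min_eq_right (by rw [div_le_one ht0]; linarith)
        rw [hfs]
        have h1 : s / t ≤ 1 := by rw [div_le_one ht0]; linarith
        have h2 : 0 ≤ s / t := by positivity
        have key : s - s * (s / t) - s / t * s + s / t * s * (s / t) = s * (1 - s / t) ^ 2 := by
          ring
        rw [key, abs_le]
        constructor
        · nlinarith [mul_nonneg hs0 (sq_nonneg (1 - s / t))]
        · have hsq : (1 - s / t) ^ 2 ≤ 1 := by nlinarith
          nlinarith [mul_le_mul_of_nonneg_left hsq hs0]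
    have : ‖z‖ * ‖z‖ ≤ t := by rwa [CStarRing.norm_self_mul_star] at hnorm
    have : ‖z‖ ≤ η := by nlinarith [norm_nonneg z]
    exact this

lemma schwarz_step (hcp : CompletelyPositive E) (hcontr : ∀ b : B, ‖E b‖ ≤ ‖b‖)
    (x e : B) (he : ‖e‖ ≤ 1) :
    (↑(star (E (star e * x)) * E (star e * x)) : Unitization ℂ C) ≤ ↑(E (star x * x)) := by
  set y : Matrix (Fin 2) (Fin 2) B := Matrix.of ![![e, x], ![0, 0]] with hy
  obtain ⟨z, hz⟩ := hcp 2 (y.conjTranspose * y) ⟨y, rfl⟩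
  set u : Fin 2 → C := fun k => z k 0 with hu
  set v : Fin 2 → C := fun k => z k 1 with hv
  set c : C := E (star e * x) with hc
  set p : C := E (star e * e) with hp
  set q : C := E (star x * x) with hq
  have hME : ∀ i j, E ((y.conjTranspose * y) i j) = ∑ k, star (z k i) * z k j := by
    intro i j
    have := congrFun (congrFun hz i) j
    simpa [Matrix.map_apply, Matrix.mul_apply, Matrix.conjTranspose_apply] using this
  have hM00 : (y.conjTranspose * y) 0 0 = star e * e := by
    simp [hy, Matrix.mul_apply, Matrix.conjTranspose_apply, Fin.sum_univ_two]
  have hM01 : (y.conjTranspose * y) 0 1 = star e * x := by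
    simp [hy, Matrix.mul_apply, Matrix.conjTranspose_apply, Fin.sum_univ_two]
  have hM11 : (y.conjTranspose * y) 1 1 = star x * x := by
    simp [hy, Matrix.mul_apply, Matrix.conjTranspose_apply, Fin.sum_univ_two]
  have hpform : ∃ w : C, p = star w * w := posForm hcp (star_mul_self_nonneg e)
  have hqc : ∑ k, star (v k) * v k = q := by rw [hq, ← hM11, hME 1 1]
  have hcc : ∑ k, star (u k) * v k = c := by rw [hc, ← hM01, hME 0 1]
  have hpc : ∑ k, star (u k) * u k = p := by rw [hp, ← hM00, hME 0 0]
  have hcstar : ∑ k, star (v k) * u k = star c := by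
    rw [← hcc, star_sum]
    simp [star_mul]
  set S : C := q - star c * c - star c * c + star c * (p * c) with hS
  have hsum : (∑ k, star (v k - u k * c) * (v k - u k * c)) = S := by
    have expand : ∀ k, star (v k - u k * c) * (v k - u k * c)
        = star (v k) * v k - star (v k) * u k * c - star c * (star (u k) * v k)
          + star c * (star (u k) * u k * c) := by
      intro k
      simp only [star_sub, star_mul]
      noncomm_ring
    rw [Finset.sum_congr rfl fun k _ => expand k]
    simp only [Finset.sum_sub_distrib, Finset.sum_add_distrib, ← Finset.sum_mul,
      ← Finset.mul_sum]
    rw [hqc, hcstar, hcc, hpc]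
  have hSpos : (0 : Unitization ℂ C) ≤ ↑S := by
    rw [← hsum, Fin.sum_univ_two, Unitization.inr_add ℂ]
    have h0 : ∀ r : C, (0 : Unitization ℂ C) ≤ ↑(star r * r) := fun r => by
      rw [Unitization.inr_mul ℂ, Unitization.inr_star]
      exact star_mul_self_nonneg _
    exact add_nonneg (h0 _) (h0 _)
  obtain ⟨w, hw⟩ := hpform
  have hpsa : IsSelfAdjoint ((↑p : Unitization ℂ C)) := by
    rw [hw]; exact (IsSelfAdjoint.star_mul_self w).inr ℂ
  have hpnorm : ‖(↑p : Unitization ℂ C)‖ ≤ 1 := by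
    rw [Unitization.norm_inr]
    calc ‖p‖ ≤ ‖star e * e‖ := hcontr _
    _ = ‖e‖ * ‖e‖ := CStarRing.norm_star_mul_self
    _ ≤ 1 := by nlinarith [norm_nonneg e]
  have hconj : (↑(star c * (p * c)) : Unitization ℂ C) ≤ ↑(star c * c) := by
    have h1 : (↑(star c * (p * c)) : Unitization ℂ C) = star ↑c * ↑p * ↑c := by
      rw [Unitization.inr_mul ℂ, Unitization.inr_mul ℂ, Unitization.inr_star, mul_assoc]
    have h2 := CStarAlgebra.star_left_conjugate_le_norm_smul (a := (↑c : Unitization ℂ C)) (b := ↑p) hpsa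
    have h3 : ‖(↑p : Unitization ℂ C)‖ • (star (↑c : Unitization ℂ C) * ↑c)
        ≤ star (↑c : Unitization ℂ C) * ↑c := by
      rw [← sub_nonneg]
      have h4 : star (↑c : Unitization ℂ C) * ↑c - ‖(↑p : Unitization ℂ C)‖ • (star (↑c : Unitization ℂ C) * ↑c)
          = (1 - ‖(↑p : Unitization ℂ C)‖) • (star (↑c : Unitization ℂ C) * ↑c) := by
        rw [sub_smul, one_smul]
      rw [h4]
      exact rsmul_nonneg (by linarith) (star_mul_self_nonneg _)
    rw [h1, Unitization.inr_mul ℂ, Unitization.inr_star]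
    exact h2.trans h3
  have hfin : (0 : Unitization ℂ C) ≤ ↑q - ↑(star c * c) := by
    have hre : (↑q : Unitization ℂ C) - ↑(star c * c)
        = ↑S + (↑(star c * c) - ↑(star c * (p * c))) := by
      rw [hS]
      simp only [Unitization.inr_sub ℂ, Unitization.inr_add ℂ]
      abel
    rw [hre]
    exact add_nonneg hSpos (sub_nonneg.mpr hconj)
  have := sub_nonneg.mp hfin
  rwa [hc, hq] at this

lemma schwarz (hcp : CompletelyPositive E) (hcontr : ∀ b : B, ‖E b‖ ≤ ‖b‖) (x : B) :
    (↑(star (E x) * E x) : Unitization ℂ C) ≤ ↑(E (star x * x)) := by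
  have H : ∀ n : ℕ, ∃ e : B, IsSelfAdjoint e ∧ ‖e‖ ≤ 1 ∧ ‖x - e * x‖ ≤ 1 / (n + 1) :=
    fun n => approx x (by positivity)
  choose e hsa hno happ using H
  set cs : ℕ → C := fun n => E (e n * x) with hcs
  have hstep : ∀ n, (↑(star (cs n) * cs n) : Unitization ℂ C) ≤ ↑(E (star x * x)) := by
    intro n
    have := schwarz_step hcp hcontr x (e n) (hno n)
    rwa [(hsa n).star_eq] at this
  have hc : Filter.Tendsto cs Filter.atTop (nhds (E x)) := by
    rw [tendsto_iff_norm_sub_tendsto_zero]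
    refine squeeze_zero (fun n => norm_nonneg _) (g := fun n : ℕ => 1 / (n + 1))
      (fun n => ?_) tendsto_one_div_add_atTop_nhds_zero_nat
    calc ‖cs n - E x‖ = ‖E (e n * x - x)‖ := by rw [← map_sub]
    _ ≤ ‖e n * x - x‖ := hcontr _
    _ = ‖x - e n * x‖ := by rw [← norm_neg]; congr 1; abel
    _ ≤ 1 / (n + 1) := happ n
  have h1 : Filter.Tendsto (fun n => (↑(cs n) : Unitization ℂ C)) Filter.atTop
      (nhds ↑(E x)) :=
    ((Unitization.isometry_inr (𝕜 := ℂ) (A := C)).continuous.tendsto _).comp hc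
  have hlim : Filter.Tendsto
      (fun n => (↑(E (star x * x)) : Unitization ℂ C) - star ↑(cs n) * ↑(cs n))
      Filter.atTop (nhds (↑(E (star x * x)) - star ↑(E x) * ↑(E x))) :=
    tendsto_const_nhds.sub ((h1.star).mul h1)
  have hmem : (0 : Unitization ℂ C) ≤ ↑(E (star x * x)) - star ↑(E x) * ↑(E x) := by
    refine CStarAlgebra.isClosed_nonneg.mem_of_tendsto hlim
      (Filter.Eventually.of_forall fun n => ?_)
    show (0 : Unitization ℂ C) ≤ _
    refine sub_nonneg.mpr ?_
    have := hstep n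
    rwa [Unitization.inr_mul ℂ, Unitization.inr_star] at this
  have := sub_nonneg.mp hmem
  rwa [Unitization.inr_mul ℂ, Unitization.inr_star]


lemma smul_coe_real (t : ℝ) (X : Unitization ℂ C) : ((t : ℂ)) • X = t • X := by
  rw [← smul_one_smul ℂ t X]
  norm_num

lemma tsq_helper {Y Z : Unitization ℂ C}
    (h : ∀ t : ℝ, 0 < t → (0 : Unitization ℂ C) ≤ t • Y + (t * t) • Z) : 0 ≤ Y := by
  refine nonneg_of_forall_pos (Z := Z) fun t ht => ?_
  have h2 := rsmul_nonneg (le_of_lt (inv_pos.mpr ht)) (h t ht)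
  rw [smul_add, smul_smul, smul_smul] at h2
  have e1 : t⁻¹ * t = 1 := inv_mul_cancel₀ ht.ne'
  have e2 : t⁻¹ * (t * t) = t := by field_simp
  rwa [e1, e2, one_smul] at h2

lemma gform_zero (hcp : CompletelyPositive E) (hcontr : ∀ b : B, ‖E b‖ ≤ ‖b‖)
    {x : B} (hx : E (star x * x) = star (E x) * E x) (y : B) :
    E (star x * y) = star (E x) * E y := by
  set G : B → B → C := fun r s => E (star r * s) - star (E r) * E s with hG
  have hGpos : ∀ r : B, (0 : Unitization ℂ C) ≤ ↑(G r r) := by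
    intro r
    have h1 := schwarz hcp hcontr r
    rw [hG]
    simp only
    rw [Unitization.inr_sub ℂ]
    exact sub_nonneg.mpr h1
  have hxx : G x x = 0 := by rw [hG]; simp only; rw [hx, sub_self]
  have hexp : ∀ s : ℂ, G (x + s • y) (x + s • y)
      = s • G x y + star s • G y x + (star s * s) • G y y := by
    intro s
    have l1 : star (x + s • y) * (x + s • y) = star x * x + s • (star x * y)
        + (star s) • (star y * x) + (star s * s) • (star y * y) := by
      simp only [star_add, star_smul, add_mul, mul_add, smul_mul_assoc, mul_smul_comm,
        smul_smul]
      module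
    have l2 : star (E (x + s • y)) * E (x + s • y) = star (E x) * E x
        + s • (star (E x) * E y) + (star s) • (star (E y) * E x)
        + (star s * s) • (star (E y) * E y) := by
      simp only [map_add, map_smul, star_add, star_smul, add_mul, mul_add, smul_mul_assoc,
        mul_smul_comm, smul_smul]
      module
    rw [hG]
    simp only
    rw [l1, l2, map_add, map_add, map_add, map_smul, map_smul, map_smul, hx]
    simp only [smul_sub]
    module
  -- real direction
  have hplus : (0 : Unitization ℂ C) ≤ ↑(G x y + G y x) := by
    refine tsq_helper (Z := ↑(G y y)) fun t ht => ?_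
    have h1 := hGpos (x + ((t : ℂ)) • y)
    rw [hexp ((t : ℂ))] at h1
    have hstar : star ((t : ℂ)) = ((t : ℂ)) := by
      rw [RCLike.star_def, Complex.conj_ofReal]
    rw [hstar] at h1
    have : ((t:ℂ)) • G x y + ((t:ℂ)) • G y x + (((t:ℂ)) * ((t:ℂ))) • G y y
        = ((t:ℂ)) • (G x y + G y x) + (((t*t : ℝ) : ℂ)) • G y y := by
      push_cast
      module
    rw [this] at h1
    rw [Unitization.inr_add ℂ, Unitization.inr_smul, Unitization.inr_smul] at h1
    rwa [smul_coe_real, smul_coe_real] at h1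
  have hminus : (0 : Unitization ℂ C) ≤ ↑(-(G x y + G y x)) := by
    refine tsq_helper (Z := ↑(G y y)) fun t ht => ?_
    have h1 := hGpos (x + ((-t : ℂ)) • y)
    rw [hexp ((-t : ℂ))] at h1
    have hstar : star ((-t : ℂ)) = ((-t : ℂ)) := by
      rw [RCLike.star_def, ← Complex.ofReal_neg, Complex.conj_ofReal]
    rw [hstar] at h1
    have : ((-t:ℂ)) • G x y + ((-t:ℂ)) • G y x + (((-t:ℂ)) * ((-t:ℂ))) • G y y
        = ((t:ℂ)) • (-(G x y + G y x)) + (((t*t : ℝ) : ℂ)) • G y y := by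
      push_cast
      module
    rw [this] at h1
    rw [Unitization.inr_add ℂ, Unitization.inr_smul, Unitization.inr_smul] at h1
    rwa [smul_coe_real, smul_coe_real] at h1
  have hsum0 : G x y + G y x = 0 := by
    have h1 : (↑(G x y + G y x) : Unitization ℂ C) = 0 := by
      rw [Unitization.inr_neg] at hminus
      exact le_antisymm (neg_nonneg.mp hminus) hplus
    exact Unitization.inr_injective (by rw [h1, Unitization.inr_zero])
  have hiplus : (0 : Unitization ℂ C) ≤ ↑(Complex.I • G x y - Complex.I • G y x) := by
    refine tsq_helper (Z := ↑(G y y)) fun t ht => ?_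
    have h1 := hGpos (x + (((t : ℂ)) * Complex.I) • y)
    rw [hexp (((t : ℂ)) * Complex.I)] at h1
    have hstar : star (((t : ℂ)) * Complex.I) = -(((t : ℂ)) * Complex.I) := by
      simp only [star_mul', RCLike.star_def, Complex.conj_ofReal, Complex.conj_I]
      ring
    rw [hstar] at h1
    have : (((t:ℂ)) * Complex.I) • G x y + (-(((t:ℂ)) * Complex.I)) • G y x
        + ((-(((t:ℂ)) * Complex.I)) * (((t:ℂ)) * Complex.I)) • G y y
        = ((t:ℂ)) • (Complex.I • G x y - Complex.I • G y x) + (((t*t : ℝ) : ℂ)) • G y y := by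
      have hI : (-(((t:ℂ)) * Complex.I)) * (((t:ℂ)) * Complex.I) = (((t*t : ℝ) : ℂ)) := by
        push_cast
        have := Complex.I_mul_I
        ring_nf
        rw [Complex.I_sq]
        ring
      rw [hI]
      simp only [smul_sub, mul_smul, neg_smul, neg_mul]
      module
    rw [this] at h1
    rw [Unitization.inr_add ℂ, Unitization.inr_smul, Unitization.inr_smul] at h1
    rwa [smul_coe_real, smul_coe_real] at h1
  have himinus : (0 : Unitization ℂ C) ≤ ↑(-(Complex.I • G x y - Complex.I • G y x)) := by
    refine tsq_helper (Z := ↑(G y y)) fun t ht => ?_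
    have h1 := hGpos (x + ((-t : ℂ) * Complex.I) • y)
    rw [hexp ((-t : ℂ) * Complex.I)] at h1
    have hstar : star ((-t : ℂ) * Complex.I) = -((-t : ℂ) * Complex.I) := by
      simp only [star_mul', RCLike.star_def, Complex.conj_I, map_neg, Complex.conj_ofReal]
      ring
    rw [hstar] at h1
    have : (((-t:ℂ)) * Complex.I) • G x y + (-(((-t:ℂ)) * Complex.I)) • G y x
        + ((-(((-t:ℂ)) * Complex.I)) * (((-t:ℂ)) * Complex.I)) • G y y
        = ((t:ℂ)) • (-(Complex.I • G x y - Complex.I • G y x)) + (((t*t : ℝ) : ℂ)) • G y y := by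
      have hI : (-(((-t:ℂ)) * Complex.I)) * (((-t:ℂ)) * Complex.I) = (((t*t : ℝ) : ℂ)) := by
        push_cast
        ring_nf
        rw [Complex.I_sq]
        ring
      rw [hI]
      simp only [smul_sub, mul_smul, neg_smul, neg_mul, neg_neg, smul_neg]
      module
    rw [this] at h1
    rw [Unitization.inr_add ℂ, Unitization.inr_smul, Unitization.inr_smul] at h1
    rwa [smul_coe_real, smul_coe_real] at h1
  have hdiff0 : G x y - G y x = 0 := by
    have h1 : (↑(Complex.I • G x y - Complex.I • G y x) : Unitization ℂ C) = 0 := by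
      rw [Unitization.inr_neg] at himinus
      exact le_antisymm (neg_nonneg.mp himinus) hiplus
    have h2 : Complex.I • G x y - Complex.I • G y x = 0 :=
      Unitization.inr_injective (by rw [h1, Unitization.inr_zero])
    rw [← smul_sub] at h2
    exact smul_right_injective C Complex.I_ne_zero (by simpa using h2)
  have hfin : G x y = 0 := by
    have h2 : (2 : ℂ) • G x y = 0 := by
      rw [two_smul]
      have : G x y + G x y = (G x y + G y x) + (G x y - G y x) := by abel
      rw [this, hsum0, hdiff0, add_zero]
    exact smul_right_injective C (two_ne_zero (α := ℂ)) (by simpa using h2)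
  have hfin2 : E (star x * y) - star (E x) * E y = 0 := by simpa [hG] using hfin
  exact sub_eq_zero.mp hfin2


variable {A : Type*} [NonUnitalCStarAlgebra A] [PartialOrder A] [StarOrderedRing A]

lemma mul_left (hcp : CompletelyPositive E) (hcontr : ∀ b : B, ‖E b‖ ≤ ‖b‖)
    (ι : A →⋆ₙₐ[ℂ] B) (κ : A →⋆ₙₐ[ℂ] C) (hres : ∀ a : A, E (ι a) = κ a)
    (a : A) (z : B) : E (ι a * z) = κ a * E z := by
  have h1 : star (ι (star a)) = ι a := by rw [← map_star, star_star]
  have hx : E (star (ι (star a)) * ι (star a))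
      = star (E (ι (star a))) * E (ι (star a)) := by
    rw [h1, ← map_mul, hres, hres, map_mul, ← map_star, star_star]
  have h2 := gform_zero hcp hcontr hx z
  rw [h1, hres, ← map_star, star_star] at h2
  exact h2

lemma mul_right (hcp : CompletelyPositive E) (hcontr : ∀ b : B, ‖E b‖ ≤ ‖b‖)
    (ι : A →⋆ₙₐ[ℂ] B) (κ : A →⋆ₙₐ[ℂ] C) (hres : ∀ a : A, E (ι a) = κ a)
    (a : A) (z : B) : E (z * ι a) = E z * κ a := by
  have h2 := mul_left hcp hcontr ι κ hres (star a) (star z)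
  have h3 : star (z * ι a) = ι (star a) * star z := by rw [star_mul, map_star]
  calc E (z * ι a) = star (E (star (z * ι a))) := by rw [Emap_star hcp, star_star]
  _ = star (κ (star a) * E (star z)) := by rw [h3, h2]
  _ = star (E (star z)) * star (κ (star a)) := by rw [star_mul]
  _ = E z * κ a := by rw [← Emap_star hcp, star_star, ← map_star, star_star]

end Cside

section Cuntz

variable {B : Type*} [NonUnitalCStarAlgebra B] [PartialOrder B] [StarOrderedRing B]

lemma cuntz_of_le {p q : B} (hp : 0 ≤ p) (hq : 0 ≤ q) (hpq : p ≤ q) {η : ℝ} (hη : 0 < η) :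
    ∃ d : B, ‖p - star d * q * d‖ < η := by
  set t : ℝ := η / 2 with htdef
  have ht0 : 0 < t := by positivity
  set sp : B := CFC.sqrt p with hspdef
  have hsp : sp * sp = p := CFC.sqrt_mul_sqrt_self p hp
  have hsp0 : (0:B) ≤ sp := CFC.sqrt_nonneg p
  have hspsa : IsSelfAdjoint sp := IsSelfAdjoint.of_nonneg hsp0
  set Q : Unitization ℂ B := (q : Unitization ℂ B) with hQdef
  have hQ0 : 0 ≤ Q := Unitization.inr_nonneg_iff.mpr hq
  have hQsa : IsSelfAdjoint Q := IsSelfAdjoint.of_nonneg hQ0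
  have hP0 : 0 ≤ ((p : Unitization ℂ B)) := Unitization.inr_nonneg_iff.mpr hp
  have hPQ : ((p : Unitization ℂ B)) ≤ Q := (Unitization.inr_le_iff p q).mpr hpq
  have hspec : ∀ s ∈ spectrum ℝ Q, 0 ≤ s := fun s hs => spectrum_nonneg_of_nonneg hQ0 hs
  set g : ℝ → ℝ := fun s => (Real.sqrt (s + t))⁻¹ with hgdef
  have hgc : ContinuousOn g (spectrum ℝ Q) := by
    apply ContinuousOn.inv₀
    · exact (Real.continuous_sqrt.comp (continuous_id.add continuous_const)).continuousOn
    · intro s hs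
      exact ne_of_gt (Real.sqrt_pos.mpr (by linarith [hspec s hs]))
  have hgsq : ∀ s ∈ spectrum ℝ Q, g s * g s = (s + t)⁻¹ := by
    intro s hs
    rw [hgdef]
    simp only
    rw [← mul_inv]
    rw [Real.mul_self_sqrt (by linarith [hspec s hs])]
  set GG : Unitization ℂ B := cfc g Q with hGG
  have hGGsa : IsSelfAdjoint GG := cfc_predicate g Q
  set D : Unitization ℂ B := GG * (sp : Unitization ℂ B) with hD
  have hDstar : star D = (sp : Unitization ℂ B) * GG := by
    rw [hD, star_mul, hGGsa.star_eq, ← Unitization.inr_star, hspsa.star_eq]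
  -- middle identity
  set h : ℝ → ℝ := fun s => g s * s * g s with hh
  have hhc : ContinuousOn h (spectrum ℝ Q) :=
    ((hgc.mul continuousOn_id).mul hgc)
  have e1 : cfc (fun s => g s * s) Q = GG * Q := by
    rw [cfc_mul g (fun s => s) Q hgc continuousOn_id, cfc_id' ℝ Q hQsa]
  have e2 : cfc h Q = GG * Q * GG := by
    rw [hh]
    rw [cfc_mul (fun s => g s * s) g Q (hgc.mul continuousOn_id) hgc, e1]
  have key1 : star D * Q * D = (sp : Unitization ℂ B) * cfc h Q * (sp : Unitization ℂ B) := by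
    rw [hDstar, hD, e2]
    noncomm_ring
  have honec : ContinuousOn (fun s : ℝ => 1 - h s) (spectrum ℝ Q) :=
    (continuousOn_const.sub hhc)
  have e3 : cfc (fun s => 1 - h s) Q = 1 - cfc h Q := by
    rw [cfc_sub (fun _ => (1:ℝ)) h Q continuousOn_const hhc, cfc_const 1 Q hQsa, map_one]
  have key2 : (p : Unitization ℂ B) - star D * Q * D
      = (sp : Unitization ℂ B) * cfc (fun s => 1 - h s) Q * (sp : Unitization ℂ B) := by
    rw [key1, e3]
    have : ((p : Unitization ℂ B)) = (sp : Unitization ℂ B) * 1 * (sp : Unitization ℂ B) := by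
      rw [mul_one, ← Unitization.inr_mul, hsp]
    rw [this]
    noncomm_ring
  -- norm bound
  have hk0 : ∀ s ∈ spectrum ℝ Q, 0 ≤ 1 - h s := by
    intro s hs
    have h1 : h s = s / (s + t) := by
      rw [hh]
      simp only
      rw [mul_comm (g s) s, mul_assoc, hgsq s hs, div_eq_mul_inv]
    rw [h1]
    have hst := hspec s hs
    have hle : s / (s + t) ≤ 1 := by
      rw [div_le_one (by linarith)]; linarith
    linarith
  have hk1 : ∀ s ∈ spectrum ℝ Q, (1 - h s) * s ≤ t := by
    intro s hs
    have h1 : h s = s / (s + t) := by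
      rw [hh]
      simp only
      rw [mul_comm (g s) s, mul_assoc, hgsq s hs, div_eq_mul_inv]
    rw [h1]
    have hst := hspec s hs
    have : (1 - s / (s + t)) * s = t * s / (s + t) := by
      field_simp
      ring
    rw [this]
    rw [div_le_iff₀ (by linarith)]
    nlinarith
  set r : Unitization ℂ B := cfc (fun s => Real.sqrt (1 - h s)) Q with hr
  have hrc : ContinuousOn (fun s : ℝ => Real.sqrt (1 - h s)) (spectrum ℝ Q) :=
    (Real.continuous_sqrt.comp_continuousOn honec)
  have hrsa : IsSelfAdjoint r := cfc_predicate _ Q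
  have hrr : r * r = cfc (fun s => 1 - h s) Q := by
    rw [hr, ← cfc_mul _ _ Q hrc hrc]
    apply cfc_congr
    intro s hs
    exact Real.mul_self_sqrt (hk0 s hs)
  set z : Unitization ℂ B := r * (sp : Unitization ℂ B) with hz
  have hzstar : star z = (sp : Unitization ℂ B) * r := by
    rw [hz, star_mul, hrsa.star_eq, ← Unitization.inr_star, hspsa.star_eq]
  have hzz : star z * z = (p : Unitization ℂ B) - star D * Q * D := by
    rw [key2, hzstar, hz, ← hrr]
    noncomm_ring
  have hzz2 : z * star z = r * (p : Unitization ℂ B) * r := by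
    rw [hz, hzstar]
    have : ((p : Unitization ℂ B)) = (sp : Unitization ℂ B) * (sp : Unitization ℂ B) := by
      rw [← Unitization.inr_mul, hsp]
    rw [this]
    noncomm_ring
  have hrpr : r * (p : Unitization ℂ B) * r ≤ r * Q * r := by
    have := star_left_conjugate_le_conjugate hPQ r
    rwa [hrsa.star_eq] at this
  have hid : ContinuousOn (fun s : ℝ => s) (spectrum ℝ Q) := continuousOn_id
  have hrqr : r * Q * r = cfc (fun s => Real.sqrt (1 - h s) * s * Real.sqrt (1 - h s)) Q := by
    have f1 : cfc (fun s => Real.sqrt (1 - h s) * s) Q = r * Q := by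
      rw [cfc_mul (fun s => Real.sqrt (1 - h s)) (fun s => s) Q hrc hid, cfc_id' ℝ Q hQsa, hr]
    rw [cfc_mul (fun s => Real.sqrt (1 - h s) * s) (fun s => Real.sqrt (1 - h s)) Q
      (hrc.mul hid) hrc, f1, hr]
  have hnorm1 : ‖r * Q * r‖ ≤ t := by
    rw [hrqr]
    refine norm_cfc_le ht0.le fun s hs => ?_
    have hns : Real.sqrt (1 - h s) * s * Real.sqrt (1 - h s) = (1 - h s) * s := by
      rw [show Real.sqrt (1 - h s) * s * Real.sqrt (1 - h s)
          = Real.sqrt (1 - h s) * Real.sqrt (1 - h s) * s by ring,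
        Real.mul_self_sqrt (hk0 s hs)]
    rw [hns, Real.norm_eq_abs, abs_le]
    constructor
    · have := mul_nonneg (hk0 s hs) (hspec s hs)
      linarith
    · exact hk1 s hs
  have hnorm : ‖(p : Unitization ℂ B) - star D * Q * D‖ ≤ t := by
    rw [← hzz, CStarRing.norm_star_mul_self, ← CStarRing.norm_self_mul_star, hzz2]
    have h0 : (0:Unitization ℂ B) ≤ r * (p : Unitization ℂ B) * r := by
      have := star_left_conjugate_nonneg hP0 r
      rwa [hrsa.star_eq] at this
    exact le_trans (CStarAlgebra.norm_le_norm_of_nonneg_of_le h0 hrpr) hnorm1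
  -- D is in B
  have hfst : D.fst = 0 := by
    rw [hD, Unitization.fst_mul, Unitization.fst_inr, mul_zero]
  set d : B := D.snd with hd
  have hDd : ((d : Unitization ℂ B)) = D := by
    conv_rhs => rw [← Unitization.inl_fst_add_inr_snd_eq D]
    rw [hfst, Unitization.inl_zero, zero_add]
  refine ⟨d, ?_⟩
  have : ((p - star d * q * d : B) : Unitization ℂ B)
      = (p : Unitization ℂ B) - star D * Q * D := by
    rw [Unitization.inr_sub ℂ, Unitization.inr_mul ℂ, Unitization.inr_mul ℂ,
      Unitization.inr_star, hDd, hQdef]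
  have hfin : ‖p - star d * q * d‖ = ‖(p : Unitization ℂ B) - star D * Q * D‖ := by
    rw [← this, Unitization.norm_inr]
  rw [hfin]
  calc ‖(p : Unitization ℂ B) - star D * Q * D‖ ≤ t := hnorm
  _ < η := by rw [htdef]; linarith

end Cuntz
end ASCD

/-- Let `A ⊆ B` be an aperiodic C*-inclusion (`A` embedded via the
isometric star-homomorphism `ι`) and let `E : B → Ã ⊇ A` be a supportive generalised
expectation (with `A ⊆ Ã` realised by the isometric star-homomorphism `κ`).  Then for
every positive `b ∈ B` with `b ∉ N_E := {b : E((bc)*(bc)) = 0 for all c}` there is a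
nonzero positive `a ∈ A` with `a ≾ b` in the Cuntz preorder. -/
theorem aperiodic_supportive_Cuntz_domination
    {A B C : Type*} [NonUnitalCStarAlgebra A] [PartialOrder A] [StarOrderedRing A]
    [NonUnitalCStarAlgebra B] [PartialOrder B] [StarOrderedRing B]
    [NonUnitalCStarAlgebra C] [Nontrivial A]
    (ι : A →⋆ₙₐ[ℂ] B) (κ : A →⋆ₙₐ[ℂ] C) (hι : Isometry ι) (hκ : Isometry κ)
    (E : B →ₗ[ℂ] C)
    (hcp : CompletelyPositive E)
    (hcontr : ∀ b : B, ‖E b‖ ≤ ‖b‖)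
    (hres : ∀ a : A, E (ι a) = κ a)
    (hap : ∀ x : B, ∀ D : Set A, IsHereditarySubalgebra D → ∀ ε : ℝ, 0 < ε →
      ∃ a ∈ D, 0 ≤ a ∧ ‖a‖ = 1 ∧ ∃ y : A, ‖ι a * x * ι a - ι y‖ < ε)
    (hsupp : ∀ b : B, 0 ≤ b → E b ≠ 0 →
      ∃ δ : ℝ, 0 < δ ∧ ∃ D : Set A, IsHereditarySubalgebra D ∧
        ∀ x ∈ D, 0 ≤ x → ‖x‖ = 1 → δ ≤ ‖κ x * E b * κ x‖) :
    ∀ b : B, 0 ≤ b → ¬ (∀ c : B, E (star (b * c) * (b * c)) = 0) →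
      ∃ a : A, a ≠ 0 ∧ 0 ≤ a ∧
        ∀ ε : ℝ, 0 < ε → ∃ x : B, ‖ι a - star x * b * x‖ < ε := by
  intro b hb hNE
  push_neg at hNE
  obtain ⟨c₀, hc₀⟩ := hNE
  have hbsa : star b = b := (IsSelfAdjoint.of_nonneg hb).star_eq
  set b₀ : B := star (b * c₀) * (b * c₀) with hb₀def
  have hb₀ : 0 ≤ b₀ := star_mul_self_nonneg _
  obtain ⟨δ, hδ, D, hD, hDs⟩ := hsupp b₀ hb₀ hc₀
  obtain ⟨a', ha'D, ha'0, ha'n, y, hy⟩ := hap b₀ D hD (δ/4) (by positivity)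
  have ha'sa : star (ι a') = ι a' := by
    rw [← map_star, (IsSelfAdjoint.of_nonneg ha'0).star_eq]
  set w : B := ι a' * b₀ * ι a' with hwdef
  have hw0 : 0 ≤ w := by
    have := star_left_conjugate_nonneg hb₀ (ι a')
    rwa [ha'sa] at this
  have hwsa : IsSelfAdjoint w := IsSelfAdjoint.of_nonneg hw0
  have hEw : E w = κ a' * (E b₀ * κ a') := by
    rw [hwdef, mul_assoc, ASCD.mul_left hcp hcontr ι κ hres,
      ASCD.mul_right hcp hcontr ι κ hres]
  have hδw : δ ≤ ‖w‖ := by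
    calc δ ≤ ‖κ a' * E b₀ * κ a'‖ := hDs a' ha'D ha'0 ha'n
    _ = ‖E w‖ := by rw [hEw, mul_assoc]
    _ ≤ ‖w‖ := hcontr w
  -- symmetrised approximant
  set y' : A := (2⁻¹ : ℂ) • (y + star y) with hy'def
  have hy'sa : IsSelfAdjoint y' := by
    rw [hy'def, IsSelfAdjoint, star_smul, star_add, star_star]
    have h2 : star (2⁻¹ : ℂ) = (2⁻¹ : ℂ) := by
      simp
    rw [h2, add_comm]
  set v : B := ι y' with hvdef
  have hvsa : IsSelfAdjoint v := by
    rw [hvdef, IsSelfAdjoint, ← map_star, hy'sa.star_eq]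
  have hwv : ‖w - v‖ ≤ δ/4 := by
    have hwy : ‖w - ι y‖ < δ/4 := by rw [hwdef]; exact hy
    have hrepr : w - v = (2⁻¹ : ℂ) • ((w - ι y) + star (w - ι y)) := by
      rw [hvdef, hy'def, map_smul, map_add, map_star, star_sub, hwsa.star_eq]
      module
    rw [hrepr]
    rw [norm_smul]
    have h1 : ‖(w - ι y) + star (w - ι y)‖ ≤ ‖w - ι y‖ + ‖w - ι y‖ := by
      calc ‖(w - ι y) + star (w - ι y)‖ ≤ ‖w - ι y‖ + ‖star (w - ι y)‖ := norm_add_le _ _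
      _ = ‖w - ι y‖ + ‖w - ι y‖ := by rw [norm_star]
    have h2 : ‖(2⁻¹ : ℂ)‖ = 2⁻¹ := by norm_num
    rw [h2]
    nlinarith [norm_nonneg ((w - ι y) + star (w - ι y))]
  -- pass to the unitization
  set W : Unitization ℂ B := (w : Unitization ℂ B) with hWdef
  set V : Unitization ℂ B := (v : Unitization ℂ B) with hVdef
  have hWsa : IsSelfAdjoint W := hwsa.inr ℂ
  have hVsa : IsSelfAdjoint V := hvsa.inr ℂ
  have hW0 : 0 ≤ W := Unitization.inr_nonneg_iff.mpr hw0
  have hnormWV : ‖W - V‖ ≤ δ/4 := by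
    rw [hWdef, hVdef, ← Unitization.inr_sub ℂ, Unitization.norm_inr]
    exact hwv
  have hWV : W ≤ V + algebraMap ℝ (Unitization ℂ B) (δ/4) :=
    ASCD.le_add_of_norm_le hWsa hVsa hnormWV
  have hVW : V ≤ W + algebraMap ℝ (Unitization ℂ B) (δ/4) :=
    ASCD.le_add_of_norm_le hVsa hWsa (by rwa [norm_sub_rev] at hnormWV)
  -- the element a
  set f : ℝ → ℝ := fun s => max (s - δ/2) 0 with hfdef
  have hf0 : f 0 = 0 := max_eq_right (by linarith)
  have hfc : Continuous f := (continuous_id.sub continuous_const).max continuous_const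
  set a : A := cfcₙ f y' with hadef
  have ha0 : 0 ≤ a := cfcₙ_nonneg (fun s _ => le_max_right _ _)
  have hιa : ι a = cfcₙ f v := by
    rw [hadef, hvdef]
    exact NonUnitalStarAlgHom.map_cfcₙ ι f y' hfc.continuousOn hf0 hι.continuous hy'sa
      (by rw [IsSelfAdjoint, ← map_star, hy'sa.star_eq])
  have hιasa : IsSelfAdjoint (ι a) := by rw [hιa]; exact cfcₙ_predicate f v
  have hιa0 : 0 ≤ ι a := by
    rw [hιa]; exact cfcₙ_nonneg (fun s _ => le_max_right _ _)
  -- a is nonzero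
  have hane : a ≠ 0 := by
    intro h0
    have h1 : cfcₙ f v = 0 := by rw [← hιa, h0, map_zero]
    have h2 : cfc f V = 0 := by
      rw [hVdef, ← Unitization.real_cfcₙ_eq_cfc_inr v f hf0, h1, Unitization.inr_zero]
    set f2 : ℝ → ℝ := fun s => max (δ/2 - s) 0 with hf2def
    have hf2c : Continuous f2 := (continuous_const.sub continuous_id).max continuous_const
    have hsplit : cfc (fun s => δ/2 - s) V = cfc f2 V - cfc f V := by
      rw [← cfc_sub f2 f V hf2c.continuousOn hfc.continuousOn]
      apply cfc_congr
      intro s _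
      rcases le_total s (δ/2) with hsle | hsle
      · rw [hf2def, hfdef]
        simp only
        rw [max_eq_left (by linarith), max_eq_right (by linarith), sub_zero]
      · rw [hf2def, hfdef]
        simp only
        rw [max_eq_right (by linarith), max_eq_left (by linarith)]
        ring
    have h4 : cfc (fun s => δ/2 - s) V = algebraMap ℝ (Unitization ℂ B) (δ/2) - V := by
      rw [cfc_sub (fun _ => δ/2) (fun s => s) V continuousOn_const continuousOn_id,
        cfc_const (δ/2) V hVsa, cfc_id' ℝ V hVsa]
    have hVle : V ≤ algebraMap ℝ (Unitization ℂ B) (δ/2) := by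
      have h3 : 0 ≤ cfc f2 V := cfc_nonneg (fun s _ => le_max_right _ _)
      have h5 : algebraMap ℝ (Unitization ℂ B) (δ/2) - V = cfc f2 V := by
        rw [← h4, hsplit, h2, sub_zero]
      rw [← sub_nonneg, h5]
      exact h3
    have hWle : W ≤ algebraMap ℝ (Unitization ℂ B) (3*δ/4) := by
      calc W ≤ V + algebraMap ℝ (Unitization ℂ B) (δ/4) := hWV
      _ ≤ algebraMap ℝ (Unitization ℂ B) (δ/2) + algebraMap ℝ (Unitization ℂ B) (δ/4) :=
          add_le_add_left hVle _
      _ = algebraMap ℝ (Unitization ℂ B) (3*δ/4) := by rw [← map_add]; congr 1; ring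
    have h6 : ‖W‖ ≤ 3*δ/4 := by
      calc ‖W‖ ≤ ‖algebraMap ℝ (Unitization ℂ B) (3*δ/4)‖ :=
          CStarAlgebra.norm_le_norm_of_nonneg_of_le hW0 hWle
      _ = ‖(3*δ/4 : ℝ)‖ := norm_algebraMap' _ _
      _ = 3*δ/4 := by rw [Real.norm_eq_abs, abs_of_nonneg (by linarith)]
    rw [hWdef, Unitization.norm_inr] at h6
    linarith
  refine ⟨a, hane, ha0, ?_⟩
  intro η hη
  -- the function g and the element e
  set g : ℝ → ℝ := fun s => Real.sqrt ((max s (δ/2) - δ/2) / (max s (δ/2) - δ/4)) with hgdef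
  have hden : ∀ s : ℝ, 0 < max s (δ/2) - δ/4 := fun s => by
    have := le_max_right s (δ/2); linarith
  have hnum : ∀ s : ℝ, 0 ≤ max s (δ/2) - δ/2 := fun s => by
    have := le_max_right s (δ/2); linarith
  have hgc : Continuous g := by
    apply Real.continuous_sqrt.comp
    exact Continuous.div
      (((continuous_id.max continuous_const).sub continuous_const))
      (((continuous_id.max continuous_const).sub continuous_const))
      (fun s => ne_of_gt (hden s))
  have hg0 : g 0 = 0 := by
    rw [hgdef]
    simp only
    rw [max_eq_right (by linarith : (0:ℝ) ≤ δ/2)]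
    simp
  have hgg : ∀ s, g s * g s = (max s (δ/2) - δ/2) / (max s (δ/2) - δ/4) := fun s =>
    Real.mul_self_sqrt (div_nonneg (hnum s) (hden s).le)
  have hptw : ∀ s : ℝ, g s * s * g s - (δ/4) * (g s * g s) = f s := by
    intro s
    have hrw : g s * s * g s - δ/4 * (g s * g s) = (g s * g s) * (s - δ/4) := by ring
    rw [hrw, hgg s]
    rcases le_total s (δ/2) with hsle | hsle
    · rw [max_eq_right hsle]
      rw [show (δ/2 - δ/2 : ℝ) = 0 by ring, zero_div, zero_mul]
      rw [hfdef]
      simp only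
      rw [max_eq_right (by linarith)]
    · rw [max_eq_left hsle]
      rw [div_mul_cancel₀ _ (by intro hcon; nlinarith : (s - δ/4 : ℝ) ≠ 0)]
      rw [hfdef]
      simp only
      rw [max_eq_left (by linarith)]
  set e : B := cfcₙ g v with hedef
  have hesa : IsSelfAdjoint e := cfcₙ_predicate g v
  have he1 : cfcₙ (fun s => g s * s) v = e * v := by
    rw [cfcₙ_mul g (fun s => s) v hgc.continuousOn hg0 continuousOn_id rfl,
      cfcₙ_id' ℝ v hvsa]
  have he2 : cfcₙ (fun s => g s * s * g s) v = e * v * e := by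
    rw [cfcₙ_mul (fun s => g s * s) g v (hgc.mul continuous_id).continuousOn (by simp [hg0])
      hgc.continuousOn hg0, he1]
  have he3 : cfcₙ (fun s => g s * g s) v = e * e := by
    rw [cfcₙ_mul g g v hgc.continuousOn hg0 hgc.continuousOn hg0]
  have he4 : cfcₙ (fun s => (δ/4) * (g s * g s)) v = (δ/4 : ℝ) • (e * e) := by
    rw [← he3, ← cfcₙ_smul (δ/4 : ℝ) (fun s => g s * g s) v
      ((hgc.mul hgc).continuousOn) (by simp [hg0])]
    exact cfcₙ_congr fun s _ => by simp [smul_eq_mul]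
  have hkey : ι a = e * v * e - (δ/4 : ℝ) • (e * e) := by
    rw [hιa, ← he2, ← he4]
    rw [← cfcₙ_sub (fun s => g s * s * g s) (fun s => (δ/4) * (g s * g s)) v
      ((hgc.mul continuous_id).mul hgc).continuousOn (by simp [hg0])
      (continuous_const.mul (hgc.mul hgc)).continuousOn (by simp [hg0])]
    exact cfcₙ_congr fun s _ => (hptw s).symm
  -- ι a ≤ e * w * e
  have hestar : star ((e : Unitization ℂ B)) = (e : Unitization ℂ B) := by
    rw [← Unitization.inr_star, hesa.star_eq]
  have h5 : ((ι a : B) : Unitization ℂ B)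
      = (e : Unitization ℂ B) * V * (e : Unitization ℂ B)
        - (δ/4 : ℝ) • ((e : Unitization ℂ B) * (e : Unitization ℂ B)) := by
    rw [hkey, Unitization.inr_sub ℂ, Unitization.inr_smul, Unitization.inr_mul ℂ,
      Unitization.inr_mul ℂ, Unitization.inr_mul ℂ, hVdef]
  have h6 : (e : Unitization ℂ B) * V * (e : Unitization ℂ B)
      ≤ (e : Unitization ℂ B) * (W + algebraMap ℝ (Unitization ℂ B) (δ/4)) * (e : Unitization ℂ B) := by
    have := star_left_conjugate_le_conjugate hVW ((e : Unitization ℂ B))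
    rwa [hestar] at this
  have h7 : (e : Unitization ℂ B) * (W + algebraMap ℝ (Unitization ℂ B) (δ/4)) * (e : Unitization ℂ B)
      = (e : Unitization ℂ B) * W * (e : Unitization ℂ B)
        + (δ/4 : ℝ) • ((e : Unitization ℂ B) * (e : Unitization ℂ B)) := by
    rw [mul_add, add_mul, Algebra.algebraMap_eq_smul_one, mul_smul_comm, mul_one,
      smul_mul_assoc]
  have h8 : ((ι a : B) : Unitization ℂ B) ≤ (e : Unitization ℂ B) * W * (e : Unitization ℂ B) := by
    rw [h5, sub_le_iff_le_add]
    rw [h7] at h6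
    exact h6
  have hewe0 : 0 ≤ e * w * e := by
    have := star_left_conjugate_nonneg hw0 e
    rwa [hesa.star_eq] at this
  have hewesa : IsSelfAdjoint (e * w * e) := IsSelfAdjoint.of_nonneg hewe0
  have h9 : ι a ≤ e * w * e := by
    have h10 : ((e * w * e : B) : Unitization ℂ B)
        = (e : Unitization ℂ B) * W * (e : Unitization ℂ B) := by
      rw [Unitization.inr_mul ℂ, Unitization.inr_mul ℂ, hWdef]
    rw [← Unitization.inr_le_iff (ι a) (e * w * e) hιasa hewesa, h10]
    exact h8
  obtain ⟨d, hd⟩ := ASCD.cuntz_of_le hιa0 hewe0 h9 hη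
  -- final algebra
  set sb : B := CFC.sqrt b with hsbdef
  have hsb : sb * sb = b := CFC.sqrt_mul_sqrt_self b hb
  have hsbsa : star sb = sb := (IsSelfAdjoint.of_nonneg (CFC.sqrt_nonneg b)).star_eq
  refine ⟨sb * (c₀ * (ι a' * (e * d))), ?_⟩
  have hZ : ∀ Z : B, sb * (b * (sb * Z)) = b * (b * Z) := by
    intro Z
    have hsbb : sb * b * sb = b * b := by rw [← hsb]; noncomm_ring
    rw [← mul_assoc, ← mul_assoc, hsbb, mul_assoc]
  have hwx : e * w * e = e * (ι a' * (star c₀ * (b * (b * (c₀ * ι a'))))) * e := by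
    rw [hwdef, hb₀def]
    simp only [star_mul, hbsa, mul_assoc]
  have halg : star (sb * (c₀ * (ι a' * (e * d)))) * b * (sb * (c₀ * (ι a' * (e * d))))
      = star d * (e * w * e) * d := by
    rw [hwx]
    simp only [star_mul, hsbsa, ha'sa, hesa.star_eq, mul_assoc]
    rw [hZ]
  rw [halg]
  exact hd
end

section
/- Let A ⊆ B be a C*-inclusion and let N be a closed two-sided ideal of B with N ∩ A = {0} such that for every positive b ∈ B with b ∉ N there is a nonzero positive a ∈ A with a ≾ b. Then N is the hidden ideal of A ⊆ B: every closed two-sided ideal J of B satisfies J ∩ A = {0} if and only if J ⊆ N. In particular, if for every nonzero positive b ∈ B there is a nonzero positive a ∈ A with a ≾ b (i.e., A⁺ supports B), then A detects ideals in B. -/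
/-- Cuntz subequivalence `a ≾ b` in `B`. -/
def CuntzBelow {B : Type*} [NonUnitalCStarAlgebra B] (a b : B) : Prop :=
  ∀ ε : ℝ, 0 < ε → ∃ x : B, ‖a - star x * b * x‖ < ε


section Helpers

lemma pow_aux (n : ℕ) {s : ℝ} (h1 : s ≤ 1) :
    (1 - s) ^ n * (1 + n * s) ≤ 1 := by
  induction n with
  | zero => simp
  | succ n ih =>
    have hs : (0:ℝ) ≤ 1 - s := by linarith
    have hp : (0:ℝ) ≤ (1 - s) ^ n := pow_nonneg hs n
    have key : (1 - s) ^ (n+1) * (1 + (n+1 : ℕ) * s)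
        = (1 - s) ^ n * ((1 + n * s) - (n+1) * s^2) := by
      push_cast; ring
    rw [key]
    have h2 : (1 - s) ^ n * ((1 + n * s) - (n+1) * s^2) ≤ (1 - s) ^ n * (1 + n * s) := by
      apply mul_le_mul_of_nonneg_left _ hp
      nlinarith
    exact h2.trans ih

lemma pow_aux2 (n : ℕ) (hn : 1 ≤ n) {s : ℝ} (h0 : 0 ≤ s) (h1 : s ≤ 1) :
    s * (1 - s) ^ (2*n) ≤ 1 / n := by
  have hs : (0:ℝ) ≤ 1 - s := by linarith
  have hle : (1 - s) ^ (2*n) ≤ (1 - s) ^ n :=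
    pow_le_pow_of_le_one hs (by linarith) (by omega)
  have h3 : s * (1 - s) ^ n ≤ 1 / n := by
    have key := pow_aux n h1
    have hp : (0:ℝ) ≤ (1 - s) ^ n := pow_nonneg hs n
    have hn' : (0:ℝ) < n := by exact_mod_cast hn
    rw [le_div_iff₀ hn']
    nlinarith
  calc s * (1 - s) ^ (2*n) ≤ s * (1 - s) ^ n := mul_le_mul_of_nonneg_left hle h0
    _ ≤ 1 / n := h3

variable {B : Type*} [NonUnitalCStarAlgebra B] [PartialOrder B] [StarOrderedRing B]

omit [PartialOrder B] [StarOrderedRing B] in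
lemma sub_mem_ideal {N : Set B} (hN : IsClosedTwoSidedIdeal N) {x y : B}
    (hx : x ∈ N) (hy : y ∈ N) : x - y ∈ N := by
  rw [sub_eq_add_neg]
  exact hN.2.2.1 x hx _ (hN.2.2.2.1 y hy)

set_option maxHeartbeats 2000000 in
lemma mem_of_star_mul_self_mem {N : Set B} (hN : IsClosedTwoSidedIdeal N) {b : B}
    (hb : star b * b ∈ N) : b ∈ N := by
  set c : B := star b * b with hc_def
  clear_value c
  have hc : (0 : B) ≤ c := hc_def ▸ star_mul_self_nonneg b
  have hcsa : IsSelfAdjoint c := hc_def ▸ .star_mul_self b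
  by_cases hM : ‖c‖ = 0
  · have hb0 : b = 0 := by
      have h1 : ‖b‖ * ‖b‖ = 0 := by rw [← CStarRing.norm_star_mul_self, ← hc_def, hM]
      simpa using norm_eq_zero.mp (mul_self_eq_zero.mp h1)
    rw [hb0]; exact hN.2.1
  set M : ℝ := ‖c‖ with hM_def
  have hMpos : 0 < M := lt_of_le_of_ne (norm_nonneg c) (Ne.symm hM)
  set p : ℕ → ℝ → ℝ := fun n t => 1 - (1 - M⁻¹ * t) ^ n with hp_def
  have hpcont : ∀ n, ContinuousOn (p n) (quasispectrum ℝ c) := fun n => by fun_prop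
  have hp0 : ∀ n, p n 0 = 0 := fun n => by simp [hp_def]
  set u : ℕ → B := fun n => cfcₙ (p n) c with hu_def
  have e_cu : ∀ n, cfcₙ (fun t : ℝ => t * p n t) c = c * u n := by
    intro n
    conv_rhs => rw [← cfcₙ_id ℝ c]
    exact cfcₙ_mul _ _ c
  have e_uc : ∀ n, cfcₙ (fun t : ℝ => p n t * t) c = u n * c := by
    intro n
    conv_rhs => rw [← cfcₙ_id ℝ c]
    exact cfcₙ_mul _ _ c
  -- recursion
  have hrec : ∀ n, u (n+1) = u n + M⁻¹ • (c - c * u n) := by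
    intro n
    have h2 : cfcₙ (fun t : ℝ => M⁻¹ * (t - t * p n t)) c = M⁻¹ • (c - c * u n) := by
      rw [cfcₙ_const_mul _ _ c (by fun_prop) (by simp [hp0])]
      congr 1
      rw [cfcₙ_sub _ _ c (by fun_prop) (by simp) (by fun_prop) (by simp [hp0]),
        cfcₙ_id' ℝ c, e_cu]
    have h3 : cfcₙ (fun t : ℝ => p n t + M⁻¹ * (t - t * p n t)) c
        = u n + M⁻¹ • (c - c * u n) := by
      rw [cfcₙ_add _ _ c (hpcont n) (by simp [hp0]) (by fun_prop) (by simp [hp0]), h2]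
    rw [← h3]
    apply cfcₙ_congr
    intro t _
    simp only [hp_def, pow_succ]
    field_simp
    ring
  -- membership
  have hmem : ∀ n, b * u n ∈ N := by
    intro n
    induction n with
    | zero =>
      have h0 : u 0 = 0 := by
        rw [hu_def]
        simp only [hp_def, pow_zero, sub_self]
        exact cfcₙ_const_zero ℝ c
      rw [h0, mul_zero]; exact hN.2.1
    | succ n ih =>
      rw [hrec n, mul_add]
      refine hN.2.2.1 _ ih _ ?_
      have key : b * (M⁻¹ • (c - c * u n)) = (M⁻¹ • b) * c - (M⁻¹ • b) * (c * u n) := by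
        rw [mul_smul_comm, mul_sub, smul_sub, ← smul_mul_assoc, ← smul_mul_assoc]
      rw [key]
      exact sub_mem_ideal hN (hN.2.2.2.2.1 _ _ hb)
        (hN.2.2.2.2.1 _ _ (hN.2.2.2.2.2 _ _ hb))
  -- self-adjointness
  have husa : ∀ n, IsSelfAdjoint (u n) := fun n => cfcₙ_predicate (p n) c
  -- the norm identity
  have hfact : ∀ n, star (b - b * u n) * (b - b * u n)
      = cfcₙ (fun t : ℝ => t * (1 - M⁻¹ * t) ^ (2*n)) c := by
    intro n
    have expand : star (b - b * u n) * (b - b * u n)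
        = c - c * u n - u n * c + u n * (c * u n) := by
      rw [star_sub, star_mul, (husa n).star_eq, hc_def]
      noncomm_ring
    have e_ucu : cfcₙ (fun t : ℝ => p n t * (t * p n t)) c = u n * (c * u n) := by
      rw [cfcₙ_mul _ _ c (hpcont n) (by simp [hp0]) (by fun_prop) (by simp [hp0]), e_cu]
    have comb : cfcₙ (fun t : ℝ => t - t * p n t - p n t * t + p n t * (t * p n t)) c
        = c - c * u n - u n * c + u n * (c * u n) := by
      rw [cfcₙ_add _ _ c (by fun_prop) (by simp [hp0]) (by fun_prop) (by simp [hp0]),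
        cfcₙ_sub _ _ c (by fun_prop) (by simp [hp0]) (by fun_prop) (by simp [hp0]),
        cfcₙ_sub _ _ c (by fun_prop) (by simp) (by fun_prop) (by simp [hp0]),
        cfcₙ_id' ℝ c, e_cu, e_uc, e_ucu]
    rw [expand, ← comb]
    apply cfcₙ_congr
    intro t _
    simp only [hp_def, two_mul, pow_add]
    ring
  -- norm bound
  have hbound : ∀ n : ℕ, 1 ≤ n → ‖b - b * u n‖ ^ 2 ≤ M / n := by
    intro n hn
    have hsq : ‖b - b * u n‖ ^ 2 = ‖star (b - b * u n) * (b - b * u n)‖ := by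
      rw [CStarRing.norm_star_mul_self]; ring
    rw [hsq, hfact n]
    apply norm_cfcₙ_le
    intro x hx
    have hx0 : 0 ≤ x := quasispectrum_nonneg_of_nonneg c hc x hx
    have hxM : x ≤ M := by
      have h1 := norm_apply_le_norm_cfcₙ (id : ℝ → ℝ) c hx
      rwa [cfcₙ_id ℝ c, id_eq, Real.norm_eq_abs, abs_of_nonneg hx0, ← hM_def] at h1
    have hs0 : 0 ≤ M⁻¹ * x := by positivity
    have hs1 : M⁻¹ * x ≤ 1 := by
      rw [inv_mul_le_iff₀ hMpos, mul_one]; exact hxM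
    have h1s : (0:ℝ) ≤ 1 - M⁻¹ * x := by linarith
    have hval : ‖x * (1 - M⁻¹ * x) ^ (2*n)‖ = x * (1 - M⁻¹ * x) ^ (2*n) := by
      rw [Real.norm_eq_abs, abs_of_nonneg (by positivity)]
    rw [hval]
    calc x * (1 - M⁻¹ * x) ^ (2*n) = M * ((M⁻¹ * x) * (1 - M⁻¹ * x) ^ (2*n)) := by
          nth_rewrite 1 [show x = M * (M⁻¹ * x) from (mul_inv_cancel_left₀ hM x).symm]
          rw [mul_assoc]
      _ ≤ M * (1 / n) := by
          apply mul_le_mul_of_nonneg_left (pow_aux2 n hn hs0 hs1) hMpos.le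
      _ = M / n := by ring
  -- conclude
  rw [← hN.1.closure_eq]
  apply Metric.mem_closure_iff.mpr
  intro ε hε
  obtain ⟨n, hn⟩ := exists_nat_gt (max 1 (M / ε ^ 2))
  have hn1 : 1 ≤ n := by
    have := (le_max_left 1 (M / ε ^ 2)).trans hn.le
    exact_mod_cast this
  have hnpos : (0:ℝ) < n := by exact_mod_cast hn1
  have h2 : M / n < ε ^ 2 := by
    have h3 : M / ε ^ 2 < n := (le_max_right _ _).trans_lt hn
    rw [div_lt_iff₀ hnpos]
    rw [div_lt_iff₀ (by positivity)] at h3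
    nlinarith
  refine ⟨b * u n, hmem n, ?_⟩
  rw [dist_eq_norm]
  nlinarith [hbound n hn1, norm_nonneg (b - b * u n)]

omit [PartialOrder B] [StarOrderedRing B] in
lemma cuntz_mem {J : Set B} (hJ : IsClosedTwoSidedIdeal J) {a d : B}
    (hd : d ∈ J) (h : CuntzBelow a d) : a ∈ J := by
  rw [← hJ.1.closure_eq]
  apply Metric.mem_closure_iff.mpr
  intro ε hε
  obtain ⟨x, hx⟩ := h ε hε
  exact ⟨star x * d * x, hJ.2.2.2.2.2 x _ (hJ.2.2.2.2.1 (star x) d hd),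
    by rwa [dist_eq_norm]⟩

omit [PartialOrder B] [StarOrderedRing B] in
lemma singleton_zero_ideal : IsClosedTwoSidedIdeal ({0} : Set B) := by
  refine ⟨isClosed_singleton, rfl, ?_, ?_, ?_, ?_⟩ <;>
    simp +contextual [Set.mem_singleton_iff]

end Helpers

/-- Let `A ⊆ B` be a C*-inclusion.  (1) If `N` is a closed two-sided
ideal with `N ∩ A = {0}` such that every positive `b ∉ N` Cuntz-dominates some nonzero
positive element of `A`, then `N` is the hidden ideal: a closed two-sided ideal `J`
satisfies `J ∩ A = {0}` iff `J ⊆ N`.  (2) In particular, if every nonzero positive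
`b ∈ B` Cuntz-dominates some nonzero positive element of `A` (`A⁺` supports `B`), then
`A` detects ideals in `B`. -/
theorem support_implies_hidden_ideal_and_detection
    {B : Type*} [NonUnitalCStarAlgebra B] [PartialOrder B] [StarOrderedRing B]
    (A : Set B) (hA : IsCStarSubalgebra A) (hA0 : ∃ x ∈ A, x ≠ 0) :
    (∀ N : Set B, IsClosedTwoSidedIdeal N → N ∩ A = {0} →
      (∀ b : B, 0 ≤ b → b ∉ N → ∃ a ∈ A, a ≠ 0 ∧ 0 ≤ a ∧ CuntzBelow a b) →
      ∀ J : Set B, IsClosedTwoSidedIdeal J → (J ∩ A = {0} ↔ J ⊆ N)) ∧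
    ((∀ b : B, 0 ≤ b → b ≠ 0 → ∃ a ∈ A, a ≠ 0 ∧ 0 ≤ a ∧ CuntzBelow a b) →
      ∀ J : Set B, IsClosedTwoSidedIdeal J → J ≠ {0} → J ∩ A ≠ {0}) := by
  have part1 : ∀ N : Set B, IsClosedTwoSidedIdeal N → N ∩ A = {0} →
      (∀ b : B, 0 ≤ b → b ∉ N → ∃ a ∈ A, a ≠ 0 ∧ 0 ≤ a ∧ CuntzBelow a b) →
      ∀ J : Set B, IsClosedTwoSidedIdeal J → (J ∩ A = {0} ↔ J ⊆ N) := by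
    intro N hN hNA hsupp J hJ
    constructor
    · intro hJA b hbJ
      by_contra hbN
      have hcJ : star b * b ∈ J := hJ.2.2.2.2.1 (star b) b hbJ
      have hcN : star b * b ∉ N := fun h => hbN (mem_of_star_mul_self_mem hN h)
      obtain ⟨a, haA, ha0, -, hcuntz⟩ := hsupp _ (star_mul_self_nonneg b) hcN
      have haJ : a ∈ J := cuntz_mem hJ hcJ hcuntz
      have hmem : a ∈ J ∩ A := ⟨haJ, haA⟩
      rw [hJA, Set.mem_singleton_iff] at hmem
      exact ha0 hmem
    · intro hJN
      apply Set.eq_singleton_iff_unique_mem.mpr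
      refine ⟨⟨hJ.2.1, hA.2.1⟩, ?_⟩
      rintro x ⟨hxJ, hxA⟩
      have hmem : x ∈ N ∩ A := ⟨hJN hxJ, hxA⟩
      rwa [hNA, Set.mem_singleton_iff] at hmem
  refine ⟨part1, ?_⟩
  intro hsupp J hJ hJne hJA
  have h0 : ({0} : Set B) ∩ A = {0} := by
    apply Set.eq_singleton_iff_unique_mem.mpr
    exact ⟨⟨rfl, hA.2.1⟩, fun x hx => hx.1⟩
  have hiff := part1 {0} singleton_zero_ideal h0
    (fun b hb hb0 => hsupp b hb (by simpa using hb0)) J hJ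
  exact hJne <| Set.eq_singleton_iff_unique_mem.mpr
    ⟨hJ.2.1, fun x hx => hiff.mp hJA hx⟩
end
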